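/- arXiv:1606.07690 — 10 statements merged into one kernel-verified Lean document; each statement's English description precedes it below -/
import Mathlib

section
/- Let K be a convex body in ℝ^n with non-empty interior, let μ be a finite non-negative Borel measure on int K that is equivalent to Lebesgue measure on int K, and let δ ∈ (0, μ(K)^{2/(n+1)}). Let s_δ : S^{n-1} → ℝ be the function uniquely determined by μ(K ∩ {y : y·v ≥ h_K(v) − s_δ(v)}) = δ^{(n+1)/2} for each v ∈ S^{n-1}. Then the weighted floating body equals the Wulff shape of h_K − s_δ, i.e. F^μ_δ K = ⋂_{v ∈ S^{n-1}} {y ∈ ℝ^n : y·v ≤ h_K(v) − s_δ(v)}; in particular F^μ_δ K is non-empty if and only if this Wulff shape is non-empty. -/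
open MeasureTheory Filter
open scoped InnerProductSpace ENNReal Topology

noncomputable section

/-- The closed half-space `{y : ⟪y, v⟫ ≤ c}`. -/
def halfLe {n : ℕ} (v : EuclideanSpace ℝ (Fin n)) (c : ℝ) : Set (EuclideanSpace ℝ (Fin n)) :=
  {y | ⟪y, v⟫_ℝ ≤ c}

/-- The closed half-space `{y : ⟪y, v⟫ ≥ c}`. -/
def halfGe {n : ℕ} (v : EuclideanSpace ℝ (Fin n)) (c : ℝ) : Set (EuclideanSpace ℝ (Fin n)) :=
  {y | c ≤ ⟪y, v⟫_ℝ}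

/-- The support function `h_K(v) = sup {⟪x, v⟫ : x ∈ K}`. -/
def suppFn {n : ℕ} (K : Set (EuclideanSpace ℝ (Fin n))) (v : EuclideanSpace ℝ (Fin n)) : ℝ :=
  sSup ((fun x => ⟪x, v⟫_ℝ) '' K)

/-- The weighted floating body `F^μ_δ K`: the intersection of all half-spaces `H⁻` whose
complementary half-space `H⁺` cuts off a set of `μ`-measure at most `δ^((n+1)/2)` from `K`. -/
def floatBody {n : ℕ} (μ : Measure (EuclideanSpace ℝ (Fin n)))
    (K : Set (EuclideanSpace ℝ (Fin n))) (δ : ℝ) : Set (EuclideanSpace ℝ (Fin n)) :=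
  ⋂₀ {H | ∃ v c, ‖v‖ = 1 ∧
      μ (K ∩ halfGe v c) ≤ ENNReal.ofReal (δ ^ (((n : ℝ) + 1) / 2)) ∧ H = halfLe v c}

/-- The weighted floating body is the Wulff shape of `h_K - s_δ`. -/
theorem stmt1 {n : ℕ} (K : Set (EuclideanSpace ℝ (Fin n)))
    (hKcomp : IsCompact K) (hKconv : Convex ℝ K) (hKint : (interior K).Nonempty)
    (μ : Measure (EuclideanSpace ℝ (Fin n))) [IsFiniteMeasure μ]
    (hμsupp : μ (interior K)ᶜ = 0)
    (hac₁ : μ.restrict (interior K) ≪ volume.restrict (interior K))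
    (hac₂ : volume.restrict (interior K) ≪ μ.restrict (interior K))
    (δ : ℝ) (hδ : δ ∈ Set.Ioo (0 : ℝ) ((μ K).toReal ^ ((2 : ℝ) / (n + 1))))
    (s : EuclideanSpace ℝ (Fin n) → ℝ)
    (hs : ∀ v : EuclideanSpace ℝ (Fin n), ‖v‖ = 1 →
      μ (K ∩ halfGe v (suppFn K v - s v)) = ENNReal.ofReal (δ ^ (((n : ℝ) + 1) / 2))) :
    floatBody μ K δ =
      ⋂ v ∈ {v : EuclideanSpace ℝ (Fin n) | ‖v‖ = 1}, halfLe v (suppFn K v - s v) ∧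
    ((floatBody μ K δ).Nonempty ↔
      (⋂ v ∈ {v : EuclideanSpace ℝ (Fin n) | ‖v‖ = 1},
        halfLe v (suppFn K v - s v)).Nonempty) := by
  set δ' : ℝ≥0∞ := ENNReal.ofReal (δ ^ (((n : ℝ) + 1) / 2)) with hδ'def
  have hδ'top : δ' ≠ ⊤ := ENNReal.ofReal_ne_top
  have hexpos : (0 : ℝ) < ((n : ℝ) + 1) / 2 := by positivity
  have hδ'pos : 0 < δ' := by
    rw [hδ'def, ENNReal.ofReal_pos]
    exact Real.rpow_pos_of_pos hδ.1 _
  have hμKtop : μ K ≠ ⊤ := measure_ne_top μ K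
  have hδ'lt : δ' < μ K := by
    have h1 : δ ^ (((n : ℝ) + 1) / 2) < ((μ K).toReal ^ ((2 : ℝ) / (n + 1))) ^ (((n : ℝ) + 1) / 2) :=
      Real.rpow_lt_rpow hδ.1.le hδ.2 hexpos
    have h2 : ((μ K).toReal ^ ((2 : ℝ) / (n + 1))) ^ (((n : ℝ) + 1) / 2) = (μ K).toReal := by
      rw [← Real.rpow_mul ENNReal.toReal_nonneg]
      have hn : ((n : ℝ) + 1) ≠ 0 := by positivity
      have : (2 : ℝ) / (n + 1) * (((n : ℝ) + 1) / 2) = 1 := by field_simp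
      rw [this, Real.rpow_one]
    rw [h2] at h1
    have hpos : 0 < (μ K).toReal := (Real.rpow_pos_of_pos hδ.1 _).trans h1
    calc δ' < ENNReal.ofReal (μ K).toReal := (ENNReal.ofReal_lt_ofReal_iff hpos).mpr h1
      _ = μ K := ENNReal.ofReal_toReal hμKtop
  have key : ∀ (v : EuclideanSpace ℝ (Fin n)) (c : ℝ), ‖v‖ = 1 →
      μ (K ∩ halfGe v c) ≤ δ' → suppFn K v - s v ≤ c := by
    intro v c hv hμc
    by_contra hcb
    push_neg at hcb
    set b : ℝ := suppFn K v - s v with hbdef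
    have hmeasb : μ (K ∩ halfGe v b) = δ' := hs v hv
    have hinner : Continuous fun y : EuclideanSpace ℝ (Fin n) => ⟪y, v⟫_ℝ :=
      continuous_id.inner continuous_const
    have hGeClosed : ∀ t : ℝ, IsClosed (halfGe v t) := fun t =>
      isClosed_le continuous_const hinner
    have hGemeas : ∀ t : ℝ, MeasurableSet (halfGe v t) := fun t => (hGeClosed t).measurableSet
    have hKmeas : MeasurableSet K := hKcomp.isClosed.measurableSet
    -- a point y₀ of the interior with b ≤ ⟪y₀, v⟫
    have hA : 0 < μ (interior K ∩ halfGe v b) := by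
      have hsub : K ∩ halfGe v b ⊆ (interior K ∩ halfGe v b) ∪ (interior K)ᶜ := by
        intro y hy
        by_cases h : y ∈ interior K
        · exact Or.inl ⟨h, hy.2⟩
        · exact Or.inr h
      have := (measure_mono hsub).trans (measure_union_le (μ := μ) _ _)
      rw [hμsupp, add_zero, hmeasb] at this
      exact lt_of_lt_of_le hδ'pos this
    have hAne : μ (interior K ∩ halfGe v b) ≠ 0 := hA.ne'
    have hAnon : (interior K ∩ halfGe v b).Nonempty :=
      Set.nonempty_iff_ne_empty.2 fun h' => hAne (by rw [h']; exact measure_empty)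
    obtain ⟨y₀, hy₀K, hy₀b⟩ := hAnon
    -- a point y₁ of the interior with ⟪y₁, v⟫ < b
    have hB : 0 < μ (interior K ∩ {y | ⟪y, v⟫_ℝ < b}) := by
      have hsplit : μ (K ∩ halfGe v b) + μ (K \ halfGe v b) = μ K :=
        measure_inter_add_diff K (hGemeas b)
      have hdiff : 0 < μ (K \ halfGe v b) := by
        by_contra h
        push_neg at h
        have : μ (K \ halfGe v b) = 0 := le_antisymm h zero_le
        rw [this, add_zero, hmeasb] at hsplit
        exact absurd hsplit hδ'lt.ne
      have hsub : K \ halfGe v b ⊆ (interior K ∩ {y | ⟪y, v⟫_ℝ < b}) ∪ (interior K)ᶜ := by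
        intro y hy
        by_cases h : y ∈ interior K
        · have hyn : ¬ b ≤ ⟪y, v⟫_ℝ := hy.2
          exact Or.inl ⟨h, not_le.mp hyn⟩
        · exact Or.inr h
      have := (measure_mono hsub).trans (measure_union_le (μ := μ) _ _)
      rw [hμsupp, add_zero] at this
      exact lt_of_lt_of_le hdiff this
    have hBne : μ (interior K ∩ {y | ⟪y, v⟫_ℝ < b}) ≠ 0 := hB.ne'
    have hBnon : (interior K ∩ {y | ⟪y, v⟫_ℝ < b}).Nonempty :=
      Set.nonempty_iff_ne_empty.2 fun h' => hBne (by rw [h']; exact measure_empty)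
    obtain ⟨y₁, hy₁K, hy₁b⟩ := hBnon
    set t₀ : ℝ := ⟪y₀, v⟫_ℝ
    set t₁ : ℝ := ⟪y₁, v⟫_ℝ
    have ht₁b : t₁ < b := hy₁b
    have ht₀b : b ≤ t₀ := hy₀b
    set a : ℝ := max c t₁ with hadef
    have hab : a < b := max_lt hcb ht₁b
    set w : ℝ := (a + b) / 2 with hwdef
    have haw : a < w := by simp only [hwdef]; linarith
    have hwb : w < b := by simp only [hwdef]; linarith
    -- the midpoint point y₂ on the segment with inner product w
    have ht01 : t₁ < t₀ := lt_of_lt_of_le ht₁b ht₀b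
    set l : ℝ := (w - t₁) / (t₀ - t₁) with hldef
    have hl0 : 0 ≤ l := by
      apply div_nonneg <;> nlinarith [le_max_right c t₁]
    have hl1 : l ≤ 1 := by
      rw [hldef, div_le_one (by linarith)]
      linarith
    set y₂ : EuclideanSpace ℝ (Fin n) := (1 - l) • y₁ + l • y₀ with hy₂def
    have hy₂K : y₂ ∈ interior K :=
      hKconv.interior hy₁K hy₀K (by linarith) hl0 (by ring)
    have hy₂w : ⟪y₂, v⟫_ℝ = w := by
      rw [hy₂def, inner_add_left, real_inner_smul_left, real_inner_smul_left]
      have : (1 - l) * t₁ + l * t₀ = t₁ + l * (t₀ - t₁) := by ring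
      rw [this, hldef, div_mul_eq_mul_div, mul_div_assoc,
        div_self (sub_ne_zero.mpr ht01.ne'), mul_one]
      ring
    -- the open slab U has positive μ-measure
    set U : Set (EuclideanSpace ℝ (Fin n)) :=
      interior K ∩ ({y | a < ⟪y, v⟫_ℝ} ∩ {y | ⟪y, v⟫_ℝ < b}) with hUdef
    have hUopen : IsOpen U :=
      isOpen_interior.inter ((isOpen_lt continuous_const hinner).inter
        (isOpen_lt hinner continuous_const))
    have hy₂U : y₂ ∈ U := ⟨hy₂K, by rw [Set.mem_setOf_eq, hy₂w]; exact haw,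
      by rw [Set.mem_setOf_eq, hy₂w]; exact hwb⟩
    have hUvol : 0 < volume U := hUopen.measure_pos volume ⟨y₂, hy₂U⟩
    have hUsubint : U ⊆ interior K := Set.inter_subset_left
    have hUmeas : MeasurableSet U := hUopen.measurableSet
    have hUμ : 0 < μ U := by
      by_contra h
      push_neg at h
      have hμU0 : μ U = 0 := le_antisymm h zero_le
      have : μ.restrict (interior K) U = 0 := by
        rw [Measure.restrict_apply hUmeas]
        exact measure_mono_null Set.inter_subset_left hμU0
      have hvr := hac₂ this
      rw [Measure.restrict_apply hUmeas, Set.inter_eq_self_of_subset_left hUsubint] at hvr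
      exact absurd hvr hUvol.ne'
    -- conclude: the half-space at level c cuts off strictly more than δ'
    have hsub2 : (K ∩ halfGe v b) ∪ U ⊆ K ∩ halfGe v c := by
      rintro y (hy | hy)
      · exact ⟨hy.1, le_trans (le_of_lt (lt_of_le_of_lt (le_max_left c t₁) hab)) hy.2⟩
      · exact ⟨interior_subset (hUsubint hy), le_of_lt (lt_of_le_of_lt (le_max_left c t₁) hy.2.1)⟩
    have hdisj : Disjoint (K ∩ halfGe v b) U := by
      rw [Set.disjoint_left]
      rintro y ⟨_, hyb⟩ ⟨_, _, hyb'⟩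
      have h1 : b ≤ ⟪y, v⟫_ℝ := hyb
      have h2 : ⟪y, v⟫_ℝ < b := hyb'
      linarith
    have hunion : μ ((K ∩ halfGe v b) ∪ U) = δ' + μ U := by
      rw [measure_union hdisj hUmeas, hmeasb]
    have : δ' < μ (K ∩ halfGe v c) := by
      calc δ' < δ' + μ U := ENNReal.lt_add_right hδ'top hUμ.ne'
        _ = μ ((K ∩ halfGe v b) ∪ U) := hunion.symm
        _ ≤ μ (K ∩ halfGe v c) := measure_mono hsub2
    exact absurd hμc (not_le.mpr this)
  have heq : floatBody μ K δ =
      ⋂ v ∈ {v : EuclideanSpace ℝ (Fin n) | ‖v‖ = 1}, halfLe v (suppFn K v - s v) := by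
    apply Set.Subset.antisymm
    · intro x hx
      rw [Set.mem_iInter₂]
      intro v hv
      exact hx _ ⟨v, suppFn K v - s v, hv, (hs v hv).le, rfl⟩
    · intro x hx
      rintro H ⟨v, c, hv, hμc, rfl⟩
      have hxv : ⟪x, v⟫_ℝ ≤ suppFn K v - s v := by
        rw [Set.mem_iInter₂] at hx
        exact hx v hv
      exact le_trans hxv (key v c hv hμc)
  exact ⟨heq, by rw [heq]⟩
end
end

section
/- Let K be a convex body in ℝ^n with non-empty interior and let μ be a finite non-negative Borel measure on int K that is equivalent to Lebesgue measure on int K. Then the weighted floating bodies F^μ_δ K converge to K in the Hausdorff distance as δ → 0⁺; in particular, for all sufficiently small δ > 0 the floating body F^μ_δ K is a non-empty convex body contained in K. -/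
open MeasureTheory Filter
open scoped InnerProductSpace ENNReal Topology

noncomputable section

variable {n : ℕ} {K : Set (EuclideanSpace ℝ (Fin n))}

lemma inner_le_suppFn (hK : IsCompact K) {x v : EuclideanSpace ℝ (Fin n)} (hx : x ∈ K) :
    ⟪x, v⟫_ℝ ≤ suppFn K v :=
  le_csSup ((hK.image (continuous_id.inner continuous_const)).bddAbove) ⟨x, hx, rfl⟩

lemma suppFn_le (hK : K.Nonempty) {v : EuclideanSpace ℝ (Fin n)} {b : ℝ}
    (h : ∀ x ∈ K, ⟪x, v⟫_ℝ ≤ b) : suppFn K v ≤ b :=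
  csSup_le (hK.image _) (by rintro _ ⟨x, hx, rfl⟩; exact h x hx)

lemma core (hKcomp : IsCompact K) (hKconv : Convex ℝ K)
    {z : EuclideanSpace ℝ (Fin n)} {r : ℝ} (hr : 0 < r) (hball : Metric.closedBall z r ⊆ K)
    {t : ℝ} (ht0 : 0 < t) (ht1 : t < 1)
    (μ : Measure (EuclideanSpace ℝ (Fin n)))
    (hac₂ : volume.restrict (interior K) ≪ μ.restrict (interior K)) :
    ∃ m : ℝ≥0∞, 0 < m ∧ ∀ v c, ‖v‖ = 1 →
      c < ⟪z, v⟫_ℝ + (1 - t) * (suppFn K v - ⟪z, v⟫_ℝ) → m ≤ μ (K ∩ halfGe v c) := by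
  have hne : K.Nonempty := ⟨z, hball (Metric.mem_closedBall_self hr.le)⟩
  obtain ⟨M₀, hM₀⟩ := hKcomp.isBounded.exists_norm_le
  set M : ℝ := max M₀ 0 with hMdef
  have hM : ∀ x ∈ K, ‖x‖ ≤ M := fun x hx => le_trans (hM₀ x hx) (le_max_left _ _)
  have hM0 : 0 ≤ M := le_max_right _ _
  set ρ : ℝ := t * r / 4 with hρdef
  have hρ : 0 < ρ := by positivity
  set η : ℝ := t * r / (16 * (M + 1)) with hηdef
  have hη : 0 < η := by positivity
  have hη2 : 2 * (M * η) ≤ t * r / 8 := by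
    have e1 : t * r = 16 * (M * η) + 16 * η := by
      rw [hηdef]; field_simp
    linarith [hη.le]
  have hzM : ‖z‖ ≤ M := hM z (hball (Metric.mem_closedBall_self hr.le))
  -- per-direction construction
  have key : ∀ v : EuclideanSpace ℝ (Fin n), ‖v‖ = 1 → ∃ y : EuclideanSpace ℝ (Fin n),
      Metric.ball y ρ ⊆ K ∧ ∀ v', ‖v'‖ = 1 → ‖v' - v‖ < η → ∀ x ∈ Metric.ball y ρ,
        ⟪z, v'⟫_ℝ + (1 - t) * (suppFn K v' - ⟪z, v'⟫_ℝ) ≤ ⟪x, v'⟫_ℝ := by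
    intro v hv
    have hcont : ContinuousOn (fun x : EuclideanSpace ℝ (Fin n) => ⟪x, v⟫_ℝ) K :=
      (continuous_id.inner continuous_const).continuousOn
    obtain ⟨xv, hxvK, hmax'⟩ := hKcomp.exists_isMaxOn hne hcont
    have hmax : ∀ x ∈ K, ⟪x, v⟫_ℝ ≤ ⟪xv, v⟫_ℝ := fun x hx => hmax' hx
    set y : EuclideanSpace ℝ (Fin n) := z + (1 - t/2) • (xv - z) with hydef
    have hballK : Metric.ball y ρ ⊆ K := by
      intro w hw
      have hu : ‖w - y‖ < ρ := by rwa [Metric.mem_ball, dist_eq_norm] at hw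
      have hpK : z + (2/t) • (w - y) ∈ K := by
        apply hball
        rw [Metric.mem_closedBall, dist_eq_norm, add_sub_cancel_left, norm_smul]
        have : ‖(2:ℝ)/t‖ = 2/t := by
          rw [Real.norm_eq_abs, abs_of_pos (by positivity)]
        rw [this]
        have h2t : 0 < 2/t := by positivity
        calc 2/t * ‖w - y‖ ≤ 2/t * ρ := mul_le_mul_of_nonneg_left hu.le h2t.le
          _ = r / 2 := by rw [hρdef]; field_simp; ring
          _ ≤ r := by linarith
      have hcomb := hKconv hpK hxvK (by positivity : (0:ℝ) ≤ t/2)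
        (by linarith : (0:ℝ) ≤ 1 - t/2) (by ring)
      have heq : (t/2) • (z + (2/t) • (w - y)) + (1 - t/2) • xv = w := by
        have ht' : t ≠ 0 := ht0.ne'
        rw [hydef]
        match_scalars <;> field_simp <;> ring
      rwa [heq] at hcomb
    refine ⟨y, hballK, ?_⟩
    intro v' hv' hvv' x hx
    have hxK : x ∈ K := hballK hx
    have hxM : ‖x‖ ≤ M := hM x hxK
    -- basic support function facts at v
    have hsa : suppFn K v ≤ ⟪xv, v⟫_ℝ := suppFn_le hne hmax
    have hzr : ⟪z, v⟫_ℝ + r ≤ suppFn K v := by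
      have hzv : z + r • v ∈ K := by
        apply hball
        rw [Metric.mem_closedBall, dist_eq_norm, add_sub_cancel_left, norm_smul,
          Real.norm_eq_abs, abs_of_pos hr, hv, mul_one]
      have := inner_le_suppFn hKcomp (v := v) hzv
      rwa [inner_add_left, real_inner_smul_left, real_inner_self_eq_norm_sq, hv,
        one_pow, mul_one] at this
    have hyv : ⟪y, v⟫_ℝ = ⟪z, v⟫_ℝ + (1 - t/2) * (⟪xv, v⟫_ℝ - ⟪z, v⟫_ℝ) := by
      rw [hydef, inner_add_left, real_inner_smul_left, inner_sub_left]
    -- perturbation bounds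
    have hxy : ‖x - y‖ ≤ ρ := by
      rw [Metric.mem_ball, dist_eq_norm] at hx; exact hx.le
    have b1 : |⟪x - y, v⟫_ℝ| ≤ ρ := by
      calc |⟪x - y, v⟫_ℝ| ≤ ‖x - y‖ * ‖v‖ := abs_real_inner_le_norm _ _
        _ ≤ ρ := by rw [hv, mul_one]; exact hxy
    have b2 : |⟪x, v' - v⟫_ℝ| ≤ M * η := by
      calc |⟪x, v' - v⟫_ℝ| ≤ ‖x‖ * ‖v' - v‖ := abs_real_inner_le_norm _ _
        _ ≤ M * η := mul_le_mul hxM hvv'.le (norm_nonneg _) hM0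
    have b3 : |⟪z, v' - v⟫_ℝ| ≤ M * η := by
      calc |⟪z, v' - v⟫_ℝ| ≤ ‖z‖ * ‖v' - v‖ := abs_real_inner_le_norm _ _
        _ ≤ M * η := mul_le_mul hzM hvv'.le (norm_nonneg _) hM0
    have hs' : suppFn K v' ≤ suppFn K v + M * η := by
      apply suppFn_le hne
      intro w hw
      have h1 : ⟪w, v'⟫_ℝ = ⟪w, v⟫_ℝ + ⟪w, v' - v⟫_ℝ := by
        rw [inner_sub_right]; ring
      have h2 : |⟪w, v' - v⟫_ℝ| ≤ M * η := by
        calc |⟪w, v' - v⟫_ℝ| ≤ ‖w‖ * ‖v' - v‖ := abs_real_inner_le_norm _ _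
          _ ≤ M * η := mul_le_mul (hM w hw) hvv'.le (norm_nonneg _) hM0
      have h3 := inner_le_suppFn hKcomp (v := v) hw
      have h4 := abs_le.1 h2
      linarith
    have hxv' : ⟪x, v'⟫_ℝ = ⟪y, v⟫_ℝ + ⟪x - y, v⟫_ℝ + ⟪x, v' - v⟫_ℝ := by
      rw [inner_sub_right, inner_sub_left]; ring
    have hzv' : |⟪z, v'⟫_ℝ - ⟪z, v⟫_ℝ| ≤ M * η := by
      have : ⟪z, v'⟫_ℝ - ⟪z, v⟫_ℝ = ⟪z, v' - v⟫_ℝ := by rw [inner_sub_right]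
      rwa [this]
    have hab1 := abs_le.1 b1
    have hab2 := abs_le.1 b2
    have hab3 := abs_le.1 hzv'
    -- final arithmetic
    have hprod1 : (1 - t/2) * (⟪xv, v⟫_ℝ - ⟪z, v⟫_ℝ) ≥ (1 - t/2) * (suppFn K v - ⟪z, v⟫_ℝ) := by
      apply mul_le_mul_of_nonneg_left (by linarith) (by linarith)
    have hssub : suppFn K v - ⟪z, v⟫_ℝ ≥ r := by linarith
    have q1 : t * (⟪z, v'⟫_ℝ - ⟪z, v⟫_ℝ) ≤ t * (M * η) :=
      mul_le_mul_of_nonneg_left hab3.2 ht0.le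
    have q2 : (1 - t) * (suppFn K v' - suppFn K v) ≤ (1 - t) * (M * η) :=
      mul_le_mul_of_nonneg_left (by linarith) (by linarith)
    have q3 : (t/2) * r ≤ (t/2) * (suppFn K v - ⟪z, v⟫_ℝ) :=
      mul_le_mul_of_nonneg_left hssub (by positivity)
    linarith [hab1.1, hab2.1, hη2, hxv', hyv, q1, q2, q3, hprod1, hρdef,
      mul_nonneg ht0.le hr.le]
  choose y hyK hy using key
  set S := Metric.sphere (0 : EuclideanSpace ℝ (Fin n)) 1 with hSdef
  set Y : S → EuclideanSpace ℝ (Fin n) :=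
    fun i => y (i : EuclideanSpace ℝ (Fin n)) (mem_sphere_zero_iff_norm.1 i.2) with hYdef
  have hcover : S ⊆ ⋃ i : S, Metric.ball (i : EuclideanSpace ℝ (Fin n)) η := by
    intro v hv
    exact Set.mem_iUnion.2 ⟨⟨v, hv⟩, Metric.mem_ball_self hη⟩
  obtain ⟨F, hF⟩ := (isCompact_sphere (0 : EuclideanSpace ℝ (Fin n)) 1).elim_finite_subcover
    (fun i : S => Metric.ball (i : EuclideanSpace ℝ (Fin n)) η)
    (fun _ => Metric.isOpen_ball) hcover
  refine ⟨F.inf (fun i => μ (Metric.ball (Y i) ρ)), ?_, ?_⟩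
  · rw [Finset.lt_inf_iff (by simp : (0:ℝ≥0∞) < ⊤)]
    intro i _
    have hsub : Metric.ball (Y i) ρ ⊆ interior K :=
      interior_maximal (hyK _ _) Metric.isOpen_ball
    rw [pos_iff_ne_zero]
    intro h0
    have h1 : μ.restrict (interior K) (Metric.ball (Y i) ρ) = 0 := by
      rw [Measure.restrict_apply measurableSet_ball]
      exact measure_mono_null Set.inter_subset_left h0
    have h2 := hac₂ h1
    rw [Measure.restrict_apply measurableSet_ball,
      Set.inter_eq_self_of_subset_left hsub] at h2
    exact absurd h2 (Metric.measure_ball_pos volume _ hρ).ne'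
  · intro v c hv hc
    have hvS : v ∈ S := mem_sphere_zero_iff_norm.2 hv
    obtain ⟨i, hiF, hvi⟩ := Set.mem_iUnion₂.1 (hF hvS)
    have hvi' : ‖v - (i : EuclideanSpace ℝ (Fin n))‖ < η := by
      rwa [Metric.mem_ball, dist_eq_norm] at hvi
    have hsub : Metric.ball (Y i) ρ ⊆ K ∩ halfGe v c := by
      intro x hx
      refine ⟨hyK _ _ hx, ?_⟩
      have hle := hy (i : EuclideanSpace ℝ (Fin n)) (mem_sphere_zero_iff_norm.1 i.2)
        v hv hvi' x hx
      exact le_trans hc.le hle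
    calc F.inf (fun i => μ (Metric.ball (Y i) ρ)) ≤ μ (Metric.ball (Y i) ρ) :=
          Finset.inf_le hiF
      _ ≤ μ (K ∩ halfGe v c) := measure_mono hsub

lemma sep (hcomp : IsCompact K) (hconv : Convex ℝ K) (hne : K.Nonempty)
    {x : EuclideanSpace ℝ (Fin n)} (hx : x ∉ K) :
    ∃ v : EuclideanSpace ℝ (Fin n), ‖v‖ = 1 ∧ suppFn K v < ⟪x, v⟫_ℝ := by
  obtain ⟨f, u, hfu, hux⟩ := geometric_hahn_banach_closed_point hconv hcomp.isClosed hx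
  set w := (InnerProductSpace.toDual ℝ (EuclideanSpace ℝ (Fin n))).symm f with hw
  have hfw : ∀ y, ⟪w, y⟫_ℝ = f y := fun y => InnerProductSpace.toDual_symm_apply
  obtain ⟨a, ha⟩ := id hne
  have hw0 : w ≠ 0 := by
    intro h
    have h1 : f a < u := hfu a ha
    have h2 : f a = 0 := by rw [← hfw, h, inner_zero_left]
    have h3 : f x = 0 := by rw [← hfw, h, inner_zero_left]
    linarith [hux]
  have hnw : (0:ℝ) < ‖w‖ := norm_pos_iff.2 hw0
  refine ⟨‖w‖⁻¹ • w, ?_, ?_⟩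
  · rw [norm_smul, norm_inv, norm_norm, inv_mul_cancel₀ hnw.ne']
  · have key : ∀ y, ⟪y, ‖w‖⁻¹ • w⟫_ℝ = ‖w‖⁻¹ * f y := by
      intro y
      rw [real_inner_smul_right, real_inner_comm, hfw]
    rw [key]
    have h1 : suppFn K (‖w‖⁻¹ • w) ≤ ‖w‖⁻¹ * u := by
      apply suppFn_le hne
      intro y hy
      rw [key]
      exact mul_le_mul_of_nonneg_left (hfu y hy).le (by positivity)
    have h2 : ‖w‖⁻¹ * u < ‖w‖⁻¹ * f x := by
      apply mul_lt_mul_of_pos_left hux (by positivity)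
    linarith

lemma interior_lt_suppFn (hcomp : IsCompact K) {x v : EuclideanSpace ℝ (Fin n)}
    (hv : ‖v‖ = 1) (hx : x ∈ interior K) : ⟪x, v⟫_ℝ < suppFn K v := by
  obtain ⟨ε, hε, hb⟩ := Metric.isOpen_iff.1 isOpen_interior x hx
  have hxv : x + (ε/2) • v ∈ K := by
    apply interior_subset
    apply hb
    rw [Metric.mem_ball, dist_eq_norm]
    simp only [add_sub_cancel_left, norm_smul, hv, Real.norm_eq_abs, mul_one]
    rw [abs_of_pos (by linarith)]
    linarith
  have := inner_le_suppFn hcomp (v := v) hxv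
  rw [inner_add_left, real_inner_smul_left, real_inner_self_eq_norm_sq, hv] at this
  nlinarith



lemma floatBody_subset (hKcomp : IsCompact K) (hKconv : Convex ℝ K)
    (hKint : (interior K).Nonempty) (μ : Measure (EuclideanSpace ℝ (Fin n)))
    (hμsupp : μ (interior K)ᶜ = 0) (δ : ℝ) : floatBody μ K δ ⊆ K := by
  intro x hx
  by_contra hxK
  have hne : K.Nonempty := hKint.mono interior_subset
  obtain ⟨v, hv, hsep⟩ := sep hKcomp hKconv hne hxK
  have hsub : K ∩ halfGe v (suppFn K v) ⊆ (interior K)ᶜ := by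
    rintro w ⟨hwK, hwH⟩ hwint
    exact absurd (hwH : suppFn K v ≤ ⟪w, v⟫_ℝ)
      (not_le.2 (interior_lt_suppFn hKcomp hv hwint))
  have h0 : μ (K ∩ halfGe v (suppFn K v)) = 0 :=
    le_antisymm ((measure_mono hsub).trans hμsupp.le) zero_le
  have hmem : halfLe v (suppFn K v) ∈ {H | ∃ v c, ‖v‖ = 1 ∧
      μ (K ∩ halfGe v c) ≤ ENNReal.ofReal (δ ^ (((n : ℝ) + 1) / 2)) ∧ H = halfLe v c} :=
    ⟨v, suppFn K v, hv, h0 ▸ zero_le, rfl⟩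
  exact absurd (hx _ hmem : ⟪x, v⟫_ℝ ≤ suppFn K v) (not_le.2 hsep)

lemma isClosed_floatBody (μ : Measure (EuclideanSpace ℝ (Fin n))) (δ : ℝ) :
    IsClosed (floatBody μ K δ) := by
  apply isClosed_sInter
  rintro H ⟨v, c, -, -, rfl⟩
  have hcont : Continuous fun y : EuclideanSpace ℝ (Fin n) => ⟪y, v⟫_ℝ :=
    continuous_id.inner continuous_const
  exact isClosed_le hcont continuous_const

lemma convex_floatBody (μ : Measure (EuclideanSpace ℝ (Fin n))) (δ : ℝ) :
    Convex ℝ (floatBody μ K δ) := by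
  apply convex_sInter
  rintro H ⟨v, c, -, -, rfl⟩
  have hlin : IsLinearMap ℝ (fun y : EuclideanSpace ℝ (Fin n) => ⟪y, v⟫_ℝ) :=
    ⟨fun a b => inner_add_left a b v, fun s a => real_inner_smul_left a v s⟩
  exact convex_halfSpace_le hlin c


/-- The weighted floating bodies converge to `K` in Hausdorff distance as
`δ → 0⁺`; in particular, for all sufficiently small `δ > 0` the floating body is a non-empty
convex body contained in `K`. -/
theorem stmt2 {n : ℕ} (K : Set (EuclideanSpace ℝ (Fin n)))
    (hKcomp : IsCompact K) (hKconv : Convex ℝ K) (hKint : (interior K).Nonempty)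
    (μ : Measure (EuclideanSpace ℝ (Fin n))) [IsFiniteMeasure μ]
    (hμsupp : μ (interior K)ᶜ = 0)
    (hac₁ : μ.restrict (interior K) ≪ volume.restrict (interior K))
    (hac₂ : volume.restrict (interior K) ≪ μ.restrict (interior K)) :
    Tendsto (fun δ : ℝ => Metric.hausdorffDist (floatBody μ K δ) K) (𝓝[>] 0) (𝓝 0) ∧
    (∀ᶠ δ : ℝ in 𝓝[>] 0,
      (floatBody μ K δ).Nonempty ∧ IsCompact (floatBody μ K δ) ∧
      Convex ℝ (floatBody μ K δ) ∧ floatBody μ K δ ⊆ K) := by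
  have hne : K.Nonempty := hKint.mono interior_subset
  obtain ⟨z, hz⟩ := hKint
  have hzK : z ∈ K := interior_subset hz
  obtain ⟨ε₀, hε₀, hballz⟩ := Metric.isOpen_iff.1 isOpen_interior z hz
  have hball : Metric.closedBall z (ε₀/2) ⊆ K := by
    intro w hw
    exact interior_subset (hballz (lt_of_le_of_lt (Metric.mem_closedBall.1 hw) (by linarith)))
  have hr : 0 < ε₀/2 := by positivity
  obtain ⟨M₀, hM₀⟩ := hKcomp.isBounded.exists_norm_le
  set M : ℝ := max M₀ 0 with hMdef
  have hM : ∀ x ∈ K, ‖x‖ ≤ M := fun x hx => le_trans (hM₀ x hx) (le_max_left _ _)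
  have hM0 : 0 ≤ M := le_max_right _ _
  have hzM : ‖z‖ ≤ M := hM z hzK
  have hp : (0:ℝ) < ((n : ℝ) + 1) / 2 := by positivity
  have main : ∀ t : ℝ, 0 < t → t < 1 → ∃ δ₀ > (0:ℝ), ∀ δ : ℝ, 0 < δ → δ < δ₀ →
      ∀ y ∈ K, z + (1-t) • (y - z) ∈ floatBody μ K δ := by
    intro t ht0 ht1
    obtain ⟨m, hm, hmle⟩ := core hKcomp hKconv hr hball ht0 ht1 μ hac₂
    set m' : ℝ≥0∞ := min m 1 with hm'def
    have hm'0 : 0 < m' := lt_min hm zero_lt_one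
    have hm'top : m' ≠ ⊤ := ne_top_of_le_ne_top ENNReal.one_ne_top (min_le_right _ _)
    refine ⟨m'.toReal ^ (((n : ℝ) + 1) / 2)⁻¹,
      Real.rpow_pos_of_pos (ENNReal.toReal_pos hm'0.ne' hm'top) _, ?_⟩
    intro δ hδ0 hδlt y hy
    have hδp : ENNReal.ofReal (δ ^ (((n : ℝ) + 1) / 2)) < m' := by
      rw [ENNReal.ofReal_lt_iff_lt_toReal (Real.rpow_nonneg hδ0.le _) hm'top]
      calc δ ^ (((n : ℝ) + 1) / 2)
          < (m'.toReal ^ (((n : ℝ) + 1) / 2)⁻¹) ^ (((n : ℝ) + 1) / 2) :=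
            Real.rpow_lt_rpow hδ0.le hδlt hp
        _ = m'.toReal := by
            rw [← Real.rpow_mul ENNReal.toReal_nonneg, inv_mul_cancel₀ hp.ne', Real.rpow_one]
    intro H hH
    obtain ⟨v, c, hv, hμc, rfl⟩ := hH
    show ⟪z + (1-t) • (y - z), v⟫_ℝ ≤ c
    by_contra hgt
    push_neg at hgt
    have hwv : ⟪z + (1-t) • (y - z), v⟫_ℝ = ⟪z, v⟫_ℝ + (1-t) * (⟪y, v⟫_ℝ - ⟪z, v⟫_ℝ) := by
      rw [inner_add_left, real_inner_smul_left, inner_sub_left]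
    have hys : ⟪y, v⟫_ℝ ≤ suppFn K v := inner_le_suppFn hKcomp hy
    have hcct : c < ⟪z, v⟫_ℝ + (1-t) * (suppFn K v - ⟪z, v⟫_ℝ) := by
      have hq := mul_le_mul_of_nonneg_left
        (by linarith : ⟪y, v⟫_ℝ - ⟪z, v⟫_ℝ ≤ suppFn K v - ⟪z, v⟫_ℝ)
        (by linarith : (0:ℝ) ≤ 1 - t)
      linarith [hwv ▸ hgt]
    have h1 : m' ≤ μ (K ∩ halfGe v c) := le_trans (min_le_left _ _) (hmle v c hv hcct)
    exact absurd (lt_of_le_of_lt hμc hδp) (not_lt.2 h1)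
  constructor
  · rw [Metric.tendsto_nhds]
    intro ε hε
    set t : ℝ := min (1/2) (ε / (4*M + 4)) with htdef
    have ht0 : 0 < t := lt_min (by norm_num) (by positivity)
    have ht1 : t < 1 := lt_of_le_of_lt (min_le_left _ _) (by norm_num)
    obtain ⟨δ₀, hδ₀, hδ⟩ := main t ht0 ht1
    filter_upwards [Ioo_mem_nhdsGT_of_mem (Set.mem_Ico.2 ⟨le_refl (0:ℝ), hδ₀⟩)] with δ hδmem
    obtain ⟨hδ0, hδlt⟩ := hδmem
    have hsubK : floatBody μ K δ ⊆ K := floatBody_subset hKcomp hKconv ⟨z, hz⟩ μ hμsupp δ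
    have hdist : Metric.hausdorffDist (floatBody μ K δ) K ≤ 2*M*t := by
      apply Metric.hausdorffDist_le_of_mem_dist
        (mul_nonneg (by positivity : (0:ℝ) ≤ 2*M) ht0.le)
      · intro x hx
        refine ⟨x, hsubK hx, ?_⟩
        rw [dist_self]
        exact mul_nonneg (by positivity : (0:ℝ) ≤ 2*M) ht0.le
      · intro x hxK
        refine ⟨z + (1-t) • (x - z), hδ δ hδ0 hδlt x hxK, ?_⟩
        rw [dist_eq_norm]
        have heq : x - (z + (1-t) • (x - z)) = t • (x - z) := by module
        rw [heq, norm_smul, Real.norm_eq_abs, abs_of_pos ht0]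
        have hb : ‖x - z‖ ≤ 2*M := by
          calc ‖x - z‖ ≤ ‖x‖ + ‖z‖ := norm_sub_le _ _
            _ ≤ 2*M := by linarith [hM x hxK]
        calc t * ‖x - z‖ ≤ t * (2*M) := mul_le_mul_of_nonneg_left hb ht0.le
          _ = 2*M*t := by ring
    rw [dist_zero_right, Real.norm_eq_abs, abs_of_nonneg Metric.hausdorffDist_nonneg]
    have ht2 : t ≤ ε/(4*M+4) := min_le_right _ _
    have h3 : 2*M*t ≤ 2*M*(ε/(4*M+4)) := mul_le_mul_of_nonneg_left ht2 (by positivity)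
    have h4 : 2*M*(ε/(4*M+4)) < ε := by
      have hXpos : 0 < ε/(4*M+4) := div_pos hε (by positivity)
      have h5 : ε/(4*M+4)*(4*M+4) = ε := div_mul_cancel₀ ε (by positivity)
      nlinarith [mul_nonneg hM0 hXpos.le]
    linarith
  · obtain ⟨δ₀, hδ₀, hδ⟩ := main (1/2) (by norm_num) (by norm_num)
    filter_upwards [Ioo_mem_nhdsGT_of_mem (Set.mem_Ico.2 ⟨le_refl (0:ℝ), hδ₀⟩)] with δ hδmem
    obtain ⟨hδ0, hδlt⟩ := hδmem
    have hsubK : floatBody μ K δ ⊆ K := floatBody_subset hKcomp hKconv ⟨z, hz⟩ μ hμsupp δ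
    refine ⟨⟨z, ?_⟩, hKcomp.of_isClosed_subset (isClosed_floatBody μ δ) hsubK,
      convex_floatBody μ δ, hsubK⟩
    have hzf := hδ δ hδ0 hδlt z hzK
    simpa using hzf
end
end

section
/- Let f_i : S^{n-1} → (0,∞), i ∈ ℕ, be a sequence of positive continuous functions converging uniformly to a positive continuous function f : S^{n-1} → (0,∞). Let x be a regular boundary point of the Wulff shape [f], with unique outer unit normal N_x. Then for every ε > 0 there exists i₀ ∈ ℕ such that for all i > i₀: [f_i] ∩ pos{x} = (⋂{ {y ∈ ℝ^n : y·v ≤ f_i(v)} : v ∈ S^{n-1}, d_s(v, N_x) < ε }) ∩ pos{x}. -/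
open MeasureTheory Filter
open scoped InnerProductSpace ENNReal Topology

noncomputable section

/-- The ray `pos{x} = {t • x : t ≥ 0}`. -/
def ray {n : ℕ} (x : EuclideanSpace ℝ (Fin n)) : Set (EuclideanSpace ℝ (Fin n)) :=
  {y | ∃ t : ℝ, 0 ≤ t ∧ y = t • x}

/-- The spherical distance `d_s(u,v) = arccos ⟪u, v⟫` on the unit sphere. -/
def sphDist {n : ℕ} (u v : EuclideanSpace ℝ (Fin n)) : ℝ := Real.arccos ⟪u, v⟫_ℝ

/-- The Wulff shape `[f] = ⋂_{‖v‖=1} {y : ⟪y, v⟫ ≤ f v}`. -/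
def wulff {n : ℕ} (f : EuclideanSpace ℝ (Fin n) → ℝ) : Set (EuclideanSpace ℝ (Fin n)) :=
  ⋂ v ∈ {v : EuclideanSpace ℝ (Fin n) | ‖v‖ = 1}, halfLe v (f v)

lemma halfLe_closed {n : ℕ} (v : EuclideanSpace ℝ (Fin n)) (c : ℝ) : IsClosed (halfLe v c) :=
  isClosed_le (continuous_id.inner continuous_const) continuous_const

lemma halfLe_convex {n : ℕ} (v : EuclideanSpace ℝ (Fin n)) (c : ℝ) : Convex ℝ (halfLe v c) :=
  convex_halfSpace_le ⟨fun a b => inner_add_left a b v, fun r a => real_inner_smul_left a v r⟩ c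

lemma wulff_closed {n : ℕ} (f : EuclideanSpace ℝ (Fin n) → ℝ) : IsClosed (wulff f) :=
  isClosed_biInter fun v _ => halfLe_closed v (f v)

lemma wulff_convex {n : ℕ} (f : EuclideanSpace ℝ (Fin n) → ℝ) : Convex ℝ (wulff f) :=
  convex_iInter fun v => convex_iInter fun _ => halfLe_convex v (f v)

lemma mem_wulff {n : ℕ} {f : EuclideanSpace ℝ (Fin n) → ℝ} {y : EuclideanSpace ℝ (Fin n)} :
    y ∈ wulff f ↔ ∀ v : EuclideanSpace ℝ (Fin n), ‖v‖ = 1 → ⟪y, v⟫_ℝ ≤ f v := by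
  simp [wulff, halfLe, Set.mem_iInter]

/-- Local dependence of a convergent sequence of Wulff shapes. -/
theorem stmt3 {n : ℕ} (f : ℕ → EuclideanSpace ℝ (Fin n) → ℝ)
    (flim : EuclideanSpace ℝ (Fin n) → ℝ)
    (hfc : ∀ i, ContinuousOn (f i) (Metric.sphere (0 : EuclideanSpace ℝ (Fin n)) 1))
    (hfpos : ∀ i, ∀ v : EuclideanSpace ℝ (Fin n), ‖v‖ = 1 → 0 < f i v)
    (hflimc : ContinuousOn flim (Metric.sphere (0 : EuclideanSpace ℝ (Fin n)) 1))
    (hflimpos : ∀ v : EuclideanSpace ℝ (Fin n), ‖v‖ = 1 → 0 < flim v)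
    (hunif : TendstoUniformlyOn f flim atTop
      (Metric.sphere (0 : EuclideanSpace ℝ (Fin n)) 1))
    (x N : EuclideanSpace ℝ (Fin n))
    (hx : x ∈ frontier (wulff flim)) (hN : ‖N‖ = 1)
    (hNsupp : ∀ y ∈ wulff flim, ⟪y, N⟫_ℝ ≤ ⟪x, N⟫_ℝ)
    (hNuniq : ∀ v : EuclideanSpace ℝ (Fin n), ‖v‖ = 1 →
      (∀ y ∈ wulff flim, ⟪y, v⟫_ℝ ≤ ⟪x, v⟫_ℝ) → v = N) :
    ∀ ε > (0 : ℝ), ∃ i₀ : ℕ, ∀ i > i₀,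
      wulff (f i) ∩ ray x =
        (⋂ v ∈ {v : EuclideanSpace ℝ (Fin n) | ‖v‖ = 1 ∧ sphDist v N < ε},
          halfLe v (f i v)) ∩ ray x := by
  intro ε hε
  have hsphere : ∀ v : EuclideanSpace ℝ (Fin n), v ∈ Metric.sphere (0 : EuclideanSpace ℝ (Fin n)) 1 ↔ ‖v‖ = 1 := by
    intro v; simp [mem_sphere_zero_iff_norm]
  have hNS : N ∈ Metric.sphere (0 : EuclideanSpace ℝ (Fin n)) 1 := (hsphere N).2 hN
  have hxw : x ∈ wulff flim := by
    have := frontier_subset_closure hx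
    rwa [(wulff_closed flim).closure_eq] at this
  -- minimum of flim on the sphere
  obtain ⟨w, hwS, hwmin⟩ :=
    (isCompact_sphere (0 : EuclideanSpace ℝ (Fin n)) 1).exists_isMinOn ⟨N, hNS⟩ hflimc
  set m := flim w with hm_def
  have hw1 : ‖w‖ = 1 := (hsphere w).1 hwS
  have hm : 0 < m := hflimpos w hw1
  have hmle : ∀ v : EuclideanSpace ℝ (Fin n), ‖v‖ = 1 → m ≤ flim v := fun v hv =>
    hwmin ((hsphere v).2 hv)
  -- m • N ∈ wulff flim, so ⟪x,N⟫ ≥ m > 0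
  have hmN : m • N ∈ wulff flim := by
    rw [mem_wulff]
    intro v hv
    rw [real_inner_smul_left]
    calc m * ⟪N, v⟫_ℝ ≤ m * 1 := by
          have : ⟪N, v⟫_ℝ ≤ 1 := by
            have := real_inner_le_norm N v; rwa [hN, hv, one_mul] at this
          nlinarith
      _ = m := mul_one m
      _ ≤ flim v := hmle v hv
  have hxN : 0 < ⟪x, N⟫_ℝ := by
    have h1 := hNsupp _ hmN
    rw [real_inner_smul_left, real_inner_self_eq_norm_sq, hN] at h1
    nlinarith
  have hxne : x ≠ 0 := by
    intro h; rw [h, inner_zero_left] at hxN; exact lt_irrefl 0 hxN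
  have hxnorm : 0 < ‖x‖ := norm_pos_iff.mpr hxne
  -- 0 in the interior of wulff flim
  have h0int : (0 : EuclideanSpace ℝ (Fin n)) ∈ interior (wulff flim) := by
    have hball : Metric.ball (0 : EuclideanSpace ℝ (Fin n)) m ⊆ wulff flim := by
      intro y hy
      rw [mem_wulff]
      intro v hv
      calc ⟪y, v⟫_ℝ ≤ ‖y‖ * ‖v‖ := real_inner_le_norm y v
        _ = ‖y‖ := by rw [hv, mul_one]
        _ ≤ m := le_of_lt (by simpa [mem_ball_zero_iff] using hy)
        _ ≤ flim v := hmle v hv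
    exact interior_maximal hball Metric.isOpen_ball (Metric.mem_ball_self hm)
  -- t > 1 → t • x ∉ wulff flim
  have hout : ∀ t : ℝ, 1 < t → t • x ∉ wulff flim := by
    intro t ht hmem
    have ht0 : 0 < t := lt_trans one_pos ht
    have hxint : x ∈ interior (wulff flim) := by
      have := (wulff_convex flim).combo_interior_self_mem_interior h0int hmem
        (a := 1 - 1/t) (b := 1/t) (by rw [sub_pos, div_lt_one ht0]; linarith)
        (by positivity) (by ring)
      simpa [smul_smul, ne_of_gt ht0, mul_div_cancel₀] using this
    exact hx.2 hxint
  -- δ from compactness on the far part of the sphere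
  have hδ : ∃ δ > (0:ℝ), ∀ v : EuclideanSpace ℝ (Fin n), ‖v‖ = 1 → ε ≤ sphDist v N →
      ⟪x, v⟫_ℝ ≤ flim v - δ := by
    set Sε : Set (EuclideanSpace ℝ (Fin n)) :=
      Metric.sphere 0 1 ∩ {v | ε ≤ sphDist v N} with hSε_def
    have hcl : IsClosed {v : EuclideanSpace ℝ (Fin n) | ε ≤ sphDist v N} := by
      apply isClosed_le continuous_const
      exact Real.continuous_arccos.comp (continuous_id.inner continuous_const)
    have hcomp : IsCompact Sε :=
      (isCompact_sphere (0 : EuclideanSpace ℝ (Fin n)) 1).inter_right hcl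
    rcases Sε.eq_empty_or_nonempty with hemp | hne
    · refine ⟨1, one_pos, fun v hv1 hv2 => ?_⟩
      exfalso
      have : v ∈ Sε := ⟨(hsphere v).2 hv1, hv2⟩
      rw [hemp] at this; exact this
    · have hgc : ContinuousOn (fun v => flim v - ⟪x, v⟫_ℝ) Sε := by
        apply ContinuousOn.sub (hflimc.mono Set.inter_subset_left)
        exact (continuous_const.inner continuous_id).continuousOn
      obtain ⟨v₀, hv₀S, hv₀min⟩ := hcomp.exists_isMinOn hne hgc
      refine ⟨flim v₀ - ⟪x, v₀⟫_ℝ, ?_, ?_⟩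
      · -- positivity: strict inequality at every point of Sε
        have hv₀1 : ‖v₀‖ = 1 := (hsphere v₀).1 hv₀S.1
        have hle : ⟪x, v₀⟫_ℝ ≤ flim v₀ := mem_wulff.1 hxw v₀ hv₀1
        rcases lt_or_eq_of_le hle with h | h
        · linarith
        · exfalso
          have hv₀N : v₀ = N := by
            apply hNuniq v₀ hv₀1
            intro y hy
            calc ⟪y, v₀⟫_ℝ ≤ flim v₀ := mem_wulff.1 hy v₀ hv₀1
              _ = ⟪x, v₀⟫_ℝ := h.symm
          have : sphDist N N = 0 := by
            unfold sphDist
            rw [real_inner_self_eq_norm_sq, hN]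
            norm_num [Real.arccos_one]
          have h2 : ε ≤ sphDist v₀ N := hv₀S.2
          rw [hv₀N, this] at h2
          linarith
      · intro v hv1 hv2
        have h5 := hv₀min (⟨(hsphere v).2 hv1, hv2⟩ : v ∈ Sε)
        simp only [Set.mem_setOf_eq] at h5
        linarith
  obtain ⟨δ, hδ0, hδfar⟩ := hδ
  set η : ℝ := δ / (2 * ‖x‖) with hη_def
  have hη : 0 < η := by positivity
  -- far slack for (1+η) • x
  have hfar : ∀ v : EuclideanSpace ℝ (Fin n), ‖v‖ = 1 → ε ≤ sphDist v N →
      (1 + η) * ⟪x, v⟫_ℝ ≤ flim v - δ / 2 := by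
    intro v hv1 hv2
    have h1 : ⟪x, v⟫_ℝ ≤ flim v - δ := hδfar v hv1 hv2
    rcases le_or_gt (⟪x, v⟫_ℝ) 0 with h | h
    · nlinarith
    · have h2 : ⟪x, v⟫_ℝ ≤ ‖x‖ := by
        have := real_inner_le_norm x v; rwa [hv1, mul_one] at this
      have : η * ⟪x, v⟫_ℝ ≤ δ / 2 := by
        rw [hη_def]
        rw [div_mul_eq_mul_div, mul_comm]
        rw [div_le_div_iff₀ (by positivity) (by norm_num)]
        nlinarith
      nlinarith
  -- a violated direction near N
  obtain ⟨vs, hvs1, hvsnear, hvsviol⟩ :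
      ∃ v : EuclideanSpace ℝ (Fin n), ‖v‖ = 1 ∧ sphDist v N < ε ∧
        flim v < (1 + η) * ⟪x, v⟫_ℝ := by
    by_contra hcon
    push_neg at hcon
    apply hout (1 + η) (by linarith)
    rw [mem_wulff]
    intro v hv1
    rw [real_inner_smul_left]
    rcases lt_or_ge (sphDist v N) ε with hnear | hfarcase
    · exact hcon v hv1 hnear
    · linarith [hfar v hv1 hfarcase]
  have hvspos : 0 < ⟪x, vs⟫_ℝ := by
    have := hflimpos vs hvs1; nlinarith
  set δ₂ : ℝ := (1 + η) * ⟪x, vs⟫_ℝ - flim vs with hδ₂_def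
  have hδ₂ : 0 < δ₂ := by rw [hδ₂_def]; linarith
  set δ₃ : ℝ := min (δ / 2) δ₂ with hδ₃_def
  have hδ₃ : 0 < δ₃ := lt_min (by linarith) hδ₂
  -- uniform convergence index
  rw [Metric.tendstoUniformlyOn_iff] at hunif
  have hev := hunif δ₃ hδ₃
  rw [eventually_atTop] at hev
  obtain ⟨i₀, hi₀⟩ := hev
  refine ⟨i₀, fun i hi => ?_⟩
  have hfi : ∀ v : EuclideanSpace ℝ (Fin n), ‖v‖ = 1 → |flim v - f i v| < δ₃ := by
    intro v hv
    have := hi₀ i (le_of_lt hi) v ((hsphere v).2 hv)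
    rwa [Real.dist_eq] at this
  apply Set.Subset.antisymm
  · apply Set.inter_subset_inter_left
    intro y hy
    rw [Set.mem_iInter₂]
    intro v hv
    exact Set.mem_iInter₂.1 hy v hv.1
  · rintro y ⟨hy1, t, ht, rfl⟩
    rw [Set.mem_iInter₂] at hy1
    -- first show t ≤ 1 + η using the violated direction vs
    have htle : t ≤ 1 + η := by
      by_contra hcon
      push_neg at hcon
      have h1 := hy1 vs ⟨hvs1, hvsnear⟩
      rw [halfLe, Set.mem_setOf_eq, real_inner_smul_left] at h1
      have h2 : f i vs < flim vs + δ₂ := by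
        have := hfi vs hvs1
        have h3 : δ₃ ≤ δ₂ := min_le_right _ _
        cases' abs_lt.1 this with ha hb
        linarith
      have h4 : (1 + η) * ⟪x, vs⟫_ℝ < t * ⟪x, vs⟫_ℝ := by nlinarith
      linarith [hδ₂_def ▸ hδ₂]
    refine ⟨?_, t, ht, rfl⟩
    rw [mem_wulff]
    intro v hv1
    rcases lt_or_ge (sphDist v N) ε with hnear | hfarcase
    · have := hy1 v ⟨hv1, hnear⟩
      rwa [halfLe, Set.mem_setOf_eq] at this
    · rw [real_inner_smul_left]
      rcases le_or_gt (⟪x, v⟫_ℝ) 0 with h | h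
      · have : t * ⟪x, v⟫_ℝ ≤ 0 := mul_nonpos_of_nonneg_of_nonpos ht h
        linarith [hfpos i v hv1]
      · have h1 : t * ⟪x, v⟫_ℝ ≤ (1 + η) * ⟪x, v⟫_ℝ := by nlinarith
        have h2 := hfar v hv1 hfarcase
        have h3 : flim v - δ / 2 ≤ f i v := by
          have := hfi v hv1
          have h4 : δ₃ ≤ δ / 2 := min_le_left _ _
          cases' abs_lt.1 this with ha hb
          linarith
        linarith
end
end

section
/- Let K be a convex body in ℝ^n with 0 ∈ int K, let μ be a finite non-negative Borel measure on int K equivalent to Lebesgue measure on int K, and let x be a regular boundary point of K with unique outer unit normal N_x. Then for every ε > 0 there exists δ_ε > 0 such that for all 0 < δ < δ_ε: 0 ∈ int F^μ_δ K, and, with x^K_δ the unique point of bd F^μ_δ K on the ray pos{x}, the segment conv{x^K_δ, 0} equals F^μ_δ K ∩ pos{x} and also equals (⋂{ {y : y·v ≤ h_K(v) − s_δ(v)} : v ∈ S^{n-1}, d_s(v, N_x) < ε }) ∩ pos{x}, where s_δ(v) is uniquely determined by μ(K ∩ {y : y·v ≥ h_K(v) − s_δ(v)}) = δ^{(n+1)/2}.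 -/
open MeasureTheory Filter
open scoped InnerProductSpace ENNReal Topology

noncomputable section

variable {n : ℕ} {K : Set (EuclideanSpace ℝ (Fin n))} {v : EuclideanSpace ℝ (Fin n)}

lemma continuous_innerR (v : EuclideanSpace ℝ (Fin n)) :
    Continuous (fun y : EuclideanSpace ℝ (Fin n) => ⟪y, v⟫_ℝ) :=
  Continuous.inner continuous_id continuous_const

lemma suppFn_ge (hK : IsCompact K) {y} (hy : y ∈ K) (v : EuclideanSpace ℝ (Fin n)) :
    ⟪y, v⟫_ℝ ≤ suppFn K v :=
  le_csSup ((hK.image (continuous_innerR v)).bddAbove) (Set.mem_image_of_mem _ hy)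

lemma suppFn_le_s4 (hne : K.Nonempty) {c : ℝ} (h : ∀ y ∈ K, ⟪y, v⟫_ℝ ≤ c) :
    suppFn K v ≤ c :=
  csSup_le (hne.image _) (by rintro _ ⟨y, hy, rfl⟩; exact h y hy)

lemma suppFn_exists_lt (hne : K.Nonempty) {c : ℝ} (hc : c < suppFn K v) :
    ∃ y ∈ K, c < ⟪y, v⟫_ℝ := by
  obtain ⟨a, ⟨y, hy, rfl⟩, ha⟩ := exists_lt_of_lt_csSup (hne.image _) hc
  exact ⟨y, hy, ha⟩

lemma measurableSet_halfGe (v : EuclideanSpace ℝ (Fin n)) (c : ℝ) :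
    MeasurableSet (halfGe v c) :=
  (isClosed_le continuous_const (continuous_innerR v)).measurableSet

lemma isClosed_halfLe (v : EuclideanSpace ℝ (Fin n)) (c : ℝ) : IsClosed (halfLe v c) :=
  isClosed_le (continuous_innerR v) continuous_const

lemma convex_halfLe (v : EuclideanSpace ℝ (Fin n)) (c : ℝ) : Convex ℝ (halfLe v c) :=
  convex_halfSpace_le ⟨fun a b => inner_add_left a b v, fun r a => real_inner_smul_left a v r⟩ c

/-- interior points have inner product strictly below the support value -/
lemma inner_lt_suppFn_of_interior (hK : IsCompact K) (hv : ‖v‖ = 1) {y}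
    (hy : y ∈ interior K) : ⟪y, v⟫_ℝ < suppFn K v := by
  obtain ⟨t, ht, hball⟩ := Metric.isOpen_iff.1 isOpen_interior y hy
  have hmem : y + (t/2) • v ∈ K := by
    apply interior_subset; apply hball
    simp [Metric.mem_ball, dist_eq_norm, norm_smul, hv, abs_of_pos (half_pos ht), abs_of_pos ht]
    linarith
  have := suppFn_ge hK hmem v
  rw [inner_add_left, real_inner_smul_left, real_inner_self_eq_norm_sq, hv] at this
  nlinarith

/-- Lipschitz-type bound for the support function. -/
lemma suppFn_sub_le (hK : IsCompact K) (hne : K.Nonempty) {R : ℝ}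
    (hR : K ⊆ Metric.closedBall 0 R) (u v : EuclideanSpace ℝ (Fin n)) :
    suppFn K u - suppFn K v ≤ R * ‖u - v‖ := by
  rw [sub_le_iff_le_add]
  apply suppFn_le_s4 hne
  intro y hy
  have h1 : ⟪y, u⟫_ℝ = ⟪y, v⟫_ℝ + ⟪y, u - v⟫_ℝ := by
    rw [← inner_add_right]; congr 1; abel
  have h2 : ⟪y, u - v⟫_ℝ ≤ ‖y‖ * ‖u - v‖ := real_inner_le_norm y (u - v)
  have h3 : ‖y‖ ≤ R := by simpa [Metric.mem_closedBall, dist_eq_norm] using hR hy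
  have h4 : ⟪y, v⟫_ℝ ≤ suppFn K v := suppFn_ge hK hy v
  have h5 : ‖y‖ * ‖u - v‖ ≤ R * ‖u - v‖ :=
    mul_le_mul_of_nonneg_right h3 (norm_nonneg _)
  linarith

lemma continuous_suppFn (hK : IsCompact K) (hne : K.Nonempty) :
    Continuous (suppFn K) := by
  obtain ⟨R, hR⟩ := hK.isBounded.subset_closedBall 0
  have hR0 : 0 ≤ R := by
    obtain ⟨y, hy⟩ := hne
    have := hR hy
    simp [Metric.mem_closedBall, dist_eq_norm] at this
    exact le_trans (norm_nonneg y) this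
  have : LipschitzWith (Real.toNNReal R) (suppFn K) := by
    apply LipschitzWith.of_dist_le_mul
    intro u v
    rw [Real.dist_eq, Real.coe_toNNReal R hR0, dist_eq_norm]
    rw [abs_le]
    constructor
    · have := suppFn_sub_le hK hne hR v u
      rw [← neg_sub u v, norm_neg] at this
      linarith
    · exact suppFn_sub_le hK hne hR u v
  exact this.continuous

/-- points of the interior get arbitrarily close to the support value -/
lemma exists_interior_inner_gt (hK : IsCompact K) (hKconv : Convex ℝ K)
    (h0K : (0:EuclideanSpace ℝ (Fin n)) ∈ interior K) {c : ℝ} (hc : c < suppFn K v) :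
    ∃ w ∈ interior K, c < ⟪w, v⟫_ℝ := by
  rcases lt_or_ge c 0 with h | h
  · exact ⟨0, h0K, by simpa using h⟩
  · obtain ⟨y, hy, hyc⟩ := suppFn_exists_lt ⟨0, interior_subset h0K⟩ hc
    have hyv : 0 < ⟪y, v⟫_ℝ := lt_of_le_of_lt h hyc
    set b : ℝ := (c + ⟪y, v⟫_ℝ) / (2 * ⟪y, v⟫_ℝ) with hb
    have hb0 : 0 < b := by positivity
    have hb1 : b < 1 := by rw [hb, div_lt_one (by positivity)]; linarith
    refine ⟨(1 - b) • 0 + b • y, hKconv.combo_interior_self_mem_interior h0K hy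
      (by linarith) (le_of_lt hb0) (by ring), ?_⟩
    rw [smul_zero, zero_add, real_inner_smul_left]
    rw [hb]
    rw [div_mul_eq_mul_div, lt_div_iff₀ (by positivity)]
    ring_nf
    nlinarith

/-- open nonempty subsets of the interior of `K` have positive `μ`-measure -/
lemma mu_pos_of_open {μ : Measure (EuclideanSpace ℝ (Fin n))}
    (hac₂ : volume.restrict (interior K) ≪ μ.restrict (interior K))
    {U : Set (EuclideanSpace ℝ (Fin n))} (hU : IsOpen U) (hne : U.Nonempty)
    (hsub : U ⊆ interior K) : 0 < μ U := by
  by_contra h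
  push_neg at h
  have hμU : μ U = 0 := le_antisymm h zero_le
  have h1 : μ.restrict (interior K) U = 0 := by
    rw [Measure.restrict_apply hU.measurableSet]
    exact measure_mono_null Set.inter_subset_left hμU
  have h2 := hac₂ h1
  rw [Measure.restrict_apply hU.measurableSet,
    Set.inter_eq_self_of_subset_left hsub] at h2
  exact (hU.measure_pos volume hne).ne' h2

/-- uniform lower bound on cap measures over the unit sphere -/
lemma exists_unif_cap_bound {μ : Measure (EuclideanSpace ℝ (Fin n))}
    (hK : IsCompact K) (hKconv : Convex ℝ K)
    (h0K : (0:EuclideanSpace ℝ (Fin n)) ∈ interior K)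
    (hac₂ : volume.restrict (interior K) ≪ μ.restrict (interior K))
    (hsph : (Metric.sphere (0:EuclideanSpace ℝ (Fin n)) 1).Nonempty)
    {σ : ℝ} (hσ : 0 < σ) :
    ∃ m : ℝ≥0∞, 0 < m ∧ ∀ v : EuclideanSpace ℝ (Fin n), ‖v‖ = 1 →
      m ≤ μ (K ∩ halfGe v (suppFn K v - σ)) := by
  have hne : K.Nonempty := ⟨0, interior_subset h0K⟩
  obtain ⟨R, hR⟩ := hK.isBounded.subset_closedBall 0
  have hR0 : 0 ≤ R := by
    obtain ⟨y, hy⟩ := hne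
    have := hR hy
    simp [Metric.mem_closedBall, dist_eq_norm] at this
    exact le_trans (norm_nonneg y) this
  -- local data around each point of the sphere
  have hloc : ∀ v₀ ∈ Metric.sphere (0:EuclideanSpace ℝ (Fin n)) 1,
      ∃ ξ > (0:ℝ), ∃ m₀ : ℝ≥0∞, 0 < m₀ ∧ ∀ v : EuclideanSpace ℝ (Fin n), ‖v‖ = 1 →
        ‖v - v₀‖ < ξ → m₀ ≤ μ (K ∩ halfGe v (suppFn K v - σ)) := by
    intro v₀ hv₀
    obtain ⟨w, hw, hwgt⟩ := exists_interior_inner_gt hK hKconv h0K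
      (show suppFn K v₀ - σ/2 < suppFn K v₀ by linarith)
    obtain ⟨τ₀, hτ₀, hball⟩ := Metric.isOpen_iff.1 isOpen_interior w hw
    set τ : ℝ := min (τ₀/2) (σ/4) with hτdef
    have hτpos : 0 < τ := lt_min (half_pos hτ₀) (by linarith)
    have hballτ : Metric.closedBall w τ ⊆ interior K := fun y hy => hball (by
      simp only [Metric.mem_closedBall] at hy
      simp only [Metric.mem_ball]
      calc dist y w ≤ τ := hy
        _ ≤ τ₀/2 := min_le_left _ _
        _ < τ₀ := by linarith)
    set ξ : ℝ := σ / (4 * (‖w‖ + R + 1)) with hξdef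
    have hξpos : 0 < ξ := by positivity
    refine ⟨ξ, hξpos, μ (Metric.ball w τ), ?_, ?_⟩
    · exact mu_pos_of_open hac₂ Metric.isOpen_ball ⟨w, by simp [hτpos]⟩
        (fun y hy => hballτ (Metric.ball_subset_closedBall hy))
    intro v hv hvξ
    apply measure_mono
    intro y hy
    have hyK : y ∈ interior K := hballτ (Metric.ball_subset_closedBall hy)
    constructor
    · exact interior_subset hyK
    · -- show suppFn K v - σ ≤ ⟪y, v⟫
      have hyw : ‖y - w‖ ≤ τ := by
        simpa [dist_eq_norm] using le_of_lt (Metric.mem_ball.1 hy)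
      have e1a : ⟪y - w, v⟫_ℝ = ⟪y, v⟫_ℝ - ⟪w, v⟫_ℝ := inner_sub_left y w v
      have e1b : ⟪w, v - v₀⟫_ℝ = ⟪w, v⟫_ℝ - ⟪w, v₀⟫_ℝ := inner_sub_right w v v₀
      have e2 : |⟪y - w, v⟫_ℝ| ≤ τ := by
        calc |⟪y - w, v⟫_ℝ| ≤ ‖y - w‖ * ‖v‖ := abs_real_inner_le_norm _ _
          _ = ‖y - w‖ := by rw [hv, mul_one]
          _ ≤ τ := hyw
      have e3 : |⟪w, v - v₀⟫_ℝ| ≤ ‖w‖ * ξ := by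
        calc |⟪w, v - v₀⟫_ℝ| ≤ ‖w‖ * ‖v - v₀‖ := abs_real_inner_le_norm _ _
          _ ≤ ‖w‖ * ξ := mul_le_mul_of_nonneg_left (le_of_lt hvξ) (norm_nonneg _)
      have e4 : suppFn K v ≤ suppFn K v₀ + R * ξ := by
        have := suppFn_sub_le hK hne hR v v₀
        have h5 : R * ‖v - v₀‖ ≤ R * ξ := mul_le_mul_of_nonneg_left (le_of_lt hvξ) hR0
        linarith
      have hwR : ‖w‖ * ξ + R * ξ ≤ σ/4 := by
        have : (‖w‖ + R) * ξ ≤ (‖w‖ + R + 1) * ξ :=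
          mul_le_mul_of_nonneg_right (by linarith) (le_of_lt hξpos)
        have h6 : (‖w‖ + R + 1) * ξ = σ/4 := by
          rw [hξdef]; field_simp
        nlinarith
      have hτσ : τ ≤ σ/4 := min_le_right _ _
      have e5 : -τ ≤ ⟪y - w, v⟫_ℝ := neg_le_of_abs_le e2
      have e6 : -(‖w‖ * ξ) ≤ ⟪w, v - v₀⟫_ℝ := neg_le_of_abs_le e3
      show suppFn K v - σ ≤ ⟪y, v⟫_ℝ
      nlinarith
  -- extract a finite subcover
  choose ξ hξpos m₀ hm₀pos hm₀ using hloc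
  obtain ⟨t, ht⟩ := isCompact_sphere (0:EuclideanSpace ℝ (Fin n)) 1 |>.elim_nhds_subcover'
    (fun v₀ hv₀ => Metric.ball v₀ (ξ v₀ hv₀))
    (fun v₀ hv₀ => Metric.ball_mem_nhds v₀ (hξpos v₀ hv₀))
  have htne : t.Nonempty := by
    obtain ⟨v₀, hv₀⟩ := hsph
    rcases Set.mem_iUnion₂.1 (ht hv₀) with ⟨w, hw, _⟩
    exact ⟨w, hw⟩
  refine ⟨t.inf' htne (fun w => m₀ w w.2), ?_, ?_⟩
  · rw [Finset.lt_inf'_iff]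
    exact fun w _ => hm₀pos w w.2
  · intro v hv
    have hvs : v ∈ Metric.sphere (0:EuclideanSpace ℝ (Fin n)) 1 :=
      mem_sphere_zero_iff_norm.2 hv
    rcases Set.mem_iUnion₂.1 (ht hvs) with ⟨w, hw, hvw⟩
    calc t.inf' htne (fun w => m₀ w w.2) ≤ m₀ w w.2 := Finset.inf'_le _ hw
      _ ≤ μ (K ∩ halfGe v (suppFn K v - σ)) := by
          apply hm₀ w w.2 v hv
          simpa [dist_eq_norm] using Metric.mem_ball.1 hvw

lemma mem_segment_zero {z y : EuclideanSpace ℝ (Fin n)} :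
    y ∈ segment ℝ (0:EuclideanSpace ℝ (Fin n)) z ↔ ∃ a : ℝ, 0 ≤ a ∧ a ≤ 1 ∧ y = a • z := by
  rw [segment_eq_image]
  constructor
  · rintro ⟨θ, ⟨h0, h1⟩, rfl⟩
    exact ⟨θ, h0, h1, by simp⟩
  · rintro ⟨a, h0, h1, rfl⟩
    exact ⟨a, ⟨h0, h1⟩, by simp⟩

lemma exists_ray_param {F : Set (EuclideanSpace ℝ (Fin n))} (hcl : IsClosed F)
    (hconv : Convex ℝ F) (h0 : (0:EuclideanSpace ℝ (Fin n)) ∈ interior F)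
    {x : EuclideanSpace ℝ (Fin n)} (hx : x ≠ 0)
    (hbdd : BddAbove {t : ℝ | 0 ≤ t ∧ t • x ∈ F}) :
    ∃ T : ℝ, 0 < T ∧ T • x ∈ F ∧ T • x ∉ interior F ∧
      ∀ t : ℝ, 0 ≤ t → (t • x ∈ F ↔ t ≤ T) := by
  have hxnorm : 0 < ‖x‖ := norm_pos_iff.2 hx
  set A : Set ℝ := {t : ℝ | 0 ≤ t ∧ t • x ∈ F} with hA
  have hAclosed : IsClosed A := by
    have : A = Set.Ici 0 ∩ (fun t : ℝ => t • x) ⁻¹' F := rfl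
    rw [this]
    exact isClosed_Ici.inter (hcl.preimage (continuous_id.smul continuous_const))
  have h0A : (0:ℝ) ∈ A := ⟨le_refl 0, by rw [zero_smul]; exact interior_subset h0⟩
  have hAne : A.Nonempty := ⟨0, h0A⟩
  set T := sSup A with hT
  have hTA : T ∈ A := hAclosed.csSup_mem hAne hbdd
  -- T is positive
  obtain ⟨r, hr, hball⟩ := Metric.isOpen_iff.1 isOpen_interior 0 h0
  have hT0 : 0 < T := by
    have hmem : (r/(2*‖x‖)) ∈ A := by
      have hn : ‖(r/(2*‖x‖)) • x‖ = r/2 := by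
        rw [norm_smul, Real.norm_eq_abs, abs_of_pos (by positivity)]
        field_simp
      refine ⟨by positivity, interior_subset (hball ?_)⟩
      simp only [Metric.mem_ball, dist_eq_norm, sub_zero, hn]
      linarith
    calc (0:ℝ) < r/(2*‖x‖) := by positivity
      _ ≤ T := le_csSup hbdd hmem
  refine ⟨T, hT0, hTA.2, ?_, ?_⟩
  · -- not interior
    intro hint
    obtain ⟨r₂, hr₂, hball₂⟩ := Metric.isOpen_iff.1 isOpen_interior _ hint
    have hmem : T + r₂/(2*‖x‖) ∈ A := by
      have hn : ‖(T + r₂/(2*‖x‖)) • x - T • x‖ = r₂/2 := by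
        rw [← sub_smul, add_sub_cancel_left, norm_smul, Real.norm_eq_abs,
          abs_of_pos (by positivity)]
        field_simp
      refine ⟨by positivity, interior_subset (hball₂ ?_)⟩
      simp only [Metric.mem_ball, dist_eq_norm, hn]
      linarith
    have := le_csSup hbdd hmem
    have hq : 0 < r₂/(2*‖x‖) := by positivity
    linarith
  · intro t ht
    constructor
    · intro htF
      exact le_csSup hbdd ⟨ht, htF⟩
    · intro htT
      have hcomb : (1 - t/T) • (0:EuclideanSpace ℝ (Fin n)) + (t/T) • (T • x) ∈ F := by
        apply hconv (interior_subset h0) hTA.2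
        · have : t/T ≤ 1 := by rw [div_le_one hT0]; exact htT
          linarith
        · positivity
        · ring
      have heq : (1 - t/T) • (0:EuclideanSpace ℝ (Fin n)) + (t/T) • (T • x) = t • x := by
        rw [smul_zero, zero_add, smul_smul, div_mul_cancel₀ _ hT0.ne']
      rwa [heq] at hcomb

set_option maxHeartbeats 2000000

/-- Locality of the weighted floating body at a regular boundary point. -/
theorem stmt4 {n : ℕ} (K : Set (EuclideanSpace ℝ (Fin n)))
    (hKcomp : IsCompact K) (hKconv : Convex ℝ K) (h0K : 0 ∈ interior K)
    (μ : Measure (EuclideanSpace ℝ (Fin n))) [IsFiniteMeasure μ]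
    (hμsupp : μ (interior K)ᶜ = 0)
    (hac₁ : μ.restrict (interior K) ≪ volume.restrict (interior K))
    (hac₂ : volume.restrict (interior K) ≪ μ.restrict (interior K))
    (x N : EuclideanSpace ℝ (Fin n))
    (hx : x ∈ frontier K) (hN : ‖N‖ = 1)
    (hNsupp : ∀ y ∈ K, ⟪y, N⟫_ℝ ≤ ⟪x, N⟫_ℝ)
    (hNuniq : ∀ v : EuclideanSpace ℝ (Fin n), ‖v‖ = 1 →
      (∀ y ∈ K, ⟪y, v⟫_ℝ ≤ ⟪x, v⟫_ℝ) → v = N)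
    (s : ℝ → EuclideanSpace ℝ (Fin n) → ℝ)
    (hs : ∀ δ ∈ Set.Ioo (0 : ℝ) ((μ K).toReal ^ ((2 : ℝ) / (n + 1))),
      ∀ v : EuclideanSpace ℝ (Fin n), ‖v‖ = 1 →
        μ (K ∩ halfGe v (suppFn K v - s δ v)) = ENNReal.ofReal (δ ^ (((n : ℝ) + 1) / 2))) :
    ∀ ε > (0 : ℝ), ∃ δε > (0 : ℝ), δε ≤ (μ K).toReal ^ ((2 : ℝ) / (n + 1)) ∧
      ∀ δ ∈ Set.Ioo (0 : ℝ) δε,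
        0 ∈ interior (floatBody μ K δ) ∧
        ∃ xδ : EuclideanSpace ℝ (Fin n),
          xδ ∈ frontier (floatBody μ K δ) ∩ ray x ∧
          (∀ y ∈ frontier (floatBody μ K δ) ∩ ray x, y = xδ) ∧
          segment ℝ 0 xδ = floatBody μ K δ ∩ ray x ∧
          segment ℝ 0 xδ =
            (⋂ v ∈ {v : EuclideanSpace ℝ (Fin n) | ‖v‖ = 1 ∧ sphDist v N < ε},
              halfLe v (suppFn K v - s δ v)) ∩ ray x := by
  intro ε hε
  have hKcl : IsClosed K := hKcomp.isClosed
  have hKne : K.Nonempty := ⟨0, interior_subset h0K⟩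
  have hxK : x ∈ K := hKcl.closure_eq ▸ frontier_subset_closure hx
  have hxne : x ≠ 0 := by
    intro h
    rw [hKcl.frontier_eq] at hx
    exact hx.2 (h ▸ h0K)
  have hxnorm : 0 < ‖x‖ := norm_pos_iff.2 hxne
  -- a ball inside the interior
  obtain ⟨ρ₀, hρ₀, hball₀⟩ := Metric.isOpen_iff.1 isOpen_interior 0 h0K
  set ρ : ℝ := ρ₀/2 with hρdef
  have hρpos : 0 < ρ := half_pos hρ₀
  have hρK : Metric.closedBall 0 ρ ⊆ interior K :=
    fun y hy => hball₀ (lt_of_le_of_lt (Metric.mem_closedBall.1 hy) (by linarith))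
  have hsupp_ge_ρ : ∀ v : EuclideanSpace ℝ (Fin n), ‖v‖ = 1 → ρ ≤ suppFn K v := by
    intro v hv
    have hmem : ρ • v ∈ K := interior_subset (hρK (by
      simp [Metric.mem_closedBall, dist_eq_norm, norm_smul, hv, abs_of_pos hρpos]))
    have := suppFn_ge hKcomp hmem v
    rwa [real_inner_smul_left, real_inner_self_eq_norm_sq, hv, one_pow, mul_one] at this
  -- the gap on the far set
  have hgap : ∀ v : EuclideanSpace ℝ (Fin n), ‖v‖ = 1 → ε ≤ sphDist v N →
      ⟪x, v⟫_ℝ < suppFn K v := by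
    intro v hv hdist
    by_contra h
    push_neg at h
    have hsupp : ∀ y ∈ K, ⟪y, v⟫_ℝ ≤ ⟪x, v⟫_ℝ :=
      fun y hy => le_trans (suppFn_ge hKcomp hy v) h
    have hvN : v = N := hNuniq v hv hsupp
    rw [hvN] at hdist
    have : sphDist N N = 0 := by
      rw [sphDist, real_inner_self_eq_norm_sq, hN, one_pow, Real.arccos_one]
    linarith
  -- uniform gap η on the far set
  obtain ⟨η, hηpos, hη⟩ : ∃ η > (0:ℝ), ∀ v : EuclideanSpace ℝ (Fin n), ‖v‖ = 1 →
      ε ≤ sphDist v N → ⟪x, v⟫_ℝ + η ≤ suppFn K v := by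
    set S : Set (EuclideanSpace ℝ (Fin n)) := {v | ‖v‖ = 1 ∧ ε ≤ sphDist v N} with hSdef
    have hScomp : IsCompact S := by
      have hSeq : S = Metric.sphere 0 1 ∩ {v | ε ≤ sphDist v N} := by
        ext v
        simp [hSdef, mem_sphere_zero_iff_norm, Set.mem_inter_iff]
      rw [hSeq]
      exact (isCompact_sphere 0 1).inter_right
        (isClosed_le continuous_const
          (Real.continuous_arccos.comp (Continuous.inner continuous_id continuous_const)))
    rcases S.eq_empty_or_nonempty with hSe | hSne
    · exact ⟨1, one_pos, fun v hv hd => absurd (show v ∈ S from ⟨hv, hd⟩) (hSe ▸ Set.notMem_empty v)⟩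
    · have hcont : ContinuousOn (fun v => suppFn K v - ⟪x, v⟫_ℝ) S :=
        ((continuous_suppFn hKcomp hKne).sub
          (Continuous.inner continuous_const continuous_id)).continuousOn
      obtain ⟨v₀, hv₀S, hmin'⟩ := hScomp.exists_isMinOn hSne hcont
      have hmin : ∀ v ∈ S, suppFn K v₀ - ⟪x, v₀⟫_ℝ ≤ suppFn K v - ⟪x, v⟫_ℝ :=
        fun v hv => hmin' hv
      refine ⟨suppFn K v₀ - ⟪x, v₀⟫_ℝ, by have := hgap v₀ hv₀S.1 hv₀S.2; linarith, ?_⟩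
      intro v hv hd
      have := hmin v ⟨hv, hd⟩
      linarith
  set σ : ℝ := min (ρ/2) η with hσdef
  have hσpos : 0 < σ := lt_min (half_pos hρpos) hηpos
  have hσρ : σ ≤ ρ/2 := min_le_left _ _
  have hσfar : ∀ v : EuclideanSpace ℝ (Fin n), ‖v‖ = 1 → ε ≤ sphDist v N →
      ⟪x, v⟫_ℝ + σ ≤ suppFn K v := by
    intro v hv hd
    have := hη v hv hd
    have := min_le_right (ρ/2) η
    linarith
  -- uniform cap bound
  have hsph : (Metric.sphere (0:EuclideanSpace ℝ (Fin n)) 1).Nonempty :=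
    ⟨N, mem_sphere_zero_iff_norm.2 hN⟩
  obtain ⟨m, hm0, hm⟩ := exists_unif_cap_bound hKcomp hKconv h0K hac₂ hsph hσpos
  have hmtop : m ≠ ⊤ := by
    intro h
    exact (measure_ne_top μ _) (top_le_iff.1 (h ▸ hm N hN))
  have hM : 0 < m.toReal := ENNReal.toReal_pos hm0.ne' hmtop
  -- μ K is positive
  have hμKpos : 0 < μ K := by
    have h1 : Metric.ball (0:EuclideanSpace ℝ (Fin n)) ρ ⊆ interior K :=
      fun y hy => hρK (Metric.ball_subset_closedBall hy)
    calc (0:ℝ≥0∞) < μ (Metric.ball 0 ρ) :=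
          mu_pos_of_open hac₂ Metric.isOpen_ball ⟨0, Metric.mem_ball_self hρpos⟩ h1
      _ ≤ μ K := measure_mono (fun y hy => interior_subset (h1 hy))
  have hμKtoReal : 0 < (μ K).toReal := ENNReal.toReal_pos hμKpos.ne' (measure_ne_top μ K)
  -- exponents
  have hn1 : (0:ℝ) < (n:ℝ) + 1 := by positivity
  set e₁ : ℝ := (2:ℝ)/((n:ℝ)+1) with he₁
  set e₂ : ℝ := ((n:ℝ)+1)/2 with he₂
  have he₁pos : 0 < e₁ := by positivity
  have he₂pos : 0 < e₂ := by positivity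
  have he₁₂ : e₁ * e₂ = 1 := by
    rw [he₁, he₂]
    field_simp
  set P : ℝ := (μ K).toReal ^ e₁ with hP
  have hPpos : 0 < P := Real.rpow_pos_of_pos hμKtoReal _
  set δε : ℝ := min P ((m.toReal/2) ^ e₁) with hδε
  have hδεpos : 0 < δε := lt_min hPpos (Real.rpow_pos_of_pos (by linarith) _)
  refine ⟨δε, hδεpos, min_le_left _ _, ?_⟩
  rintro δ ⟨hδ0, hδδε⟩
  have hδP : δ ∈ Set.Ioo 0 P := ⟨hδ0, lt_of_lt_of_le hδδε (min_le_left _ _)⟩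
  set D : ℝ≥0∞ := ENNReal.ofReal (δ ^ e₂) with hD
  have hD0 : 0 < D := ENNReal.ofReal_pos.2 (Real.rpow_pos_of_pos hδ0 _)
  have hDm : D < m := by
    rw [hD, ENNReal.ofReal_lt_iff_lt_toReal (Real.rpow_pos_of_pos hδ0 _).le hmtop]
    calc δ ^ e₂ < δε ^ e₂ := Real.rpow_lt_rpow hδ0.le hδδε he₂pos
      _ ≤ ((m.toReal/2) ^ e₁) ^ e₂ :=
          Real.rpow_le_rpow hδεpos.le (min_le_right _ _) he₂pos.le
      _ = m.toReal/2 := by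
          rw [← Real.rpow_mul (by positivity), he₁₂, Real.rpow_one]
      _ < m.toReal := by linarith
  have hsv : ∀ v : EuclideanSpace ℝ (Fin n), ‖v‖ = 1 →
      μ (K ∩ halfGe v (suppFn K v - s δ v)) = D := fun v hv => hs δ hδP v hv
  have hs_pos : ∀ v : EuclideanSpace ℝ (Fin n), ‖v‖ = 1 → 0 < s δ v := by
    intro v hv
    by_contra h
    push_neg at h
    have hsub : K ∩ halfGe v (suppFn K v - s δ v) ⊆ (interior K)ᶜ := by
      rintro y ⟨hyK, hyge⟩ hyint
      have h1 := inner_lt_suppFn_of_interior hKcomp hv hyint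
      have h2 : suppFn K v - s δ v ≤ ⟪y, v⟫_ℝ := hyge
      linarith
    have : D ≤ 0 := by
      rw [← hsv v hv, ← hμsupp]
      exact measure_mono hsub
    exact hD0.not_ge this
  have hs_lt : ∀ v : EuclideanSpace ℝ (Fin n), ‖v‖ = 1 → s δ v < σ := by
    intro v hv
    by_contra h
    push_neg at h
    have hsub : halfGe v (suppFn K v - σ) ⊆ halfGe v (suppFn K v - s δ v) := by
      intro y hy
      have hy' : suppFn K v - σ ≤ ⟪y, v⟫_ℝ := hy
      show suppFn K v - s δ v ≤ ⟪y, v⟫_ℝ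
      linarith
    have hmle : m ≤ D := by
      rw [← hsv v hv]
      exact le_trans (hm v hv) (measure_mono (Set.inter_subset_inter_right K hsub))
    exact (lt_of_le_of_lt hmle hDm).ne rfl
  -- key monotonicity: every admissible cut is no deeper than the canonical one
  have hkey : ∀ (v : EuclideanSpace ℝ (Fin n)) (c : ℝ), ‖v‖ = 1 →
      μ (K ∩ halfGe v c) ≤ D → suppFn K v - s δ v ≤ c := by
    intro v c hv hc
    by_contra h
    push_neg at h
    set c' : ℝ := suppFn K v - s δ v with hc'
    have hρ2c' : ρ/2 ≤ c' := by
      have h1 := hsupp_ge_ρ v hv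
      have h2 := hs_lt v hv
      rw [hc']
      linarith
    have hc'lt : c' < suppFn K v := by
      have := hs_pos v hv
      rw [hc']
      linarith
    obtain ⟨w₁, hw₁, hw₁gt⟩ := exists_interior_inner_gt hKcomp hKconv h0K hc'lt
    set θ : ℝ := (max c 0 + c')/2 with hθ
    have hmax0 : (0:ℝ) ≤ max c 0 := le_max_right _ _
    have hmaxc' : max c 0 < c' := max_lt h (by linarith)
    have hθc : c < θ := by
      have := le_max_left c 0
      rw [hθ]
      linarith
    have hθ0 : 0 ≤ θ := by rw [hθ]; linarith
    have hθc' : θ < c' := by rw [hθ]; linarith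
    have hw₁pos : 0 < ⟪w₁, v⟫_ℝ := lt_of_le_of_lt hθ0 (lt_trans hθc' hw₁gt)
    set a : ℝ := θ / ⟪w₁, v⟫_ℝ with ha
    have ha0 : 0 ≤ a := by positivity
    have ha1 : a < 1 := by
      rw [ha, div_lt_one hw₁pos]
      exact lt_trans hθc' hw₁gt
    have hwint : a • w₁ ∈ interior K := by
      have := hKconv.combo_interior_self_mem_interior h0K (interior_subset hw₁)
        (show (0:ℝ) < 1 - a by linarith) ha0 (by ring)
      simpa using this
    have hwval : ⟪a • w₁, v⟫_ℝ = θ := by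
      rw [real_inner_smul_left, ha, div_mul_cancel₀ _ hw₁pos.ne']
    set U : Set (EuclideanSpace ℝ (Fin n)) :=
      interior K ∩ (fun y => ⟪y, v⟫_ℝ) ⁻¹' (Set.Ioo c c') with hU
    have hUopen : IsOpen U := isOpen_interior.inter (isOpen_Ioo.preimage (continuous_innerR v))
    have hUne : U.Nonempty := ⟨a • w₁, hwint, by
      simp only [Set.mem_preimage, Set.mem_Ioo, hwval]
      exact ⟨hθc, hθc'⟩⟩
    have hμU : 0 < μ U := mu_pos_of_open hac₂ hUopen hUne Set.inter_subset_left
    have hsub : (K ∩ halfGe v c') ∪ U ⊆ K ∩ halfGe v c := by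
      rintro y (⟨hyK, hyc'⟩ | ⟨hyint, hyIoo⟩)
      · exact ⟨hyK, le_trans h.le hyc'⟩
      · exact ⟨interior_subset hyint, (Set.mem_Ioo.1 hyIoo).1.le⟩
    have hdisj : Disjoint (K ∩ halfGe v c') U := by
      rw [Set.disjoint_left]
      rintro y ⟨_, hy1⟩ ⟨_, hy2⟩
      have h1 : c' ≤ ⟪y, v⟫_ℝ := hy1
      have h2 := (Set.mem_Ioo.1 hy2).2
      linarith
    have hmeas : μ (K ∩ halfGe v c') + μ U ≤ μ (K ∩ halfGe v c) := by
      rw [← measure_union hdisj hUopen.measurableSet]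
      exact measure_mono hsub
    rw [hsv v hv] at hmeas
    have hfin : D + μ U ≤ D + 0 := by
      rw [add_zero]
      exact le_trans hmeas hc
    have : μ U ≤ 0 := (ENNReal.add_le_add_iff_left ENNReal.ofReal_ne_top).1 hfin
    exact hμU.not_ge this
  -- membership characterisation of the floating body
  have hmemF : ∀ y : EuclideanSpace ℝ (Fin n), y ∈ floatBody μ K δ ↔
      ∀ v : EuclideanSpace ℝ (Fin n), ‖v‖ = 1 → ⟪y, v⟫_ℝ ≤ suppFn K v - s δ v := by
    intro y
    constructor
    · intro hy v hv
      exact hy (halfLe v (suppFn K v - s δ v)) ⟨v, _, hv, le_of_eq (hsv v hv), rfl⟩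
    · rintro h H ⟨v, c, hv, hc, rfl⟩
      exact le_trans (h v hv) (hkey v c hv hc)
  -- 0 in the interior of the floating body
  have hballF : Metric.ball 0 (ρ/2) ⊆ floatBody μ K δ := by
    intro y hy
    rw [hmemF]
    intro v hv
    have h1 : ⟪y, v⟫_ℝ ≤ ‖y‖ := by
      have := real_inner_le_norm y v
      rwa [hv, mul_one] at this
    have h2 : ‖y‖ < ρ/2 := by
      simpa [dist_eq_norm] using Metric.mem_ball.1 hy
    have h3 := hsupp_ge_ρ v hv
    have h4 := hs_lt v hv
    linarith
  have h0F : 0 ∈ interior (floatBody μ K δ) :=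
    interior_maximal hballF Metric.isOpen_ball (Metric.mem_ball_self (half_pos hρpos))
  refine ⟨h0F, ?_⟩
  have hFclosed : IsClosed (floatBody μ K δ) := by
    apply isClosed_sInter
    rintro H ⟨v, c, hv, hc, rfl⟩
    exact isClosed_halfLe v c
  have hFconv : Convex ℝ (floatBody μ K δ) := by
    apply convex_sInter
    rintro H ⟨v, c, hv, hc, rfl⟩
    exact convex_halfLe v c
  -- boundedness of the ray parameter set
  have hbdd : BddAbove {t : ℝ | 0 ≤ t ∧ t • x ∈ floatBody μ K δ} := by
    set u : EuclideanSpace ℝ (Fin n) := ‖x‖⁻¹ • x with hu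
    have hu1 : ‖u‖ = 1 := by
      rw [hu, norm_smul, norm_inv, norm_norm, inv_mul_cancel₀ hxnorm.ne']
    have hxu : ⟪x, u⟫_ℝ = ‖x‖ := by
      rw [hu, real_inner_smul_right, real_inner_self_eq_norm_sq]
      field_simp
    refine ⟨(suppFn K u)/‖x‖, ?_⟩
    rintro t ⟨ht0, htF⟩
    have := (hmemF _).1 htF u hu1
    rw [real_inner_smul_left, hxu] at this
    rw [le_div_iff₀ hxnorm]
    have := hs_pos u hu1
    linarith
  obtain ⟨T, hT0, hTF, hTnotint, hTiff⟩ := exists_ray_param hFclosed hFconv h0F hxne hbdd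
  have hfr : T • x ∈ frontier (floatBody μ K δ) := by
    rw [hFclosed.frontier_eq]
    exact ⟨hTF, hTnotint⟩
  -- the segment equality with the floating body
  have hseg : segment ℝ 0 (T • x) = floatBody μ K δ ∩ ray x := by
    ext y
    rw [mem_segment_zero]
    constructor
    · rintro ⟨a, ha0, ha1, rfl⟩
      constructor
      · rw [smul_smul]
        refine (hTiff (a*T) (by positivity)).2 ?_
        nlinarith
      · exact ⟨a*T, by positivity, by rw [smul_smul]⟩
    · rintro ⟨hyF, ⟨t, ht0, rfl⟩⟩
      have htT := (hTiff t ht0).1 hyF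
      refine ⟨t/T, by positivity, by rw [div_le_one hT0]; exact htT, ?_⟩
      rw [smul_smul, div_mul_cancel₀ _ hT0.ne']
  refine ⟨T • x, ⟨hfr, ⟨T, hT0.le, rfl⟩⟩, ?_, hseg, ?_⟩
  · -- uniqueness on the ray
    rintro y ⟨hyfr, ⟨t, ht0, rfl⟩⟩
    rw [hFclosed.frontier_eq] at hyfr
    obtain ⟨hyF, hynotint⟩ := hyfr
    have htT : t ≤ T := (hTiff t ht0).1 hyF
    rcases eq_or_lt_of_le htT with h | h
    · rw [h]
    · exfalso
      apply hynotint
      have hcomb : (1 - t/T) • (0:EuclideanSpace ℝ (Fin n)) + (t/T) • (T • x) ∈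
          interior (floatBody μ K δ) := by
        apply hFconv.combo_interior_self_mem_interior h0F hTF
        · have : t/T < 1 := by rw [div_lt_one hT0]; exact h
          linarith
        · positivity
        · ring
      have heq : (1 - t/T) • (0:EuclideanSpace ℝ (Fin n)) + (t/T) • (T • x) = t • x := by
        rw [smul_zero, zero_add, smul_smul, div_mul_cancel₀ _ hT0.ne']
      rwa [heq] at hcomb
  · -- the local description
    rw [hseg]
    apply Set.Subset.antisymm
    · rintro y ⟨hyF, hyray⟩
      exact ⟨Set.mem_iInter₂.2 fun v hv => (hmemF y).1 hyF v hv.1, hyray⟩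
    · rintro y ⟨hyL, ⟨t, ht0, rfl⟩⟩
      have hNnear : N ∈ {v : EuclideanSpace ℝ (Fin n) | ‖v‖ = 1 ∧ sphDist v N < ε} := by
        refine ⟨hN, ?_⟩
        rw [sphDist, real_inner_self_eq_norm_sq, hN, one_pow, Real.arccos_one]
        exact hε
      have hyN : ⟪t • x, N⟫_ℝ ≤ suppFn K N - s δ N := Set.mem_iInter₂.1 hyL N hNnear
      have hxN : ⟪x, N⟫_ℝ = suppFn K N :=
        le_antisymm (suppFn_ge hKcomp hxK N) (suppFn_le_s4 hKne hNsupp)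
      have hxNρ : ρ ≤ ⟪x, N⟫_ℝ := by rw [hxN]; exact hsupp_ge_ρ N hN
      have hsN := hs_pos N hN
      rw [real_inner_smul_left, ← hxN] at hyN
      have ht1 : t ≤ 1 := by nlinarith
      have htF : t • x ∈ floatBody μ K δ := by
        rw [hmemF]
        intro v hv
        rw [real_inner_smul_left]
        rcases lt_or_ge (sphDist v N) ε with hnear | hfar
        · have h1 : ⟪t • x, v⟫_ℝ ≤ suppFn K v - s δ v := Set.mem_iInter₂.1 hyL v ⟨hv, hnear⟩
          rwa [real_inner_smul_left] at h1
        · have h2 := hσfar v hv hfar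
          have h3 := hs_lt v hv
          have h4 := hsupp_ge_ρ v hv
          rcases le_or_gt ⟪x, v⟫_ℝ 0 with hxv | hxv
          · have h5 : t * ⟪x, v⟫_ℝ ≤ 0 := mul_nonpos_of_nonneg_of_nonpos ht0 hxv
            linarith
          · nlinarith
      exact ⟨htF, ⟨t, ht0, rfl⟩⟩
end
end

section
/- Let (K_i) be a sequence of convex bodies in ℝ^n with non-empty interior converging in the Hausdorff distance to a convex body K with non-empty interior. Let u ∈ S^{n-1} be such that the exposed face F(K,u) = K ∩ {y : y·u = h_K(u)} is a single point {x} (i.e. x is an exposed point of K). Then the exposed faces F(K_i,u) = K_i ∩ {y : y·u = h_{K_i}(u)} converge to {x}: sup{‖y − x‖ : y ∈ F(K_i,u)} → 0 as i → ∞. -/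
open MeasureTheory Filter
open scoped InnerProductSpace ENNReal Topology

noncomputable section

lemma contInner {n : ℕ} (u : EuclideanSpace ℝ (Fin n)) :
    Continuous fun z : EuclideanSpace ℝ (Fin n) => ⟪z, u⟫_ℝ :=
  continuous_id.inner continuous_const

lemma le_suppFn {n : ℕ} {K : Set (EuclideanSpace ℝ (Fin n))} (hK : IsCompact K)
    (u : EuclideanSpace ℝ (Fin n)) {z} (hz : z ∈ K) : ⟪z, u⟫_ℝ ≤ suppFn K u :=
  le_csSup ((hK.image (contInner u)).bddAbove) ⟨z, hz, rfl⟩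

lemma exists_max {n : ℕ} {K : Set (EuclideanSpace ℝ (Fin n))} (hK : IsCompact K)
    (hne : K.Nonempty) (u : EuclideanSpace ℝ (Fin n)) :
    ∃ w ∈ K, ⟪w, u⟫_ℝ = suppFn K u := by
  obtain ⟨w, hwK, hw⟩ := hK.exists_isMaxOn hne ((contInner u).continuousOn)
  exact ⟨w, hwK, le_antisymm (le_suppFn hK u hwK)
    (csSup_le (hne.image _) (by rintro r ⟨z, hz, rfl⟩; exact hw hz))⟩

lemma inner_diff_le {n : ℕ} (u y z : EuclideanSpace ℝ (Fin n)) (hu : ‖u‖ = 1) :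
    ⟪y, u⟫_ℝ - ⟪z, u⟫_ℝ ≤ ‖y - z‖ := by
  rw [← inner_sub_left]
  calc ⟪y - z, u⟫_ℝ ≤ ‖y - z‖ * ‖u‖ := real_inner_le_norm _ _
  _ = ‖y - z‖ := by rw [hu, mul_one]

lemma key {n : ℕ} {Klim : Set (EuclideanSpace ℝ (Fin n))} (hLcomp : IsCompact Klim)
    (u x : EuclideanSpace ℝ (Fin n))
    (hface : Klim ∩ {y | ⟪y, u⟫_ℝ = suppFn Klim u} = {x}) {ε : ℝ} (hε : 0 < ε) :
    ∃ η > 0, ∀ z ∈ Klim, suppFn Klim u - η ≤ ⟪z, u⟫_ℝ → ‖z - x‖ < ε := by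
  set C : Set (EuclideanSpace ℝ (Fin n)) := Klim ∩ {z | ε ≤ ‖z - x‖} with hCdef
  have hCclosed : IsClosed {z : EuclideanSpace ℝ (Fin n) | ε ≤ ‖z - x‖} :=
    isClosed_le continuous_const ((continuous_id.sub continuous_const).norm)
  have hC : IsCompact C := hLcomp.inter_right hCclosed
  rcases C.eq_empty_or_nonempty with hCe | hCne
  · refine ⟨1, one_pos, fun z hz _ => ?_⟩
    by_contra h
    have hzC : z ∈ C := ⟨hz, not_lt.mp h⟩
    rw [hCe] at hzC
    exact hzC
  · obtain ⟨z₀, hz₀C, hmin⟩ := hC.exists_isMinOn hCne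
      (Continuous.continuousOn (by exact continuous_const.sub (continuous_id.inner continuous_const) :
        Continuous fun z : EuclideanSpace ℝ (Fin n) => suppFn Klim u - ⟪z, u⟫_ℝ))
    have hz₀K : z₀ ∈ Klim := hz₀C.1
    have hpos : 0 < suppFn Klim u - ⟪z₀, u⟫_ℝ := by
      rcases lt_or_eq_of_le (le_suppFn hLcomp u hz₀K) with h | h
      · linarith
      · exfalso
        have hx : z₀ ∈ Klim ∩ {y | ⟪y, u⟫_ℝ = suppFn Klim u} := ⟨hz₀K, h⟩
        rw [hface, Set.mem_singleton_iff] at hx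
        have h2 : ε ≤ ‖z₀ - x‖ := hz₀C.2
        rw [hx, sub_self, norm_zero] at h2
        linarith
    refine ⟨(suppFn Klim u - ⟪z₀, u⟫_ℝ) / 2, by linarith, fun z hz hη => ?_⟩
    by_contra h
    have hzC : z ∈ C := ⟨hz, not_lt.mp h⟩
    have := hmin hzC
    simp only [Set.mem_setOf_eq] at this
    linarith

/-- Convergence of exposed faces. -/
theorem stmt5 {n : ℕ} (K : ℕ → Set (EuclideanSpace ℝ (Fin n)))
    (Klim : Set (EuclideanSpace ℝ (Fin n)))
    (hKcomp : ∀ i, IsCompact (K i)) (hKconv : ∀ i, Convex ℝ (K i))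
    (hKint : ∀ i, (interior (K i)).Nonempty)
    (hLcomp : IsCompact Klim) (hLconv : Convex ℝ Klim) (hLint : (interior Klim).Nonempty)
    (hconv : Tendsto (fun i => Metric.hausdorffDist (K i) Klim) atTop (𝓝 0))
    (u x : EuclideanSpace ℝ (Fin n)) (hu : ‖u‖ = 1)
    (hface : Klim ∩ {y | ⟪y, u⟫_ℝ = suppFn Klim u} = {x}) :
    Tendsto (fun i =>
        sSup ((fun y => ‖y - x‖) '' (K i ∩ {y | ⟪y, u⟫_ℝ = suppFn (K i) u})))
      atTop (𝓝 0) := by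
  have hKne : ∀ i, (K i).Nonempty := fun i => (hKint i).mono interior_subset
  have hLne : Klim.Nonempty := hLint.mono interior_subset
  have hFne : ∀ i, (K i ∩ {y | ⟪y, u⟫_ℝ = suppFn (K i) u}).Nonempty := fun i => by
    obtain ⟨w, hw, hw2⟩ := exists_max (hKcomp i) (hKne i) u
    exact ⟨w, hw, hw2⟩
  rw [Metric.tendsto_atTop]
  intro ε hε
  obtain ⟨η, hη, hkey⟩ := key hLcomp u x hface (by positivity : (0:ℝ) < ε / 4)
  set δ : ℝ := min (η / 3) (ε / 4) with hδdef
  have hδ : 0 < δ := lt_min (by positivity) (by positivity)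
  rw [Metric.tendsto_atTop] at hconv
  obtain ⟨N, hN⟩ := hconv δ hδ
  refine ⟨N, fun i hi => ?_⟩
  have hd : Metric.hausdorffDist (K i) Klim < δ := by
    have := hN i hi
    rw [Real.dist_eq, sub_zero, abs_of_nonneg Metric.hausdorffDist_nonneg] at this
    exact this
  have hEdist : EMetric.hausdorffEdist (K i) Klim ≠ ⊤ :=
    Metric.hausdorffEdist_ne_top_of_nonempty_of_bounded (hKne i) hLne
      (hKcomp i).isBounded hLcomp.isBounded
  -- support function comparison: suppFn Klim u ≤ suppFn (K i) u + δ
  have hsupp : suppFn Klim u ≤ suppFn (K i) u + δ := by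
    obtain ⟨w, hwK, hw⟩ := exists_max hLcomp hLne u
    obtain ⟨y', hy'K, hy'⟩ := (hKcomp i).exists_infDist_eq_dist (hKne i) w
    have h1 : dist w y' < δ := by
      rw [← hy']
      have hEd' : EMetric.hausdorffEdist Klim (K i) ≠ ⊤ := by
        rw [EMetric.hausdorffEdist, EMetric.hausdorffEdist_comm]; exact hEdist
      have := Metric.infDist_le_hausdorffDist_of_mem hwK hEd'
      rw [Metric.hausdorffDist_comm] at this
      exact lt_of_le_of_lt this hd
    have h2 : ⟪w, u⟫_ℝ - ⟪y', u⟫_ℝ ≤ ‖w - y'‖ := inner_diff_le u w y' hu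
    have h3 : ⟪y', u⟫_ℝ ≤ suppFn (K i) u := le_suppFn (hKcomp i) u hy'K
    rw [← hw]
    have : ‖w - y'‖ < δ := by rwa [← dist_eq_norm]
    linarith
  -- every point of the face of K i is within ε/2 of x
  have hbound : ∀ y ∈ K i ∩ {y | ⟪y, u⟫_ℝ = suppFn (K i) u}, ‖y - x‖ ≤ ε / 2 := by
    rintro y ⟨hyK, hyF⟩
    obtain ⟨z, hzK, hz⟩ := hLcomp.exists_infDist_eq_dist hLne y
    have h1 : dist y z < δ := by
      rw [← hz]
      exact lt_of_le_of_lt (Metric.infDist_le_hausdorffDist_of_mem hyK hEdist) hd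
    have h1' : ‖y - z‖ < δ := by rwa [← dist_eq_norm]
    have h2 : ⟪y, u⟫_ℝ - ⟪z, u⟫_ℝ ≤ ‖y - z‖ := inner_diff_le u y z hu
    have hyF' : ⟪y, u⟫_ℝ = suppFn (K i) u := hyF
    have h3 : suppFn Klim u - η ≤ ⟪z, u⟫_ℝ := by
      have hδη : δ ≤ η / 3 := min_le_left _ _
      linarith
    have h4 : ‖z - x‖ < ε / 4 := hkey z hzK h3
    calc ‖y - x‖ = ‖(y - z) + (z - x)‖ := by rw [sub_add_sub_cancel]
    _ ≤ ‖y - z‖ + ‖z - x‖ := norm_add_le _ _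
    _ ≤ δ + ε / 4 := by linarith
    _ ≤ ε / 4 + ε / 4 := by have := min_le_right (η / 3) (ε / 4); linarith
    _ = ε / 2 := by ring
  set s := sSup ((fun y => ‖y - x‖) '' (K i ∩ {y | ⟪y, u⟫_ℝ = suppFn (K i) u})) with hs
  have himgne := (hFne i).image (fun y => ‖y - x‖)
  have hub : ∀ r ∈ (fun y => ‖y - x‖) '' (K i ∩ {y | ⟪y, u⟫_ℝ = suppFn (K i) u}), r ≤ ε / 2 := by
    rintro r ⟨y, hy, rfl⟩; exact hbound y hy
  have hsle : s ≤ ε / 2 := csSup_le himgne hub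
  have hsge : 0 ≤ s := by
    obtain ⟨r, hr⟩ := himgne
    refine le_trans ?_ (le_csSup ⟨ε / 2, hub⟩ hr)
    obtain ⟨y, _, rfl⟩ := hr
    exact norm_nonneg _
  rw [Real.dist_eq, sub_zero, abs_of_nonneg hsge]
  linarith
end
end

section
/- Let f_i : S^{n-1} → (0,∞) be a sequence of positive continuous functions converging uniformly to a positive continuous function f, and let x be a regular boundary point of the Wulff shape [f] with unique outer unit normal N_x. For each i let x_i be the unique point of pos{x} ∩ bd [f_i]. Then the spherical images σ([f_i], x_i) converge to the singleton {N_x} in the spherical Hausdorff distance; equivalently, sup{d_s(v, N_x) : v ∈ σ([f_i], x_i)} → 0 as i → ∞. -/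
open MeasureTheory Filter
open scoped InnerProductSpace ENNReal Topology

noncomputable section

/-- The spherical image `σ(K,x)`: the set of outer unit normal vectors of `K` at `x`. -/
def sphImg {n : ℕ} (K : Set (EuclideanSpace ℝ (Fin n))) (x : EuclideanSpace ℝ (Fin n)) :
    Set (EuclideanSpace ℝ (Fin n)) :=
  {v | ‖v‖ = 1 ∧ ∀ y ∈ K, ⟪y, v⟫_ℝ ≤ ⟪x, v⟫_ℝ}

lemma lemA {t c δ m : ℝ} (hm : 0 < m) (hcm : m ≤ c) (hδ : 0 ≤ δ)
    (h : t * c < c + δ) : t < 1 + δ / m := by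
  have hc : 0 < c := lt_of_lt_of_le hm hcm
  have h1 : t < (c + δ) / c := (lt_div_iff₀ hc).2 (by linarith)
  have h2 : (c + δ) / c = 1 + δ / c := by field_simp
  have h3 : δ / c ≤ δ / m := div_le_div_of_nonneg_left hδ hm hcm
  linarith [h2 ▸ h1]

lemma lemB {t p q δ m : ℝ} (hm : 0 < m) (hmq : m ≤ q) (hpq : p ≤ q) (ht : 0 ≤ t)
    (hkey : q - δ ≤ t * p) (hδ : 0 ≤ δ) : 1 - δ / m ≤ t := by
  have hq : 0 < q := lt_of_lt_of_le hm hmq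
  have h7 : t * p ≤ t * q := mul_le_mul_of_nonneg_left hpq ht
  have h8 : (1 - δ / m) * q ≤ q - δ := by
    have e : δ / m * m = δ := div_mul_cancel₀ _ (ne_of_gt hm)
    have e2 : δ / m * m ≤ δ / m * q := mul_le_mul_of_nonneg_left hmq (div_nonneg hδ hm.le)
    nlinarith
  have h10 : (1 - δ / m) * q ≤ t * q := by linarith
  exact le_of_mul_le_mul_right h10 hq

lemma lemC {t p q δ m : ℝ} (hm : 0 < m) (hδm : δ ≤ m / 2) (hmq : m ≤ q)
    (hkey : q - δ ≤ t * p) (ht : 0 ≤ t) : 0 < p := by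
  by_contra hcon
  push_neg at hcon
  have : t * p ≤ 0 := mul_nonpos_of_nonneg_of_nonpos ht hcon
  linarith

lemma lemD {a q fz m r : ℝ} (haq : a ≤ q) (hmq : m ≤ q) (hr0 : 0 < r) (hr1 : r < 1)
    (hf : q - (1 - r) * m < fz) : r * a ≤ fz := by nlinarith

lemma mem_wulff_iff' {n : ℕ} {g : EuclideanSpace ℝ (Fin n) → ℝ} {y : EuclideanSpace ℝ (Fin n)} :
    y ∈ wulff g ↔ ∀ v : EuclideanSpace ℝ (Fin n), ‖v‖ = 1 → ⟪y, v⟫_ℝ ≤ g v := by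
  simp [wulff, halfLe]

lemma wulff_isClosed' {n : ℕ} (g : EuclideanSpace ℝ (Fin n) → ℝ) : IsClosed (wulff g) := by
  refine isClosed_biInter fun v _ => ?_
  exact isClosed_le (continuous_id.inner continuous_const) continuous_const

lemma exists_eq_of_frontier' {n : ℕ} (hn : 0 < n) {g : EuclideanSpace ℝ (Fin n) → ℝ}
    (hg : ContinuousOn g (Metric.sphere (0 : EuclideanSpace ℝ (Fin n)) 1))
    {y : EuclideanSpace ℝ (Fin n)} (hy : y ∈ frontier (wulff g)) :
    ∃ v, ‖v‖ = 1 ∧ g v ≤ ⟪y, v⟫_ℝ := by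
  by_contra h
  push_neg at h
  have hsne : (Metric.sphere (0 : EuclideanSpace ℝ (Fin n)) 1).Nonempty := by
    refine ⟨EuclideanSpace.single ⟨0, hn⟩ (1:ℝ), ?_⟩
    simp [EuclideanSpace.norm_single]
  have hcont : ContinuousOn (fun v => g v - ⟪y, v⟫_ℝ)
      (Metric.sphere (0 : EuclideanSpace ℝ (Fin n)) 1) :=
    hg.sub (Continuous.continuousOn (continuous_const.inner continuous_id))
  obtain ⟨v₀, hv₀s, hv₀⟩ := (isCompact_sphere (0 : EuclideanSpace ℝ (Fin n)) 1).exists_isMinOn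
    hsne hcont
  have hv₀n : ‖v₀‖ = 1 := mem_sphere_zero_iff_norm.mp hv₀s
  set m := g v₀ - ⟪y, v₀⟫_ℝ with hm
  have hmpos : 0 < m := sub_pos.2 (h v₀ hv₀n)
  have hball : Metric.ball y m ⊆ wulff g := by
    intro z hz
    rw [mem_wulff_iff']
    intro v hv
    have h1 : ⟪z - y, v⟫_ℝ ≤ ‖z - y‖ * ‖v‖ := real_inner_le_norm _ _
    have h2 : ‖z - y‖ < m := by rwa [Metric.mem_ball, dist_eq_norm] at hz
    have h3 : m ≤ g v - ⟪y, v⟫_ℝ := hv₀ (mem_sphere_zero_iff_norm.2 hv)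
    have h4 : ⟪z, v⟫_ℝ = ⟪y, v⟫_ℝ + ⟪z - y, v⟫_ℝ := by rw [inner_sub_left]; ring
    rw [hv] at h1
    nlinarith
  exact hy.2 (mem_interior.2 ⟨Metric.ball y m, hball, Metric.isOpen_ball,
    Metric.mem_ball_self hmpos⟩)

/-- Convergence of the spherical images (normal cones) for a convergent
sequence of Wulff shapes. -/
theorem stmt6 {n : ℕ} (f : ℕ → EuclideanSpace ℝ (Fin n) → ℝ)
    (flim : EuclideanSpace ℝ (Fin n) → ℝ)
    (hfc : ∀ i, ContinuousOn (f i) (Metric.sphere (0 : EuclideanSpace ℝ (Fin n)) 1))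
    (hfpos : ∀ i, ∀ v : EuclideanSpace ℝ (Fin n), ‖v‖ = 1 → 0 < f i v)
    (hflimc : ContinuousOn flim (Metric.sphere (0 : EuclideanSpace ℝ (Fin n)) 1))
    (hflimpos : ∀ v : EuclideanSpace ℝ (Fin n), ‖v‖ = 1 → 0 < flim v)
    (hunif : TendstoUniformlyOn f flim atTop
      (Metric.sphere (0 : EuclideanSpace ℝ (Fin n)) 1))
    (x N : EuclideanSpace ℝ (Fin n))
    (hx : x ∈ frontier (wulff flim)) (hN : ‖N‖ = 1)
    (hNsupp : ∀ y ∈ wulff flim, ⟪y, N⟫_ℝ ≤ ⟪x, N⟫_ℝ)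
    (hNuniq : ∀ v : EuclideanSpace ℝ (Fin n), ‖v‖ = 1 →
      (∀ y ∈ wulff flim, ⟪y, v⟫_ℝ ≤ ⟪x, v⟫_ℝ) → v = N)
    (xi : ℕ → EuclideanSpace ℝ (Fin n))
    (hxi : ∀ i, xi i ∈ ray x ∧ xi i ∈ frontier (wulff (f i))) :
    Tendsto (fun i => sSup ((fun v => sphDist v N) '' sphImg (wulff (f i)) (xi i)))
      atTop (𝓝 0) := by
  rcases Nat.eq_zero_or_pos n with hn | hn
  · subst hn
    haveI : Subsingleton (EuclideanSpace ℝ (Fin 0)) := ⟨fun a b => PiLp.ext fun i => i.elim0⟩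
    have hN0 : N = 0 := Subsingleton.elim N 0
    rw [hN0] at hN
    simp at hN
  have hxw : x ∈ wulff flim := by
    have := frontier_subset_closure hx
    rwa [(wulff_isClosed' flim).closure_eq] at this
  have hxiw : ∀ i, xi i ∈ wulff (f i) := fun i => by
    have := frontier_subset_closure (hxi i).2
    rwa [(wulff_isClosed' (f i)).closure_eq] at this
  have hsne : (Metric.sphere (0 : EuclideanSpace ℝ (Fin n)) 1).Nonempty :=
    ⟨EuclideanSpace.single ⟨0, hn⟩ (1:ℝ), by simp [EuclideanSpace.norm_single]⟩
  obtain ⟨v₀, hv₀s, hv₀⟩ := (isCompact_sphere (0 : EuclideanSpace ℝ (Fin n)) 1).exists_isMinOn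
    hsne hflimc
  set m := flim v₀ with hmdef
  have hm : 0 < m := hflimpos v₀ (mem_sphere_zero_iff_norm.mp hv₀s)
  have hmle : ∀ v : EuclideanSpace ℝ (Fin n), ‖v‖ = 1 → m ≤ flim v :=
    fun v hv => hv₀ (mem_sphere_zero_iff_norm.2 hv)
  -- ⟪x, N⟫ = flim N
  have hxN : ⟪x, N⟫_ℝ = flim N := by
    obtain ⟨u, hu1, hu2⟩ := exists_eq_of_frontier' hn hflimc hx
    have heq : ⟪x, u⟫_ℝ = flim u := le_antisymm (mem_wulff_iff'.1 hxw u hu1) hu2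
    have huN : u = N := hNuniq u hu1 (fun y hy => by
      rw [heq]; exact mem_wulff_iff'.1 hy u hu1)
    rw [← huN, heq]
  choose t ht0 hts using fun i => (hxi i).1
  choose v hv1 hv2 using fun i => exists_eq_of_frontier' hn (hfc i) (hxi i).2
  have huc : ∀ δ > (0:ℝ), ∀ᶠ i in atTop, ∀ w : EuclideanSpace ℝ (Fin n), ‖w‖ = 1 →
      |flim w - f i w| < δ := by
    intro δ hδ
    filter_upwards [(Metric.tendstoUniformlyOn_iff.1 hunif) δ hδ] with i hi w hw
    have := hi w (mem_sphere_zero_iff_norm.2 hw)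
    rwa [Real.dist_eq] at this
  -- t i → 1
  have ht1 : Tendsto t atTop (𝓝 1) := by
    rw [Metric.tendsto_atTop]
    intro ε hε
    set δ := min (m/2) (ε * m / 2) with hδdef
    have hδ : 0 < δ := lt_min (by linarith) (by positivity)
    have hδm : δ ≤ m / 2 := min_le_left _ _
    obtain ⟨I, hI⟩ := eventually_atTop.1 (huc δ hδ)
    refine ⟨I, fun i hi => ?_⟩
    have hub : ∀ w : EuclideanSpace ℝ (Fin n), ‖w‖ = 1 → |flim w - f i w| < δ := hI i hi
    -- upper bound
    have e1 : ⟪xi i, N⟫_ℝ ≤ f i N := mem_wulff_iff'.1 (hxiw i) N hN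
    have e2 : ⟪xi i, N⟫_ℝ = t i * flim N := by rw [hts i, real_inner_smul_left, hxN]
    have e3 : f i N < flim N + δ := by
      have := hub N hN; rw [abs_lt] at this; linarith [this.1]
    have hup : t i < 1 + δ / m :=
      lemA hm (hmle N hN) hδ.le (by rw [← e2]; exact lt_of_le_of_lt e1 e3)
    -- lower bound
    have f1 : f i (v i) ≤ ⟪xi i, v i⟫_ℝ := hv2 i
    have f2 : ⟪xi i, v i⟫_ℝ = t i * ⟪x, v i⟫_ℝ := by rw [hts i, real_inner_smul_left]
    have f3 : flim (v i) - δ < f i (v i) := by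
      have := hub (v i) (hv1 i); rw [abs_lt] at this; linarith [this.2]
    have f4 : ⟪x, v i⟫_ℝ ≤ flim (v i) := mem_wulff_iff'.1 hxw (v i) (hv1 i)
    have f5 : m ≤ flim (v i) := hmle (v i) (hv1 i)
    have fkey : flim (v i) - δ ≤ t i * ⟪x, v i⟫_ℝ := by rw [← f2]; linarith
    have hlo : 1 - δ / m ≤ t i := lemB hm f5 f4 (ht0 i) fkey hδ.le
    have hδε : δ / m < ε := by
      have h1 : δ ≤ ε * m / 2 := min_le_right _ _
      rw [div_lt_iff₀ hm]
      nlinarith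
    rw [Real.dist_eq, abs_lt]
    constructor <;> linarith
  -- xi → x
  have hxx : Tendsto xi atTop (𝓝 x) := by
    have h1 : Tendsto (fun i => t i • x) atTop (𝓝 ((1:ℝ) • x)) := ht1.smul_const x
    rw [one_smul] at h1
    exact h1.congr fun i => (hts i).symm
  -- key eventual claim
  have key : ∀ ε > (0:ℝ), ∀ᶠ i in atTop, ∀ u ∈ sphImg (wulff (f i)) (xi i), sphDist u N ≤ ε := by
    intro ε hε
    by_contra hcon
    rw [Filter.not_eventually] at hcon
    have hcon' : ∃ᶠ i in atTop, ∃ u, u ∈ sphImg (wulff (f i)) (xi i) ∧ ε < sphDist u N := by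
      refine hcon.mono fun i hi => ?_
      push_neg at hi
      obtain ⟨u, hu, hud⟩ := hi
      exact ⟨u, hu, hud⟩
    obtain ⟨φ, hφ, hφP⟩ := Filter.extraction_of_frequently_atTop hcon'
    choose u hu hud using hφP
    obtain ⟨w, hws, ψ, hψ, hwt⟩ :=
      (isCompact_sphere (0 : EuclideanSpace ℝ (Fin n)) 1).tendsto_subseq
      (fun k => mem_sphere_zero_iff_norm.2 (hu k).1)
    have hwn : ‖w‖ = 1 := mem_sphere_zero_iff_norm.mp hws
    have hidx : Tendsto (fun k => φ (ψ k)) atTop atTop := (hφ.comp hψ).tendsto_atTop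
    have hsupp : ∀ y ∈ wulff flim, ⟪y, w⟫_ℝ ≤ ⟪x, w⟫_ℝ := by
      intro y hy
      have hr : ∀ r : ℝ, 0 < r → r < 1 → r * ⟪y, w⟫_ℝ ≤ ⟪x, w⟫_ℝ := by
        intro r hr0 hr1
        have hev : ∀ᶠ i in atTop, r • y ∈ wulff (f i) := by
          filter_upwards [huc ((1 - r) * m) (by nlinarith)] with i hi
          rw [mem_wulff_iff']
          intro z hz
          have h1 : ⟪y, z⟫_ℝ ≤ flim z := mem_wulff_iff'.1 hy z hz
          have h2 : |flim z - f i z| < (1 - r) * m := hi z hz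
          rw [abs_lt] at h2
          rw [real_inner_smul_left]
          exact lemD h1 (hmle z hz) hr0 hr1 (by linarith [h2.2])
        have hev2 : ∀ᶠ k in atTop,
            ⟪r • y, u (ψ k)⟫_ℝ ≤ ⟪xi (φ (ψ k)), u (ψ k)⟫_ℝ := by
          filter_upwards [hidx.eventually hev] with k hk
          exact (hu (ψ k)).2 _ hk
        have hL : Tendsto (fun k => ⟪r • y, u (ψ k)⟫_ℝ) atTop (𝓝 ⟪r • y, w⟫_ℝ) :=
          tendsto_const_nhds.inner hwt
        have hR : Tendsto (fun k => ⟪xi (φ (ψ k)), u (ψ k)⟫_ℝ) atTop (𝓝 ⟪x, w⟫_ℝ) :=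
          (hxx.comp hidx).inner hwt
        have := le_of_tendsto_of_tendsto hL hR hev2
        rwa [real_inner_smul_left] at this
      have hseq : Tendsto (fun k : ℕ => (1 - 1/((k:ℝ)+1)) * ⟪y, w⟫_ℝ) atTop
          (𝓝 ⟪y, w⟫_ℝ) := by
        have h0 : Tendsto (fun k : ℕ => 1 - 1/((k:ℝ)+1)) atTop (𝓝 1) := by
          have h00 := tendsto_one_div_add_atTop_nhds_zero_nat (𝕜 := ℝ)
          have h01 := (tendsto_const_nhds : Tendsto (fun _ : ℕ => (1:ℝ)) atTop (𝓝 1)).sub h00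
          simpa using h01
        simpa using h0.mul_const ⟪y, w⟫_ℝ
      refine le_of_tendsto hseq ?_
      filter_upwards [eventually_ge_atTop 1] with k hk
      have hk1 : (1:ℝ) ≤ (k:ℝ) := by exact_mod_cast hk
      have hpos : (0:ℝ) < (k:ℝ) + 1 := by linarith
      have hhalf : 1/((k:ℝ)+1) ≤ 1/2 := by
        apply one_div_le_one_div_of_le <;> linarith
      have hdpos : 0 < 1/((k:ℝ)+1) := by positivity
      exact hr _ (by linarith) (by linarith)
    have hwN : w = N := hNuniq w hwn hsupp
    have hdist : Tendsto (fun k => sphDist (u (ψ k)) N) atTop (𝓝 (sphDist w N)) := by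
      have hinn : Tendsto (fun k => ⟪u (ψ k), N⟫_ℝ) atTop (𝓝 ⟪w, N⟫_ℝ) :=
        hwt.inner tendsto_const_nhds
      exact (Real.continuous_arccos.continuousAt.tendsto).comp hinn
    have hNN : ⟪N, N⟫_ℝ = 1 := by
      rw [real_inner_self_eq_norm_sq, hN]; norm_num
    have hzero : sphDist w N = 0 := by
      rw [hwN]; rw [sphDist, hNN, Real.arccos_one]
    have hle : ε ≤ sphDist w N :=
      ge_of_tendsto hdist (Eventually.of_forall fun k => (hud (ψ k)).le)
    rw [hzero] at hle
    linarith
  -- conclusion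
  rw [Metric.tendsto_atTop]
  intro ε hε
  obtain ⟨I, hI⟩ := eventually_atTop.1 (key (ε/2) (by linarith))
  refine ⟨I, fun i hi => ?_⟩
  have hub : sSup ((fun v => sphDist v N) '' sphImg (wulff (f i)) (xi i)) ≤ ε/2 := by
    apply Real.sSup_le
    · rintro a ⟨u', hu', rfl⟩
      exact hI i hi u' hu'
    · linarith
  have hlb : 0 ≤ sSup ((fun v => sphDist v N) '' sphImg (wulff (f i)) (xi i)) := by
    apply Real.sSup_nonneg
    rintro a ⟨u', hu', rfl⟩
    exact Real.arccos_nonneg _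
  rw [Real.dist_eq, sub_zero, abs_of_nonneg hlb]
  linarith
end
end

section
/- Let K be a convex body in ℝ^n with non-empty interior and let x ∈ bd K be a regular and exposed boundary point with unique outer unit normal N_x (so K ∩ {y : y·N_x = x·N_x} = {x}). For ε > 0 set K' = K ∩ B̄(x,ε), the intersection with the closed Euclidean ball of radius ε centered at x. Then x is a regular and exposed boundary point of K', and there exists Δ_ε > 0 such that for all 0 < Δ < Δ_ε: K' ∩ {y : y·N_x ≥ x·N_x − Δ} = K ∩ {y : y·N_x ≥ x·N_x − Δ}. -/
open MeasureTheory Filter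
open scoped InnerProductSpace ENNReal Topology

noncomputable section

/-- Intersecting with a small ball around a regular exposed boundary point. -/
theorem stmt7 {n : ℕ} (K : Set (EuclideanSpace ℝ (Fin n)))
    (hKcomp : IsCompact K) (hKconv : Convex ℝ K) (hKint : (interior K).Nonempty)
    (x N : EuclideanSpace ℝ (Fin n))
    (hx : x ∈ frontier K) (hN : ‖N‖ = 1)
    (hNsupp : ∀ y ∈ K, ⟪y, N⟫_ℝ ≤ ⟪x, N⟫_ℝ)
    (hNuniq : ∀ v : EuclideanSpace ℝ (Fin n), ‖v‖ = 1 →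
      (∀ y ∈ K, ⟪y, v⟫_ℝ ≤ ⟪x, v⟫_ℝ) → v = N)
    (hexp : K ∩ {y | ⟪y, N⟫_ℝ = ⟪x, N⟫_ℝ} = {x})
    (ε : ℝ) (hε : 0 < ε) (K' : Set (EuclideanSpace ℝ (Fin n)))
    (hK' : K' = K ∩ Metric.closedBall x ε) :
    (x ∈ frontier K' ∧
      (∃! v : EuclideanSpace ℝ (Fin n), ‖v‖ = 1 ∧ ∀ y ∈ K', ⟪y, v⟫_ℝ ≤ ⟪x, v⟫_ℝ) ∧
      K' ∩ {y | ⟪y, N⟫_ℝ = ⟪x, N⟫_ℝ} = {x}) ∧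
    ∃ Δε > (0 : ℝ), ∀ Δ : ℝ, 0 < Δ → Δ < Δε →
      K' ∩ halfGe N (⟪x, N⟫_ℝ - Δ) = K ∩ halfGe N (⟪x, N⟫_ℝ - Δ) := by

  subst hK'
  have hxK : x ∈ K := by
    have := frontier_subset_closure hx
    rwa [hKcomp.isClosed.closure_eq] at this
  have hxK' : x ∈ K ∩ Metric.closedBall x ε :=
    ⟨hxK, Metric.mem_closedBall_self hε.le⟩
  -- any support vector of K' at x supports K at x
  have hext : ∀ v : EuclideanSpace ℝ (Fin n),
      (∀ y ∈ K ∩ Metric.closedBall x ε, ⟪y, v⟫_ℝ ≤ ⟪x, v⟫_ℝ) →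
      ∀ y ∈ K, ⟪y, v⟫_ℝ ≤ ⟪x, v⟫_ℝ := by
    intro v hv y hy
    rcases eq_or_ne y x with rfl | hne
    · exact le_rfl
    · have hdy : 0 < ‖y - x‖ := by
        simpa [sub_eq_zero] using norm_pos_iff.mpr (sub_ne_zero.mpr hne)
      set t : ℝ := min 1 (ε / ‖y - x‖) with ht
      have ht0 : 0 < t := lt_min one_pos (div_pos hε hdy)
      have ht1 : t ≤ 1 := min_le_left _ _
      set z : EuclideanSpace ℝ (Fin n) := x + t • (y - x) with hz
      have hzK : z ∈ K := by
        have := hKconv hxK hy (by linarith : (0:ℝ) ≤ 1 - t) ht0.le (by ring)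
        have hzeq : (1 - t) • x + t • y = z := by
          simp only [hz, smul_sub]
          module
        rwa [hzeq] at this
      have hzball : z ∈ Metric.closedBall x ε := by
        rw [Metric.mem_closedBall, dist_eq_norm]
        have : z - x = t • (y - x) := by simp [hz]
        rw [this, norm_smul, Real.norm_eq_abs, abs_of_pos ht0]
        calc t * ‖y - x‖ ≤ (ε / ‖y - x‖) * ‖y - x‖ := by
              apply mul_le_mul_of_nonneg_right (min_le_right _ _) (norm_nonneg _)
          _ = ε := div_mul_cancel₀ _ hdy.ne'
      have hzv := hv z ⟨hzK, hzball⟩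
      have hzin : ⟪z, v⟫_ℝ = ⟪x, v⟫_ℝ + t * (⟪y, v⟫_ℝ - ⟪x, v⟫_ℝ) := by
        rw [hz, inner_add_left, real_inner_smul_left, inner_sub_left]
      rw [hzin] at hzv
      nlinarith
  constructor
  · refine ⟨?_, ?_, ?_⟩
    · -- x ∈ frontier K'
      constructor
      · exact subset_closure hxK'
      · intro hmem
        exact hx.2 (interior_mono Set.inter_subset_left hmem)
    · refine ⟨N, ⟨hN, fun y hy => hNsupp y hy.1⟩, ?_⟩
      rintro v ⟨hv1, hv2⟩
      exact hNuniq v hv1 (hext v hv2)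
    · apply Set.Subset.antisymm
      · intro y hy
        rw [← hexp]
        exact ⟨hy.1.1, hy.2⟩
      · rintro y rfl
        exact ⟨hxK', rfl⟩
  · -- the Δε part
    set c : ℝ := ⟪x, N⟫_ℝ
    set C : Set (EuclideanSpace ℝ (Fin n)) := K ∩ {y | ε ≤ dist y x} with hC
    have hCcomp : IsCompact C :=
      hKcomp.inter_right (isClosed_le continuous_const (continuous_id.dist continuous_const))
    rcases Set.eq_empty_or_nonempty C with hCe | hCne
    · refine ⟨1, one_pos, fun Δ hΔ0 hΔ1 => ?_⟩
      apply Set.Subset.antisymm (Set.inter_subset_inter_left _ Set.inter_subset_left)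
      intro y hy
      refine ⟨⟨hy.1, ?_⟩, hy.2⟩
      by_contra hball
      have : y ∈ C := ⟨hy.1, le_of_not_ge (by simpa [Metric.mem_closedBall] using hball)⟩
      rw [hCe] at this
      exact this
    · have hcont : Continuous fun y : EuclideanSpace ℝ (Fin n) => ⟪y, N⟫_ℝ :=
        continuous_id.inner continuous_const
      obtain ⟨m, hmC, hmax⟩ := hCcomp.exists_isMaxOn hCne hcont.continuousOn
      have hmlt : ⟪m, N⟫_ℝ < c := by
        rcases lt_or_eq_of_le (hNsupp m hmC.1) with h | h
        · exact h
        · exfalso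
          have : m ∈ K ∩ {y | ⟪y, N⟫_ℝ = c} := ⟨hmC.1, h⟩
          rw [hexp] at this
          rw [this] at hmC
          have := hmC.2
          simp at this
          linarith
      refine ⟨c - ⟪m, N⟫_ℝ, by linarith, fun Δ hΔ0 hΔε => ?_⟩
      apply Set.Subset.antisymm (Set.inter_subset_inter_left _ Set.inter_subset_left)
      intro y hy
      refine ⟨⟨hy.1, ?_⟩, hy.2⟩
      by_contra hball
      have hyC : y ∈ C := ⟨hy.1, le_of_not_ge (by simpa [Metric.mem_closedBall] using hball)⟩
      have := hmax hyC
      have hyge : c - Δ ≤ ⟪y, N⟫_ℝ := hy.2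
      simp only [IsMaxOn, IsMaxFilter] at this
      have : ⟪y, N⟫_ℝ ≤ ⟪m, N⟫_ℝ := hmax hyC
      linarith
end
end

section
/- Let K be a convex body in ℝ^n with non-empty interior and let x ∈ bd K be a regular and exposed boundary point with unique outer unit normal N_x. For ε > 0 set K' = K ∩ B̄(x,ε). Then there exist ξ_ε > 0 and η_ε > 0 such that for all v ∈ S^{n-1} with d_s(v, N_x) < ξ_ε and all 0 < Δ < η_ε: K' ∩ {y : y·v ≥ x·v − Δ} = K ∩ {y : y·v ≥ x·v − Δ}. -/
open MeasureTheory Filter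
open scoped InnerProductSpace ENNReal Topology

noncomputable section

/-- Caps in nearby directions are also local. -/
theorem stmt8 {n : ℕ} (K : Set (EuclideanSpace ℝ (Fin n)))
    (hKcomp : IsCompact K) (hKconv : Convex ℝ K) (hKint : (interior K).Nonempty)
    (x N : EuclideanSpace ℝ (Fin n))
    (hx : x ∈ frontier K) (hN : ‖N‖ = 1)
    (hNsupp : ∀ y ∈ K, ⟪y, N⟫_ℝ ≤ ⟪x, N⟫_ℝ)
    (hNuniq : ∀ v : EuclideanSpace ℝ (Fin n), ‖v‖ = 1 →
      (∀ y ∈ K, ⟪y, v⟫_ℝ ≤ ⟪x, v⟫_ℝ) → v = N)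
    (hexp : K ∩ {y | ⟪y, N⟫_ℝ = ⟪x, N⟫_ℝ} = {x})
    (ε : ℝ) (hε : 0 < ε) (K' : Set (EuclideanSpace ℝ (Fin n)))
    (hK' : K' = K ∩ Metric.closedBall x ε) :
    ∃ ξε > (0 : ℝ), ∃ ηε > (0 : ℝ),
      ∀ v : EuclideanSpace ℝ (Fin n), ‖v‖ = 1 → sphDist v N < ξε →
        ∀ Δ : ℝ, 0 < Δ → Δ < ηε →
          K' ∩ halfGe v (⟪x, v⟫_ℝ - Δ) = K ∩ halfGe v (⟪x, v⟫_ℝ - Δ) := by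
  -- bound R on norms
  obtain ⟨r, hr⟩ := hKcomp.isBounded.subset_closedBall 0
  have hxK : x ∈ K := by
    have := frontier_subset_closure (s := K) hx
    rwa [hKcomp.isClosed.closure_eq] at this
  set R : ℝ := max (max r ‖x‖) 1 with hR
  have hR1 : (1:ℝ) ≤ R := le_max_right _ _
  have hR0 : (0:ℝ) < R := lt_of_lt_of_le one_pos hR1
  have hyR : ∀ y ∈ K, ‖y‖ ≤ R := fun y hy => by
    have := hr hy
    simp only [Metric.mem_closedBall, dist_zero_right] at this
    exact this.trans ((le_max_left r ‖x‖).trans (le_max_left _ _))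
  have hxR : ‖x‖ ≤ R := (le_max_right r ‖x‖).trans (le_max_left _ _)
  set C : Set (EuclideanSpace ℝ (Fin n)) := K \ Metric.ball x ε with hC
  by_cases hCne : C.Nonempty
  · have hCcomp : IsCompact C :=
      hKcomp.of_isClosed_subset (hKcomp.isClosed.sdiff Metric.isOpen_ball) Set.diff_subset
    have hcont : ContinuousOn (fun y : EuclideanSpace ℝ (Fin n) => ⟪y, N⟫_ℝ) C :=
      (continuous_id.inner continuous_const).continuousOn
    obtain ⟨y₀, hy₀C, hy₀max⟩ := hCcomp.exists_isMaxOn hCne hcont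
    have hy₀K : y₀ ∈ K := hy₀C.1
    have hy₀ne : y₀ ≠ x := by
      intro h; exact hy₀C.2 (by simp [h, Metric.mem_ball, hε])
    have hlt : ⟪y₀, N⟫_ℝ < ⟪x, N⟫_ℝ := by
      rcases lt_or_eq_of_le (hNsupp y₀ hy₀K) with h | h
      · exact h
      · exfalso; apply hy₀ne
        have : y₀ ∈ K ∩ {y | ⟪y, N⟫_ℝ = ⟪x, N⟫_ℝ} := ⟨hy₀K, h⟩
        rw [hexp] at this; exact this
    set δ : ℝ := ⟪x, N⟫_ℝ - ⟪y₀, N⟫_ℝ with hδ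
    have hδ0 : 0 < δ := sub_pos.mpr hlt
    set t : ℝ := min (δ / (4 * R)) 1 with ht
    have ht0 : 0 < t := lt_min (div_pos hδ0 (by linarith)) one_pos
    have ht1 : t ≤ 1 := min_le_right _ _
    refine ⟨Real.arccos (1 - t ^ 2 / 2), ?_, δ / 2, by linarith, ?_⟩
    · exact Real.arccos_pos.2 (by nlinarith)
    intro v hv hsph Δ hΔ0 hΔη
    -- from spherical distance to norm bound
    have hvN : ‖v - N‖ < t := by
      have hin : ⟪v, N⟫_ℝ ≤ 1 := by
        calc ⟪v, N⟫_ℝ ≤ ‖v‖ * ‖N‖ := real_inner_le_norm _ _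
        _ = 1 := by rw [hv, hN]; ring
      have hgt : 1 - t ^ 2 / 2 < ⟪v, N⟫_ℝ := by
        by_contra h
        push_neg at h
        have : Real.arccos (1 - t ^ 2 / 2) ≤ sphDist v N := by
          unfold sphDist
          unfold Real.arccos
          have := Real.monotone_arcsin h
          linarith
        linarith
      have hsq : ‖v - N‖ ^ 2 = 2 - 2 * ⟪v, N⟫_ℝ := by
        rw [norm_sub_sq_real, hv, hN, real_inner_comm]; ring
      nlinarith [norm_nonneg (v - N), ht0]
    -- key: cap is inside the ball
    have hcap : K ∩ halfGe v (⟪x, v⟫_ℝ - Δ) ⊆ Metric.closedBall x ε := by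
      intro y ⟨hyK, hyH⟩
      by_contra hyb
      have hyC : y ∈ C := ⟨hyK, fun h => hyb (Metric.ball_subset_closedBall h)⟩
      have h1 : ⟪y, N⟫_ℝ ≤ ⟪y₀, N⟫_ℝ := hy₀max hyC
      have h2 : ⟪y, v⟫_ℝ - ⟪y, N⟫_ℝ ≤ R * t := by
        have : ⟪y, v⟫_ℝ - ⟪y, N⟫_ℝ = ⟪y, v - N⟫_ℝ := by
          rw [inner_sub_right]
        rw [this]
        calc ⟪y, v - N⟫_ℝ ≤ ‖y‖ * ‖v - N‖ := real_inner_le_norm _ _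
        _ ≤ R * t := by
          apply mul_le_mul (hyR y hyK) hvN.le (norm_nonneg _) hR0.le
      have h3 : ⟪x, N⟫_ℝ - ⟪x, v⟫_ℝ ≤ R * t := by
        have e : ⟪x, N⟫_ℝ - ⟪x, v⟫_ℝ = ⟪x, N - v⟫_ℝ := by rw [inner_sub_right]
        rw [e]
        calc ⟪x, N - v⟫_ℝ ≤ ‖x‖ * ‖N - v‖ := real_inner_le_norm _ _
        _ ≤ R * t := by
          rw [norm_sub_rev]
          exact mul_le_mul hxR hvN.le (norm_nonneg _) hR0.le
      have htδ : t ≤ δ / (4 * R) := min_le_left _ _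
      have hRt : R * t ≤ δ / 4 := by
        have he : R * (δ / (4 * R)) = δ / 4 := by field_simp
        nlinarith
      have : ⟪y, v⟫_ℝ < ⟪x, v⟫_ℝ - Δ := by
        have : ⟪y, v⟫_ℝ ≤ ⟪x, N⟫_ℝ - δ + R * t := by
          have : ⟪y₀, N⟫_ℝ = ⟪x, N⟫_ℝ - δ := by rw [hδ]; ring
          linarith
        linarith
      exact absurd hyH (by simpa [halfGe] using this.not_ge)
    -- conclude
    rw [hK']
    ext y
    constructor
    · rintro ⟨⟨h1, _⟩, h2⟩; exact ⟨h1, h2⟩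
    · rintro ⟨h1, h2⟩; exact ⟨⟨h1, hcap ⟨h1, h2⟩⟩, h2⟩
  · -- K ⊆ ball x ε
    rw [Set.not_nonempty_iff_eq_empty, Set.diff_eq_empty] at hCne
    refine ⟨1, one_pos, 1, one_pos, fun v _ _ Δ _ _ => ?_⟩
    rw [hK']
    ext y
    constructor
    · rintro ⟨⟨h1, _⟩, h2⟩; exact ⟨h1, h2⟩
    · rintro ⟨h1, h2⟩
      exact ⟨⟨h1, Metric.ball_subset_closedBall (hCne h1)⟩, h2⟩
end
end

section
/- Let K be a convex body in ℝ^n with non-empty interior, μ a finite non-negative Borel measure on int K equivalent to Lebesgue measure on int K, and x ∈ bd K a regular and exposed boundary point. For ε > 0 set K' = K ∩ B̄(x,ε) and assume 0 ∈ int K'. Then there exists δ_ε > 0 such that for all 0 < δ < δ_ε: 0 ∈ int(F^μ_δ K' ∩ F^μ_δ K) and x^{K'}_δ = x^K_δ, where for a convex body K* containing 0 in the interior of its floating body, x^{K*}_δ denotes the unique point of bd F^μ_δ K* on the ray pos{x} (and F^μ_δ K' is the weighted floating body of K' with respect to μ restricted to int K'). -/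
open MeasureTheory Filter
open scoped InnerProductSpace ENNReal Topology

noncomputable section

lemma Zcore {α : Type*} [MeasurableSpace α] (ν : Measure α) (O : Set α) (cap : ℕ → Set α)
    (hpos : ν O ≠ 0) (hbound : ∀ k : ℕ, ν (cap k) ≤ ENNReal.ofReal (1 / ((k : ℝ) + 1)))
    (hmem : ∀ y ∈ O, ∀ᶠ k in atTop, y ∈ cap k) : False := by
  set A : ℕ → Set α := fun m => ⋂ k, ⋂ (_ : m ≤ k), cap k with hA
  have hOsub : O ⊆ ⋃ m, A m := by
    intro y hy
    obtain ⟨m, hm⟩ := eventually_atTop.mp (hmem y hy)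
    exact Set.mem_iUnion.2 ⟨m, Set.mem_iInter₂.2 fun k hk => hm k hk⟩
  have hAzero : ∀ m, ν (A m) = 0 := by
    intro m
    by_contra h
    have h0 : 0 < ν (A m) := pos_iff_ne_zero.mpr h
    have htend : Tendsto (fun k : ℕ => ENNReal.ofReal (1 / ((k : ℝ) + 1))) atTop (𝓝 0) := by
      simpa using ENNReal.tendsto_ofReal tendsto_one_div_add_atTop_nhds_zero_nat
    obtain ⟨k, hk1, hk2⟩ := ((htend.eventually_lt_const h0).and (eventually_ge_atTop m)).exists
    have : ν (A m) ≤ ENNReal.ofReal (1 / ((k : ℝ) + 1)) :=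
      le_trans (measure_mono (fun y hy => Set.mem_iInter₂.mp hy k hk2)) (hbound k)
    exact absurd this (not_le.2 hk1)
  have : ν O ≤ 0 := by
    calc ν O ≤ ν (⋃ m, A m) := measure_mono hOsub
    _ ≤ ∑' m, ν (A m) := measure_iUnion_le A
    _ = 0 := by simp [hAzero]
  exact hpos (le_antisymm this zero_le)

lemma shallow {n : ℕ} (K' : Set (EuclideanSpace ℝ (Fin n)))
    (ν : Measure (EuclideanSpace ℝ (Fin n)))
    (hν : ∀ O : Set (EuclideanSpace ℝ (Fin n)), IsOpen O → O.Nonempty → O ⊆ interior K' → ν O ≠ 0)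
    (S : Set (EuclideanSpace ℝ (Fin n))) (hS : interior K' ⊆ S)
    (g : EuclideanSpace ℝ (Fin n) → ℝ) (hg : Continuous g)
    (hgpt : ∀ v, ‖v‖ = 1 → ∃ y ∈ interior K', g v < ⟪y, v⟫_ℝ) :
    ∃ ρ > (0 : ℝ), ∀ v c, ‖v‖ = 1 → ν (S ∩ halfGe v c) ≤ ENNReal.ofReal ρ → g v < c := by
  by_contra hcon
  push_neg at hcon
  choose v c hv hb hc using fun k : ℕ => hcon (1 / ((k : ℝ) + 1)) (by positivity)
  have hvs : ∀ k, v k ∈ Metric.sphere (0 : EuclideanSpace ℝ (Fin n)) 1 :=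
    fun k => mem_sphere_zero_iff_norm.2 (hv k)
  obtain ⟨w, hw, φ, hφ, hconv⟩ :=
    (isCompact_sphere (0 : EuclideanSpace ℝ (Fin n)) 1).tendsto_subseq hvs
  have hwn : ‖w‖ = 1 := mem_sphere_zero_iff_norm.1 hw
  obtain ⟨y, hyK, hy⟩ := hgpt w hwn
  set mid : ℝ := (g w + ⟪y, w⟫_ℝ) / 2 with hmid
  have hgwmid : g w < mid := by simp only [hmid]; linarith
  set O : Set (EuclideanSpace ℝ (Fin n)) := interior K' ∩ {z | mid < ⟪z, w⟫_ℝ} with hO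
  have hOopen : IsOpen O :=
    isOpen_interior.inter (isOpen_lt continuous_const (continuous_id.inner continuous_const))
  have hOne : O.Nonempty := ⟨y, hyK, by simp only [Set.mem_setOf_eq, hmid]; linarith⟩
  have hOsub : O ⊆ interior K' := Set.inter_subset_left
  refine Zcore ν O (fun k => S ∩ halfGe (v (φ k)) (c (φ k))) (hν O hOopen hOne hOsub) ?_ ?_
  · intro k
    refine le_trans (hb (φ k)) (ENNReal.ofReal_le_ofReal ?_)
    have : (k : ℝ) + 1 ≤ (φ k : ℝ) + 1 := by
      have := hφ.le_apply (x := k); exact_mod_cast by linarith [this]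
    exact one_div_le_one_div_of_le (by positivity) this
  · intro z hz
    have hzS : z ∈ S := hS hz.1
    have hzgt : mid < ⟪z, w⟫_ℝ := hz.2
    have h1 : Tendsto (fun k => g (v (φ k))) atTop (𝓝 (g w)) := (hg.tendsto w).comp hconv
    have h2 : Tendsto (fun k => ⟪z, v (φ k)⟫_ℝ) atTop (𝓝 ⟪z, w⟫_ℝ) :=
      Tendsto.inner tendsto_const_nhds hconv
    filter_upwards [h1.eventually_lt_const hgwmid, h2.eventually_const_lt hzgt] with k e1 e2
    exact ⟨hzS, le_of_lt (lt_trans (lt_of_le_of_lt (hc (φ k)) e1) e2)⟩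

lemma lemExp {n : ℕ} (K : Set (EuclideanSpace ℝ (Fin n))) (hKcomp : IsCompact K)
    (x N : EuclideanSpace ℝ (Fin n))
    (hNsupp : ∀ y ∈ K, ⟪y, N⟫_ℝ ≤ ⟪x, N⟫_ℝ)
    (hexp : K ∩ {y | ⟪y, N⟫_ℝ = ⟪x, N⟫_ℝ} = {x})
    (ε : ℝ) (hε : 0 < ε) :
    ∃ θ > (0 : ℝ), ∃ d > (0 : ℝ), ∀ v, ‖v‖ = 1 → ‖v - N‖ < θ →
      ∀ y ∈ K, ⟪x, v⟫_ℝ - d ≤ ⟪y, v⟫_ℝ → ‖y - x‖ < ε := by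
  by_contra hcon
  push_neg at hcon
  have H : ∀ k : ℕ, ∃ v, ‖v‖ = 1 ∧ ‖v - N‖ < 1 / ((k : ℝ) + 1) ∧
      ∃ y ∈ K, ⟪x, v⟫_ℝ - 1 / ((k : ℝ) + 1) ≤ ⟪y, v⟫_ℝ ∧ ε ≤ ‖y - x‖ := by
    intro k
    obtain ⟨v, hv1, hv2, y, hy1, hy2, hy3⟩ := hcon (1 / ((k : ℝ) + 1)) (by positivity)
      (1 / ((k : ℝ) + 1)) (by positivity)
    exact ⟨v, hv1, hv2, y, hy1, hy2, hy3⟩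
  choose v hv hvN y hyK hyc hyfar using H
  have hinv : Tendsto (fun k : ℕ => 1 / ((k : ℝ) + 1)) atTop (𝓝 0) :=
    tendsto_one_div_add_atTop_nhds_zero_nat
  have hvN' : Tendsto v atTop (𝓝 N) := by
    rw [tendsto_iff_norm_sub_tendsto_zero]
    exact squeeze_zero (fun k => norm_nonneg _) (fun k => (hvN k).le) hinv
  obtain ⟨z, hzK, φ, hφ, hz⟩ := hKcomp.tendsto_subseq hyK
  have hφinv : Tendsto (fun k : ℕ => 1 / ((φ k : ℝ) + 1)) atTop (𝓝 0) :=
    squeeze_zero (fun k => by positivity)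
      (fun k => one_div_le_one_div_of_le (by positivity)
        (by exact_mod_cast Nat.succ_le_succ hφ.le_apply)) hinv
  have hvφ : Tendsto (v ∘ φ) atTop (𝓝 N) := hvN'.comp hφ.tendsto_atTop
  have hlhs : Tendsto (fun k => ⟪x, v (φ k)⟫_ℝ - 1 / ((φ k : ℝ) + 1)) atTop (𝓝 (⟪x, N⟫_ℝ - 0)) :=
    (Tendsto.inner tendsto_const_nhds hvφ).sub hφinv
  have hrhs : Tendsto (fun k => ⟪y (φ k), v (φ k)⟫_ℝ) atTop (𝓝 ⟪z, N⟫_ℝ) :=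
    Tendsto.inner hz hvφ
  have hge : ⟪x, N⟫_ℝ - 0 ≤ ⟪z, N⟫_ℝ :=
    le_of_tendsto_of_tendsto' hlhs hrhs (fun k => hyc (φ k))
  have hzx : z = x := by
    have : z ∈ K ∩ {y | ⟪y, N⟫_ℝ = ⟪x, N⟫_ℝ} :=
      ⟨hzK, le_antisymm (hNsupp z hzK) (by linarith)⟩
    rw [hexp] at this; exact this
  have : ε ≤ 0 := by
    have h0 : Tendsto (fun k => ‖y (φ k) - x‖) atTop (𝓝 ‖z - x‖) :=
      ((hz.sub tendsto_const_nhds).norm)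
    have := ge_of_tendsto h0 (Eventually.of_forall fun k => hyfar (φ k))
    rwa [hzx, sub_self, norm_zero] at this
  linarith

lemma lemM {n : ℕ} (K K' : Set (EuclideanSpace ℝ (Fin n)))
    (hKconv : Convex ℝ K) (hK'conv : Convex ℝ K')
    (h0K' : (0 : EuclideanSpace ℝ (Fin n)) ∈ interior K')
    (x N : EuclideanSpace ℝ (Fin n)) (hxK : x ∈ K)
    (hNuniq : ∀ v : EuclideanSpace ℝ (Fin n), ‖v‖ = 1 →
      (∀ y ∈ K, ⟪y, v⟫_ℝ ≤ ⟪x, v⟫_ℝ) → v = N)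
    (ε : ℝ) (hε : 0 < ε) (hK' : K' = K ∩ Metric.closedBall x ε)
    (ν : Measure (EuclideanSpace ℝ (Fin n)))
    (hν : ∀ O : Set (EuclideanSpace ℝ (Fin n)), IsOpen O → O.Nonempty → O ⊆ interior K' → ν O ≠ 0)
    (θ : ℝ) (hθ : 0 < θ) :
    ∃ ρ > (0 : ℝ), ∃ β > (0 : ℝ), ∀ v c y, ‖v‖ = 1 →
      ν (K' ∩ halfGe v c) ≤ ENNReal.ofReal ρ → y ∈ K' → c ≤ ⟪y, v⟫_ℝ → ‖y - x‖ ≤ β →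
      ‖v - N‖ < θ := by
  by_contra hcon
  push_neg at hcon
  have H : ∀ k : ℕ, ∃ v c y, ‖v‖ = 1 ∧ ν (K' ∩ halfGe v c) ≤ ENNReal.ofReal (1 / ((k : ℝ) + 1)) ∧
      y ∈ K' ∧ c ≤ ⟪y, v⟫_ℝ ∧ ‖y - x‖ ≤ 1 / ((k : ℝ) + 1) ∧ θ ≤ ‖v - N‖ := by
    intro k
    obtain ⟨v, c, y, h1, h2, h3, h4, h5, h6⟩ := hcon (1 / ((k : ℝ) + 1)) (by positivity)
      (1 / ((k : ℝ) + 1)) (by positivity)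
    exact ⟨v, c, y, h1, h2, h3, h4, h5, h6⟩
  choose v c y hv hb hyK' hcy hyx hvN using H
  have hinv : Tendsto (fun k : ℕ => 1 / ((k : ℝ) + 1)) atTop (𝓝 0) :=
    tendsto_one_div_add_atTop_nhds_zero_nat
  have hvs : ∀ k, v k ∈ Metric.sphere (0 : EuclideanSpace ℝ (Fin n)) 1 :=
    fun k => mem_sphere_zero_iff_norm.2 (hv k)
  obtain ⟨w, hw, φ, hφ, hconv⟩ :=
    (isCompact_sphere (0 : EuclideanSpace ℝ (Fin n)) 1).tendsto_subseq hvs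
  have hwn : ‖w‖ = 1 := mem_sphere_zero_iff_norm.1 hw
  have hyx' : Tendsto y atTop (𝓝 x) := by
    rw [tendsto_iff_norm_sub_tendsto_zero]
    exact squeeze_zero (fun k => norm_nonneg _) hyx hinv
  have hyφ : Tendsto (y ∘ φ) atTop (𝓝 x) := hyx'.comp hφ.tendsto_atTop
  have hsuppK' : ∀ z ∈ K', ⟪z, w⟫_ℝ ≤ ⟪x, w⟫_ℝ := by
    intro z hzK'
    by_contra hgt
    push_neg at hgt
    set γ : ℝ := ⟪z, w⟫_ℝ - ⟪x, w⟫_ℝ with hγdef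
    have hγ : 0 < γ := by simp only [hγdef]; linarith
    set a : ℝ := ⟪z, w⟫_ℝ with hadef
    set s : ℝ := γ / (γ + 2 * |a| + 1) with hsdef
    have hs0 : 0 < s := by positivity
    have hs1 : s < 1 := by
      rw [hsdef, div_lt_one (by positivity)]; nlinarith [abs_nonneg a]
    have hsa : s * |a| < γ / 2 := by
      rw [hsdef, div_mul_eq_mul_div, div_lt_iff₀ (by positivity)]
      nlinarith [abs_nonneg a]
    set z' : EuclideanSpace ℝ (Fin n) := (1 - s) • z with hz'def
    have hz'int : z' ∈ interior K' := by
      have := hK'conv.combo_interior_closure_mem_interior (a := s) (b := 1 - s) h0K'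
        (subset_closure hzK') hs0 (by linarith) (by ring)
      simpa [hz'def, smul_zero] using this
    have hz'gt : ⟪x, w⟫_ℝ + γ / 2 < ⟪z', w⟫_ℝ := by
      rw [hz'def, real_inner_smul_left]
      have h1 : a - s * |a| ≤ (1 - s) * a := by
        rcases abs_cases a with ⟨h1, _⟩ | ⟨h1, _⟩ <;> nlinarith
      simp only [← hadef]
      nlinarith
    set O : Set (EuclideanSpace ℝ (Fin n)) :=
      interior K' ∩ {u | ⟪x, w⟫_ℝ + γ / 2 < ⟪u, w⟫_ℝ} with hOdef
    have hOopen : IsOpen O := isOpen_interior.inter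
      (isOpen_lt continuous_const (continuous_id.inner continuous_const))
    refine Zcore ν O (fun k => K' ∩ halfGe (v (φ k)) (c (φ k)))
      (hν O hOopen ⟨z', hz'int, hz'gt⟩ Set.inter_subset_left) ?_ ?_
    · intro k
      refine le_trans (hb (φ k)) (ENNReal.ofReal_le_ofReal ?_)
      exact one_div_le_one_div_of_le (by positivity)
        (by exact_mod_cast Nat.succ_le_succ hφ.le_apply)
    · intro u hu
      have hugt : ⟪x, w⟫_ℝ + γ / 2 < ⟪u, w⟫_ℝ := hu.2
      have h1 : Tendsto (fun k => ⟪y (φ k), v (φ k)⟫_ℝ) atTop (𝓝 ⟪x, w⟫_ℝ) :=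
        Tendsto.inner hyφ hconv
      have h2 : Tendsto (fun k => ⟪u, v (φ k)⟫_ℝ) atTop (𝓝 ⟪u, w⟫_ℝ) :=
        Tendsto.inner tendsto_const_nhds hconv
      filter_upwards [h1.eventually_lt_const (show ⟪x, w⟫_ℝ < ⟪x, w⟫_ℝ + γ / 2 by linarith),
        h2.eventually_const_lt hugt] with k e1 e2
      exact ⟨interior_subset hu.1, le_of_lt (lt_trans (lt_of_le_of_lt (hcy (φ k)) e1) e2)⟩
  have hsuppK : ∀ z ∈ K, ⟪z, w⟫_ℝ ≤ ⟪x, w⟫_ℝ := by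
    intro z hzK
    set s : ℝ := ε / (ε + ‖z - x‖) with hsdef
    have hs0 : 0 < s := by positivity
    have hs1 : s ≤ 1 := by
      rw [hsdef, div_le_one (by positivity)]; linarith [norm_nonneg (z - x)]
    have hws : (1 - s) • x + s • z ∈ K := hKconv hxK hzK (by linarith) hs0.le (by ring)
    have hwball : (1 - s) • x + s • z ∈ Metric.closedBall x ε := by
      rw [Metric.mem_closedBall, dist_eq_norm]
      have heq : (1 - s) • x + s • z - x = s • (z - x) := by module
      rw [heq, norm_smul, Real.norm_eq_abs, abs_of_pos hs0]
      rw [hsdef, div_mul_eq_mul_div, div_le_iff₀ (by positivity)]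
      nlinarith [norm_nonneg (z - x)]
    have hle := hsuppK' _ (hK' ▸ Set.mem_inter hws hwball)
    rw [inner_add_left, real_inner_smul_left, real_inner_smul_left] at hle
    have hz' : s * (⟪z, w⟫_ℝ - ⟪x, w⟫_ℝ) ≤ 0 := by nlinarith [hle]
    nlinarith [hz', hs0]
  have hwN : w = N := hNuniq w hwn hsuppK
  have htd : Tendsto (fun k => ‖v (φ k) - N‖) atTop (𝓝 ‖w - N‖) :=
    ((hconv.sub tendsto_const_nhds).norm)
  have hθ0 : θ ≤ ‖w - N‖ := ge_of_tendsto htd (Eventually.of_forall fun k => hvN (φ k))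
  rw [hwN, sub_self, norm_zero] at hθ0
  linarith

lemma rayPoint {n : ℕ} (F : Set (EuclideanSpace ℝ (Fin n)))
    (hclosed : IsClosed F) (hconv : Convex ℝ F)
    (s R₀ : ℝ) (hs : 0 < s) (hsub : Metric.closedBall 0 s ⊆ F)
    (hbd : F ⊆ Metric.closedBall 0 R₀)
    (x : EuclideanSpace ℝ (Fin n)) (hx : x ≠ 0) :
    ∃ t : ℝ, 0 ≤ t ∧ t • x ∈ F ∧ t • x ∈ frontier F ∧
      (∀ q ∈ frontier F ∩ ray x, q = t • x) ∧
      (∀ u : ℝ, 0 ≤ u → u • x ∈ F → u ≤ t) := by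
  have hxn : 0 < ‖x‖ := norm_pos_iff.2 hx
  have h0int : (0 : EuclideanSpace ℝ (Fin n)) ∈ interior F :=
    mem_interior.2 ⟨Metric.ball 0 s, (Metric.ball_subset_closedBall).trans hsub,
      Metric.isOpen_ball, Metric.mem_ball_self hs⟩
  set T : Set ℝ := {t : ℝ | 0 ≤ t ∧ t • x ∈ F} with hT
  have hTne : (0 : ℝ) ∈ T := ⟨le_refl 0, by
    rw [zero_smul]; exact hsub (Metric.mem_closedBall_self hs.le)⟩
  have hTsub : T ⊆ Set.Icc 0 (R₀ / ‖x‖) := by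
    rintro t ⟨ht0, htF⟩
    refine ⟨ht0, ?_⟩
    have := hbd htF
    rw [Metric.mem_closedBall, dist_zero_right, norm_smul, Real.norm_eq_abs,
      abs_of_nonneg ht0] at this
    rw [le_div_iff₀ hxn]
    exact this
  have hTclosed : IsClosed T := by
    have : T = Set.Ici (0:ℝ) ∩ (fun t : ℝ => t • x) ⁻¹' F := rfl
    rw [this]
    exact isClosed_Ici.inter (hclosed.preimage (continuous_id.smul continuous_const))
  have hTcomp : IsCompact T := IsCompact.of_isClosed_subset isCompact_Icc hTclosed hTsub
  set t := sSup T with ht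
  have htT : t ∈ T := hTcomp.sSup_mem ⟨0, hTne⟩
  have hmax : ∀ u : ℝ, 0 ≤ u → u • x ∈ F → u ≤ t :=
    fun u hu huF => le_csSup hTcomp.bddAbove ⟨hu, huF⟩
  have htF : t • x ∈ F := htT.2
  have ht0 : 0 ≤ t := htT.1
  have hfront : t • x ∈ frontier F := by
    rw [hclosed.frontier_eq]
    refine ⟨htF, fun hint => ?_⟩
    obtain ⟨η, hη, hball⟩ := Metric.isOpen_iff.1 isOpen_interior _ hint
    set u := t + η / (2 * ‖x‖) with hu
    have huF : u • x ∈ F := by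
      apply interior_subset; apply hball
      rw [Metric.mem_ball, dist_eq_norm, ← sub_smul, norm_smul, Real.norm_eq_abs]
      have habs : |u - t| = η / (2 * ‖x‖) := by
        rw [hu, add_sub_cancel_left, abs_of_pos (by positivity)]
      rw [habs, div_mul_eq_mul_div, div_lt_iff₀ (by positivity)]
      nlinarith
    have h1 : u ≤ t := hmax u (by positivity) huF
    have h2 : 0 < η / (2 * ‖x‖) := by positivity
    simp only [hu] at h1
    linarith
  refine ⟨t, ht0, htF, hfront, ?_, hmax⟩
  rintro q ⟨hqfront, u, hu0, rfl⟩
  have hqF : u • x ∈ F := hclosed.closure_eq ▸ frontier_subset_closure hqfront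
  have hut : u ≤ t := hmax u hu0 hqF
  rcases eq_or_lt_of_le hut with h | h
  · rw [h]
  · exfalso
    have htpos : 0 < t := lt_of_le_of_lt hu0 h
    have hcombo := hconv.combo_interior_closure_mem_interior (a := 1 - u / t) (b := u / t)
      h0int (subset_closure htF)
      (by rw [sub_pos, div_lt_one htpos]; exact h)
      (by positivity) (by ring)
    rw [smul_zero, zero_add, smul_smul, div_mul_cancel₀ _ htpos.ne'] at hcombo
    exact hqfront.2 hcombo

set_option maxHeartbeats 1000000 in
/-- Approximation of the weighted floating body: near a regular exposed
boundary point, the floating bodies of `K` and of `K' = K ∩ B̄(x,ε)` meet the ray through `x`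
in the same point. -/
theorem stmt9 {n : ℕ} (K : Set (EuclideanSpace ℝ (Fin n)))
    (hKcomp : IsCompact K) (hKconv : Convex ℝ K) (hKint : (interior K).Nonempty)
    (μ : Measure (EuclideanSpace ℝ (Fin n))) [IsFiniteMeasure μ]
    (hμsupp : μ (interior K)ᶜ = 0)
    (hac₁ : μ.restrict (interior K) ≪ volume.restrict (interior K))
    (hac₂ : volume.restrict (interior K) ≪ μ.restrict (interior K))
    (x N : EuclideanSpace ℝ (Fin n))
    (hx : x ∈ frontier K) (hN : ‖N‖ = 1)
    (hNsupp : ∀ y ∈ K, ⟪y, N⟫_ℝ ≤ ⟪x, N⟫_ℝ)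
    (hNuniq : ∀ v : EuclideanSpace ℝ (Fin n), ‖v‖ = 1 →
      (∀ y ∈ K, ⟪y, v⟫_ℝ ≤ ⟪x, v⟫_ℝ) → v = N)
    (hexp : K ∩ {y | ⟪y, N⟫_ℝ = ⟪x, N⟫_ℝ} = {x})
    (ε : ℝ) (hε : 0 < ε) (K' : Set (EuclideanSpace ℝ (Fin n)))
    (hK' : K' = K ∩ Metric.closedBall x ε)
    (h0K' : 0 ∈ interior K') :
    ∃ δε > (0 : ℝ), ∀ δ ∈ Set.Ioo (0 : ℝ) δε,
      0 ∈ interior (floatBody (μ.restrict (interior K')) K' δ) ∧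
      0 ∈ interior (floatBody μ K δ) ∧
      ∃ p : EuclideanSpace ℝ (Fin n),
        p ∈ frontier (floatBody (μ.restrict (interior K')) K' δ) ∩ ray x ∧
        p ∈ frontier (floatBody μ K δ) ∩ ray x ∧
        (∀ q ∈ frontier (floatBody (μ.restrict (interior K')) K' δ) ∩ ray x, q = p) ∧
        (∀ q ∈ frontier (floatBody μ K δ) ∩ ray x, q = p) := by
  classical
  set μ' := μ.restrict (interior K') with hμ'def
  have hK'K : K' ⊆ K := by rw [hK']; exact Set.inter_subset_left
  have hK'conv : Convex ℝ K' := by rw [hK']; exact hKconv.inter (convex_closedBall x ε)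
  have hintK'K : interior K' ⊆ interior K := interior_mono hK'K
  have h0K : (0 : EuclideanSpace ℝ (Fin n)) ∈ interior K := hintK'K h0K'
  have hxK : x ∈ K := hKcomp.isClosed.closure_eq ▸ frontier_subset_closure hx
  have hxK' : x ∈ K' := by rw [hK']; exact ⟨hxK, Metric.mem_closedBall_self hε.le⟩
  have hxnotint : x ∉ interior K := hx.2
  have hx0 : x ≠ 0 := by rintro rfl; exact hxnotint h0K
  have hR : 0 < ‖x‖ := norm_pos_iff.2 hx0
  obtain ⟨r0, hr0, hball⟩ := Metric.mem_nhds_iff.1 (mem_interior_iff_mem_nhds.1 h0K')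
  set r := r0 / 2 with hrdef
  have hr : 0 < r := by positivity
  have hrK' : Metric.closedBall (0 : EuclideanSpace ℝ (Fin n)) r ⊆ K' :=
    (Metric.closedBall_subset_ball (by rw [hrdef]; linarith)).trans hball
  have hrint : Metric.ball (0 : EuclideanSpace ℝ (Fin n)) r ⊆ interior K' :=
    interior_maximal (Metric.ball_subset_closedBall.trans hrK') Metric.isOpen_ball
  obtain ⟨R₁, hKR₁⟩ := hKcomp.isBounded.subset_closedBall 0
  set R₀ := max R₁ 0 + 1 with hR₀def
  have hR₀pos : 0 < R₀ := by positivity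
  have hKball : K ⊆ Metric.ball 0 R₀ := by
    intro z hz
    have := hKR₁ hz
    rw [Metric.mem_closedBall] at this
    rw [Metric.mem_ball]
    calc dist z 0 ≤ R₁ := this
    _ ≤ max R₁ 0 := le_max_left _ _
    _ < R₀ := by rw [hR₀def]; linarith
  -- positivity of measures of open subsets of interior K'
  have hposμ : ∀ O : Set (EuclideanSpace ℝ (Fin n)),
      IsOpen O → O.Nonempty → O ⊆ interior K' → μ O ≠ 0 := by
    intro O hO hne hsub h0
    have hOK : O ⊆ interior K := hsub.trans hintK'K
    have h1 : μ.restrict (interior K) O = 0 := by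
      rw [Measure.restrict_apply' isOpen_interior.measurableSet,
        Set.inter_eq_self_of_subset_left hOK, h0]
    have h2 := hac₂ h1
    rw [Measure.restrict_apply' isOpen_interior.measurableSet,
      Set.inter_eq_self_of_subset_left hOK] at h2
    exact (hO.measure_pos volume hne).ne' h2
  have hposμ' : ∀ O : Set (EuclideanSpace ℝ (Fin n)),
      IsOpen O → O.Nonempty → O ⊆ interior K' → μ' O ≠ 0 := by
    intro O hO hne hsub
    rw [hμ'def, Measure.restrict_apply' isOpen_interior.measurableSet,
      Set.inter_eq_self_of_subset_left hsub]
    exact hposμ O hO hne hsub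
  have hcut : ∀ v c, μ' (K' ∩ halfGe v c) ≤ μ (K ∩ halfGe v c) := by
    intro v c
    rw [hμ'def, Measure.restrict_apply' isOpen_interior.measurableSet]
    exact measure_mono (fun z hz => ⟨hK'K hz.1.1, hz.1.2⟩)
  -- constants from the geometric lemmas
  obtain ⟨θ, hθ, d₂, hd₂, hL2⟩ := lemExp K hKcomp x N hNsupp hexp ε hε
  obtain ⟨ρM, hρM, β, hβ, hM⟩ :=
    lemM K K' hKconv hK'conv h0K' x N hxK hNuniq ε hε hK' μ' hposμ' θ hθ
  have hxcl : x ∈ closure K' := subset_closure hxK'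
  have hgptx : ∀ d : ℝ, 0 < d → ∀ v : EuclideanSpace ℝ (Fin n), ‖v‖ = 1 →
      ∃ y ∈ interior K', ⟪x, v⟫_ℝ - d < ⟪y, v⟫_ℝ := by
    intro d hd v hv
    set s := d / (d + ‖x‖ + 1) with hsdef
    have hs0 : 0 < s := by positivity
    have hs1 : s < 1 := by rw [hsdef, div_lt_one (by positivity)]; linarith
    refine ⟨(1 - s) • x, ?_, ?_⟩
    · have := hK'conv.combo_interior_closure_mem_interior (a := s) (b := 1 - s) h0K' hxcl
        hs0 (by linarith) (by ring)
      simpa [smul_zero] using this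
    · rw [real_inner_smul_left]
      have h1 : |⟪x, v⟫_ℝ| ≤ ‖x‖ := by
        have := abs_real_inner_le_norm x v; rwa [hv, mul_one] at this
      have h2 : s * ‖x‖ < d := by
        rw [hsdef, div_mul_eq_mul_div, div_lt_iff₀ (by positivity)]
        nlinarith [norm_nonneg x]
      rcases abs_cases ⟪x, v⟫_ℝ with ⟨he, _⟩ | ⟨he, _⟩ <;> nlinarith
  have hgptr : ∀ v : EuclideanSpace ℝ (Fin n), ‖v‖ = 1 →
      ∃ y ∈ interior K', (r / 2 : ℝ) < ⟪y, v⟫_ℝ := by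
    intro v hv
    refine ⟨(3 * r / 4) • v, hrint ?_, ?_⟩
    · rw [Metric.mem_ball, dist_zero_right, norm_smul, Real.norm_eq_abs,
        abs_of_pos (by positivity), hv, mul_one]
      linarith
    · rw [real_inner_smul_left, real_inner_self_eq_norm_mul_norm, hv]
      nlinarith
  have hcontx : Continuous fun v : EuclideanSpace ℝ (Fin n) => ⟪x, v⟫_ℝ - d₂ :=
    (continuous_const.inner continuous_id).sub continuous_const
  obtain ⟨ρ1, hρ1, hL1⟩ := shallow K' μ' hposμ' K' interior_subset
    (fun v => ⟪x, v⟫_ℝ - d₂) hcontx (fun v hv => hgptx d₂ hd₂ v hv)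
  obtain ⟨ρ2, hρ2, hB'⟩ := shallow K' μ' hposμ' K' interior_subset
    (fun _ => r / 2) continuous_const hgptr
  obtain ⟨ρ3, hρ3, hB⟩ := shallow K' μ hposμ K (interior_subset.trans hK'K)
    (fun _ => r / 2) continuous_const hgptr
  set d₃ := r * min β ε / (2 * ‖x‖) with hd₃def
  have hmin : 0 < min β ε := lt_min hβ hε
  have hd₃ : 0 < d₃ := by rw [hd₃def]; exact div_pos (mul_pos hr hmin) (by positivity)
  have hcontx3 : Continuous fun v : EuclideanSpace ℝ (Fin n) => ⟪x, v⟫_ℝ - d₃ :=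
    (continuous_const.inner continuous_id).sub continuous_const
  obtain ⟨ρ4, hρ4, hD⟩ := shallow K' μ hposμ K (interior_subset.trans hK'K)
    (fun v => ⟪x, v⟫_ℝ - d₃) hcontx3 (fun v hv => hgptx d₃ hd₃ v hv)
  set ρ0 := min (min ρM ρ1) (min (min ρ2 ρ3) ρ4) with hρ0def
  have hρ0 : 0 < ρ0 := lt_min (lt_min hρM hρ1) (lt_min (lt_min hρ2 hρ3) hρ4)
  have h0M : ρ0 ≤ ρM := (min_le_left _ _).trans (min_le_left _ _)
  have h01 : ρ0 ≤ ρ1 := (min_le_left _ _).trans (min_le_right _ _)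
  have h02 : ρ0 ≤ ρ2 := (min_le_right _ _).trans ((min_le_left _ _).trans (min_le_left _ _))
  have h03 : ρ0 ≤ ρ3 := (min_le_right _ _).trans ((min_le_left _ _).trans (min_le_right _ _))
  have h04 : ρ0 ≤ ρ4 := (min_le_right _ _).trans (min_le_right _ _)
  refine ⟨min 1 (ρ0 ^ 2), lt_min one_pos (by positivity), ?_⟩
  rintro δ ⟨hδ0, hδlt⟩
  have hδ1 : δ < 1 := lt_of_lt_of_le hδlt (min_le_left _ _)
  have hδρ : δ ^ (((n : ℝ) + 1) / 2) < ρ0 := by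
    have h1 : δ ^ (((n : ℝ) + 1) / 2) ≤ δ ^ ((1 : ℝ) / 2) :=
      Real.rpow_le_rpow_of_exponent_ge hδ0 hδ1.le
        (by rw [div_le_div_iff₀ (by norm_num) (by norm_num)]; nlinarith [Nat.cast_nonneg (α := ℝ) n])
    have h2 : δ ^ ((1 : ℝ) / 2) = Real.sqrt δ := (Real.sqrt_eq_rpow δ).symm
    have h3 : Real.sqrt δ < ρ0 := by
      have hδρ2 : δ < ρ0 ^ 2 := lt_of_lt_of_le hδlt (min_le_right _ _)
      calc Real.sqrt δ < Real.sqrt (ρ0 ^ 2) := Real.sqrt_lt_sqrt hδ0.le hδρ2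
      _ = ρ0 := Real.sqrt_sq hρ0.le
    linarith
  set bnd := ENNReal.ofReal (δ ^ (((n : ℝ) + 1) / 2)) with hbnddef
  have hbnd : ∀ ρi : ℝ, ρ0 ≤ ρi → bnd ≤ ENNReal.ofReal ρi :=
    fun ρi h => ENNReal.ofReal_le_ofReal (by linarith)
  have memF : ∀ (ν : Measure (EuclideanSpace ℝ (Fin n))) (S : Set (EuclideanSpace ℝ (Fin n)))
      (y : EuclideanSpace ℝ (Fin n)),
      y ∈ floatBody ν S δ ↔ ∀ v c, ‖v‖ = 1 → ν (S ∩ halfGe v c) ≤ bnd → ⟪y, v⟫_ℝ ≤ c := by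
    intro ν S y
    constructor
    · intro hy v c hv hvc
      exact hy (halfLe v c) ⟨v, c, hv, hvc, rfl⟩
    · rintro hy H ⟨v, c, hv, hvc, rfl⟩
      exact hy v c hv hvc
  have hFclosed : ∀ (ν : Measure (EuclideanSpace ℝ (Fin n)))
      (S : Set (EuclideanSpace ℝ (Fin n))), IsClosed (floatBody ν S δ) := by
    intro ν S
    apply isClosed_sInter
    rintro H ⟨v, c, hv, hvc, rfl⟩
    exact isClosed_le (continuous_id.inner continuous_const) continuous_const
  have hFconv : ∀ (ν : Measure (EuclideanSpace ℝ (Fin n)))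
      (S : Set (EuclideanSpace ℝ (Fin n))), Convex ℝ (floatBody ν S δ) := by
    intro ν S
    apply convex_sInter
    rintro H ⟨v, c, hv, hvc, rfl⟩
    exact convex_halfSpace_le
      ⟨fun a b => inner_add_left a b v, fun ca a => real_inner_smul_left a v ca⟩ c
  have hFbdd : ∀ (ν : Measure (EuclideanSpace ℝ (Fin n)))
      (S : Set (EuclideanSpace ℝ (Fin n))), S ⊆ K →
      floatBody ν S δ ⊆ Metric.closedBall 0 R₀ := by
    intro ν S hSK y hy
    rw [Metric.mem_closedBall, dist_zero_right]
    by_contra hlt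
    push_neg at hlt
    have hy0 : y ≠ 0 := by
      intro h; rw [h, norm_zero] at hlt; linarith
    set v := ‖y‖⁻¹ • y with hvdef
    have hvn : ‖v‖ = 1 := norm_smul_inv_norm hy0
    have hempty : S ∩ halfGe v R₀ = ∅ := by
      ext z
      simp only [Set.mem_inter_iff, Set.mem_empty_iff_false, iff_false, not_and]
      intro hzS hz
      have hzb : ‖z‖ < R₀ := by
        have := hKball (hSK hzS); rwa [Metric.mem_ball, dist_zero_right] at this
      have hzv : ⟪z, v⟫_ℝ ≤ ‖z‖ := by
        have h := real_inner_le_norm z v; rwa [hvn, mul_one] at h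
      have : (R₀ : ℝ) ≤ ⟪z, v⟫_ℝ := hz
      linarith
    have hmem := (memF ν S y).1 hy v R₀ hvn (by rw [hempty]; simp)
    rw [hvdef, real_inner_smul_right, real_inner_self_eq_norm_mul_norm] at hmem
    have heq : ‖y‖⁻¹ * (‖y‖ * ‖y‖) = ‖y‖ := by field_simp
    rw [heq] at hmem
    linarith
  have hFball : Metric.closedBall (0 : EuclideanSpace ℝ (Fin n)) (r / 2) ⊆ floatBody μ K δ := by
    intro y hy
    rw [memF]
    intro v c hv hvc
    have hc : r / 2 < c := hB v c hv (le_trans hvc (hbnd ρ3 h03))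
    have hyv : ⟪y, v⟫_ℝ ≤ ‖y‖ := by
      have := real_inner_le_norm y v; rwa [hv, mul_one] at this
    have hyn : ‖y‖ ≤ r / 2 := by rwa [Metric.mem_closedBall, dist_zero_right] at hy
    linarith
  have hF'ball : Metric.closedBall (0 : EuclideanSpace ℝ (Fin n)) (r / 2) ⊆
      floatBody μ' K' δ := by
    intro y hy
    rw [memF]
    intro v c hv hvc
    have hc : r / 2 < c := hB' v c hv (le_trans hvc (hbnd ρ2 h02))
    have hyv : ⟪y, v⟫_ℝ ≤ ‖y‖ := by
      have := real_inner_le_norm y v; rwa [hv, mul_one] at this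
    have hyn : ‖y‖ ≤ r / 2 := by rwa [Metric.mem_closedBall, dist_zero_right] at hy
    linarith
  obtain ⟨t, ht0, htF, htfront, htuniq, htmax⟩ := rayPoint (floatBody μ K δ)
    (hFclosed μ K) (hFconv μ K) (r / 2) R₀ (by positivity) hFball (hFbdd μ K subset_rfl) x hx0
  obtain ⟨t', ht0', htF', htfront', htuniq', htmax'⟩ := rayPoint (floatBody μ' K' δ)
    (hFclosed μ' K') (hFconv μ' K') (r / 2) R₀ (by positivity) hF'ball (hFbdd μ' K' hK'K) x hx0
  have hFF : floatBody μ' K' δ ⊆ floatBody μ K δ := by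
    intro y hy
    rw [memF] at hy ⊢
    intro v c hv hvc
    exact hy v c hv (le_trans (hcut v c) hvc)
  have hxNr : r ≤ ⟪x, N⟫_ℝ := by
    have h1 : (r : ℝ) • N ∈ K := hK'K (hrK' (by
      rw [Metric.mem_closedBall, dist_zero_right, norm_smul, Real.norm_eq_abs,
        abs_of_pos hr, hN, mul_one]))
    have := hNsupp _ h1
    rwa [real_inner_smul_left, real_inner_self_eq_norm_mul_norm, hN, mul_one, mul_one] at this
  have hNfam : μ (K ∩ halfGe N ⟪x, N⟫_ℝ) = 0 := by
    have hsub : K ∩ halfGe N ⟪x, N⟫_ℝ ⊆ {x} := by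
      intro z hz
      have : z ∈ K ∩ {y | ⟪y, N⟫_ℝ = ⟪x, N⟫_ℝ} := ⟨hz.1, le_antisymm (hNsupp z hz.1) hz.2⟩
      rw [hexp] at this; exact this
    refine measure_mono_null (hsub.trans ?_) hμsupp
    intro z hz
    rw [Set.mem_singleton_iff] at hz
    subst hz
    exact hxnotint
  have ht1 : t ≤ 1 := by
    have hle := (memF μ K _).1 htF N ⟪x, N⟫_ℝ hN (by rw [hNfam]; exact zero_le)
    rw [real_inner_smul_left] at hle
    nlinarith [hxNr, hr, hle]
  set q := r / 2 with hqdef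
  have hq : 0 < q := by positivity
  set t₀ := q / (q + d₃) with ht₀def
  have ht₀0 : 0 < t₀ := by positivity
  have ht₀1 : t₀ ≤ 1 := by rw [ht₀def, div_le_one (by positivity)]; linarith
  have ht₀F : t₀ • x ∈ floatBody μ K δ := by
    rw [memF]
    intro v c hv hvc
    have hc1 : ⟪x, v⟫_ℝ - d₃ < c := hD v c hv (le_trans hvc (hbnd ρ4 h04))
    have hc2 : q < c := hB v c hv (le_trans hvc (hbnd ρ3 h03))
    rw [real_inner_smul_left, ht₀def, div_mul_eq_mul_div, div_le_iff₀ (by positivity)]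
    have e1 : q * ⟪x, v⟫_ℝ ≤ q * (c + d₃) := mul_le_mul_of_nonneg_left (by linarith) hq.le
    have e2 : q * d₃ ≤ c * d₃ := mul_le_mul_of_nonneg_right (by linarith) hd₃.le
    nlinarith [e1, e2]
  have ht₀t : t₀ ≤ t := htmax t₀ ht₀0.le ht₀F
  have hnear : ‖t • x - x‖ ≤ min β ε := by
    have heq : t • x - x = (t - 1) • x := by rw [sub_smul, one_smul]
    have h1 : ‖t • x - x‖ = (1 - t) * ‖x‖ := by
      rw [heq, norm_smul, Real.norm_eq_abs, abs_of_nonpos (by linarith), neg_sub]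
    rw [h1]
    have h2 : (1 - t) * ‖x‖ ≤ (1 - t₀) * ‖x‖ :=
      mul_le_mul_of_nonneg_right (by linarith) (norm_nonneg x)
    have h3 : 1 - t₀ = d₃ / (q + d₃) := by
      rw [ht₀def]; field_simp; ring
    have h4 : (1 - t₀) * ‖x‖ ≤ d₃ / q * ‖x‖ := by
      apply mul_le_mul_of_nonneg_right _ (norm_nonneg x)
      rw [h3, div_le_div_iff₀ (by positivity) hq]
      nlinarith [hd₃, hq]
    have h5 : d₃ / q * ‖x‖ = min β ε := by
      rw [hd₃def, hqdef]
      field_simp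
    linarith
  have htxK : t • x ∈ K := by
    have heq : t • x = (1 - t) • (0 : EuclideanSpace ℝ (Fin n)) + t • x := by
      rw [smul_zero, zero_add]
    rw [heq]
    exact hKconv (hK'K (hrK' (Metric.mem_closedBall_self hr.le))) hxK (by linarith) ht0 (by ring)
  have htxK' : t • x ∈ K' := by
    rw [hK']
    refine ⟨htxK, ?_⟩
    rw [Metric.mem_closedBall, dist_eq_norm]
    exact le_trans hnear (min_le_right _ _)
  have htxF' : t • x ∈ floatBody μ' K' δ := by
    rw [memF]
    intro v c hv hvc
    by_contra hcgoal
    push_neg at hcgoal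
    have hvN : ‖v - N‖ < θ := hM v c (t • x) hv (le_trans hvc (hbnd ρM h0M)) htxK'
      hcgoal.le (le_trans hnear (min_le_left _ _))
    have hc2 : ⟪x, v⟫_ℝ - d₂ < c := hL1 v c hv (le_trans hvc (hbnd ρ1 h01))
    have hcontain : interior K ∩ halfGe v c ⊆ interior K' := by
      intro z hz
      have hzc : c ≤ ⟪z, v⟫_ℝ := hz.2
      have hzb : ‖z - x‖ < ε := hL2 v hv hvN z (interior_subset hz.1) (by linarith)
      have hzmem : z ∈ interior K ∩ Metric.ball x ε :=
        ⟨hz.1, by rwa [Metric.mem_ball, dist_eq_norm]⟩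
      have hopen : IsOpen (interior K ∩ Metric.ball x ε) :=
        isOpen_interior.inter Metric.isOpen_ball
      have hsubK' : interior K ∩ Metric.ball x ε ⊆ K' := by
        rw [hK']
        exact fun u hu => ⟨interior_subset hu.1, Metric.ball_subset_closedBall hu.2⟩
      exact interior_maximal hsubK' hopen hzmem
    have hKbound : μ (K ∩ halfGe v c) ≤ bnd := by
      have hsplit : K ∩ halfGe v c ⊆ (interior K ∩ halfGe v c) ∪ (interior K)ᶜ := by
        intro z hz
        by_cases hzint : z ∈ interior K
        · exact Or.inl ⟨hzint, hz.2⟩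
        · exact Or.inr hzint
      calc μ (K ∩ halfGe v c) ≤ μ ((interior K ∩ halfGe v c) ∪ (interior K)ᶜ) :=
            measure_mono hsplit
        _ ≤ μ (interior K ∩ halfGe v c) + μ (interior K)ᶜ := measure_union_le _ _
        _ = μ (interior K ∩ halfGe v c) := by rw [hμsupp, add_zero]
        _ ≤ μ' (K' ∩ halfGe v c) := by
            rw [hμ'def, Measure.restrict_apply' isOpen_interior.measurableSet]
            apply measure_mono
            intro z hz
            exact ⟨⟨interior_subset (hcontain hz), hz.2⟩, hcontain hz⟩
        _ ≤ bnd := hvc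
    have := (memF μ K _).1 htF v c hv hKbound
    linarith [hcgoal]
  have htt' : t ≤ t' := htmax' t ht0 htxF'
  have ht't : t' ≤ t := htmax t' ht0' (hFF htF')
  have hteq : t' = t := le_antisymm ht't htt'
  refine ⟨mem_interior.2 ⟨Metric.ball 0 (r / 2), Metric.ball_subset_closedBall.trans hF'ball,
      Metric.isOpen_ball, Metric.mem_ball_self (by positivity)⟩,
    mem_interior.2 ⟨Metric.ball 0 (r / 2), Metric.ball_subset_closedBall.trans hFball,
      Metric.isOpen_ball, Metric.mem_ball_self (by positivity)⟩,
    t • x, ⟨hteq ▸ htfront', ⟨t, ht0, rfl⟩⟩, ⟨htfront, ⟨t, ht0, rfl⟩⟩, ?_, htuniq⟩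
  intro qq hqq
  have := htuniq' qq hqq
  rw [hteq] at this
  exact this
end
end

section
/- Let p be a point of the open Euclidean unit ball B^n ⊂ ℝ^n, let X_1, …, X_{n-1} ∈ ℝ^n be linearly independent, and let N^e be the unique Euclidean unit vector orthogonal to span(X_1,…,X_{n-1}) with det(X_1,…,X_{n-1},N^e) > 0. Then the vector N^h := √((1 − ‖p‖²)/(1 − (p·N^e)²)) · (N^e − (p·N^e)p) is the unique vector in ℝ^n satisfying: g^h_p(N^h, X_i) = 0 for all i = 1, …, n−1; g^h_p(N^h, N^h) = 1; and det(X_1, …, X_{n-1}, N^h) > 0. -/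
open MeasureTheory Filter
open scoped InnerProductSpace ENNReal Topology

noncomputable section

/-- The hyperbolic (projective model) metric tensor
`g^h_p(X,Y) = ⟪X,Y⟫/(1-‖p‖²) + ⟪X,p⟫⟪Y,p⟫/(1-‖p‖²)²`. -/
def gh {n : ℕ} (p X Y : EuclideanSpace ℝ (Fin n)) : ℝ :=
  ⟪X, Y⟫_ℝ / (1 - ‖p‖ ^ 2) + (⟪X, p⟫_ℝ * ⟪Y, p⟫_ℝ) / (1 - ‖p‖ ^ 2) ^ 2

/-! ### Auxiliary determinant lemmas -/

/-- The determinant of the matrix whose first `m` rows are `X` and last row is `v`. -/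
def DD {m : ℕ} (X : Fin m → EuclideanSpace ℝ (Fin (m+1)))
    (v : EuclideanSpace ℝ (Fin (m+1))) : ℝ :=
  (Matrix.of fun i j =>
    (Fin.snoc X v : Fin (m + 1) → EuclideanSpace ℝ (Fin (m + 1))) i j).det

lemma DD_eq_updateRow {m : ℕ} (X : Fin m → EuclideanSpace ℝ (Fin (m+1)))
    (u v : EuclideanSpace ℝ (Fin (m+1))) :
    DD X v = ((Matrix.of fun i j =>
      (Fin.snoc X u : Fin (m + 1) → EuclideanSpace ℝ (Fin (m + 1))) i j).updateRow (Fin.last m)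
      (fun j => v j)).det := by
  refine congrArg Matrix.det ?_
  ext i j
  induction i using Fin.lastCases with
  | last => simp [Matrix.updateRow_apply]
  | cast i => simp [Matrix.updateRow_apply, (Fin.castSucc_lt_last i).ne]

lemma DD_smul {m : ℕ} (X : Fin m → EuclideanSpace ℝ (Fin (m+1)))
    (c : ℝ) (v : EuclideanSpace ℝ (Fin (m+1))) :
    DD X (c • v) = c * DD X v := by
  rw [DD_eq_updateRow X v (c • v)]
  have h1 : (fun j => (c • v) j) = c • (fun j => v j) := rfl
  rw [h1, Matrix.det_updateRow_smul]
  congr 1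
  rw [← DD_eq_updateRow X v v]

lemma DD_add {m : ℕ} (X : Fin m → EuclideanSpace ℝ (Fin (m+1)))
    (u v : EuclideanSpace ℝ (Fin (m+1))) :
    DD X (u + v) = DD X u + DD X v := by
  rw [DD_eq_updateRow X u (u + v)]
  have h1 : (fun j => (u + v) j) = (fun j => u j) + (fun j => v j) := rfl
  rw [h1, Matrix.det_updateRow_add, ← DD_eq_updateRow X u u, ← DD_eq_updateRow X u v]

lemma DD_sub {m : ℕ} (X : Fin m → EuclideanSpace ℝ (Fin (m+1)))
    (u v : EuclideanSpace ℝ (Fin (m+1))) :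
    DD X (u - v) = DD X u - DD X v := by
  have h := DD_add X (u - v) v
  rw [sub_add_cancel] at h
  linarith

lemma DD_span_zero {m : ℕ} (X : Fin m → EuclideanSpace ℝ (Fin (m+1)))
    (q : EuclideanSpace ℝ (Fin (m+1)))
    (hq : q ∈ Submodule.span ℝ (Set.range X)) : DD X q = 0 := by
  rw [Submodule.mem_span_range_iff_exists_fun] at hq
  obtain ⟨c, hc⟩ := hq
  set M := (Matrix.of fun i j =>
      (Fin.snoc X q : Fin (m + 1) → EuclideanSpace ℝ (Fin (m + 1))) i j) with hM
  have key : (fun j => q j) = ∑ k : Fin (m+1), ((Fin.snoc c (0:ℝ) : Fin (m+1) → ℝ)) k • M k := by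
    funext j
    have : q j = ∑ i, c i * X i j := by
      rw [← hc]
      calc (∑ i, c i • X i) j = EuclideanSpace.projₗ j (∑ i, c i • X i) := rfl
        _ = ∑ i, EuclideanSpace.projₗ j (c i • X i) := map_sum _ _ _
        _ = ∑ i, c i * X i j := by simp [EuclideanSpace.projₗ]
    rw [this]
    rw [Finset.sum_apply]
    rw [Fin.sum_univ_castSucc]
    simp [hM]
  rw [DD_eq_updateRow X q q, ← hM, key, Matrix.det_updateRow_sum]
  simp

/-- Formula for the hyperbolic unit normal in the projective model. -/
theorem stmt10 {m : ℕ} (p : EuclideanSpace ℝ (Fin (m + 1))) (hp : ‖p‖ < 1)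
    (X : Fin m → EuclideanSpace ℝ (Fin (m + 1))) (hX : LinearIndependent ℝ X)
    (Ne : EuclideanSpace ℝ (Fin (m + 1))) (hNe : ‖Ne‖ = 1)
    (horth : ∀ i, ⟪X i, Ne⟫_ℝ = 0)
    (hdet : 0 < (Matrix.of fun i j =>
      (Fin.snoc X Ne : Fin (m + 1) → EuclideanSpace ℝ (Fin (m + 1))) i j).det)
    (Nh : EuclideanSpace ℝ (Fin (m + 1)))
    (hNh : Nh = Real.sqrt ((1 - ‖p‖ ^ 2) / (1 - ⟪p, Ne⟫_ℝ ^ 2)) • (Ne - ⟪p, Ne⟫_ℝ • p)) :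
    (∀ i, gh p Nh (X i) = 0) ∧ gh p Nh Nh = 1 ∧
    0 < (Matrix.of fun i j =>
      (Fin.snoc X Nh : Fin (m + 1) → EuclideanSpace ℝ (Fin (m + 1))) i j).det ∧
    ∀ v : EuclideanSpace ℝ (Fin (m + 1)),
      (∀ i, gh p v (X i) = 0) → gh p v v = 1 →
      0 < (Matrix.of fun i j =>
        (Fin.snoc X v : Fin (m + 1) → EuclideanSpace ℝ (Fin (m + 1))) i j).det →
      v = Nh := by
  have hs : (0:ℝ) < 1 - ‖p‖ ^ 2 := by nlinarith [norm_nonneg p]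
  have hsne : (1 - ‖p‖ ^ 2) ≠ 0 := ne_of_gt hs
  set a := ⟪p, Ne⟫_ℝ with ha_def
  have ha : (0:ℝ) < 1 - a ^ 2 := by
    have h := abs_real_inner_le_norm p Ne
    rw [hNe, mul_one] at h
    nlinarith [sq_abs a, abs_nonneg a, norm_nonneg p]
  have hane : (1 - a ^ 2) ≠ 0 := ne_of_gt ha
  set c := Real.sqrt ((1 - ‖p‖ ^ 2) / (1 - a ^ 2)) with hc_def
  have hc : 0 < c := Real.sqrt_pos.2 (div_pos hs ha)
  have hc2 : c ^ 2 = (1 - ‖p‖ ^ 2) / (1 - a ^ 2) := Real.sq_sqrt (le_of_lt (div_pos hs ha))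
  -- inner product computations
  have e1 : ∀ w, ⟪Nh, w⟫_ℝ = c * (⟪Ne, w⟫_ℝ - a * ⟪p, w⟫_ℝ) := by
    intro w
    rw [hNh, real_inner_smul_left, inner_sub_left, real_inner_smul_left]
  have eNeX : ∀ i, ⟪Ne, X i⟫_ℝ = 0 := fun i => by rw [real_inner_comm]; exact horth i
  have eNhX : ∀ i, ⟪Nh, X i⟫_ℝ = -(c * (a * ⟪p, X i⟫_ℝ)) := by
    intro i; rw [e1, eNeX]; ring
  have eNhp : ⟪Nh, p⟫_ℝ = c * (a - a * ‖p‖ ^ 2) := by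
    rw [e1, real_inner_comm p Ne, ← ha_def, real_inner_self_eq_norm_sq]
  have part1 : ∀ i, gh p Nh (X i) = 0 := by
    intro i
    rw [gh, eNhX, eNhp, real_inner_comm p (X i)]
    set u := ⟪p, X i⟫_ℝ with hu
    field_simp
    ring
  have eNhNe : ⟪Nh, Ne⟫_ℝ = c * (1 - a * a) := by
    rw [e1, real_inner_self_eq_norm_sq, hNe, ← ha_def]
    norm_num
  have eNhNh : ⟪Nh, Nh⟫_ℝ = c ^ 2 * (1 - 2*a^2 + a^2 * ‖p‖ ^ 2) := by
    rw [e1 Nh, real_inner_comm Nh Ne, real_inner_comm Nh p, eNhNe, eNhp]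
    ring
  have hc2' : c ^ 2 * (1 - a ^ 2) = 1 - ‖p‖ ^ 2 := by
    rw [hc2]; field_simp
  have part2 : gh p Nh Nh = 1 := by
    rw [gh, eNhNh, eNhp]
    field_simp
    linear_combination hc2'
  -- determinant positivity
  have hNe0 : Ne ≠ 0 := by
    intro h; rw [h, norm_zero] at hNe; norm_num at hNe
  have hspan : Submodule.span ℝ (Set.range X) = (ℝ ∙ Ne)ᗮ := by
    have hle : Submodule.span ℝ (Set.range X) ≤ (ℝ ∙ Ne)ᗮ := by
      rw [Submodule.span_le]
      rintro _ ⟨i, rfl⟩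
      exact Submodule.mem_orthogonal_singleton_iff_inner_left.2 (horth i)
    apply Submodule.eq_of_le_of_finrank_eq hle
    have h1 : Module.finrank ℝ (Submodule.span ℝ (Set.range X)) = m := by
      rw [finrank_span_eq_card hX]; simp
    have h2 : Module.finrank ℝ (ℝ ∙ Ne) + Module.finrank ℝ ((ℝ ∙ Ne)ᗮ) = m + 1 := by
      rw [Submodule.finrank_add_finrank_orthogonal]; simp
    rw [finrank_span_singleton hNe0] at h2
    omega
  have hq : p - a • Ne ∈ Submodule.span ℝ (Set.range X) := by
    rw [hspan]
    refine Submodule.mem_orthogonal_singleton_iff_inner_right.2 ?_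
    rw [inner_sub_right, real_inner_smul_right, real_inner_self_eq_norm_sq, hNe,
      real_inner_comm p Ne, ← ha_def]
    norm_num
  have dP : DD X p = a * DD X Ne := by
    have hdecomp : p = a • Ne + (p - a • Ne) := by abel
    calc DD X p = DD X (a • Ne + (p - a • Ne)) := by rw [← hdecomp]
      _ = DD X (a • Ne) + DD X (p - a • Ne) := DD_add X _ _
      _ = a * DD X Ne + 0 := by rw [DD_smul, DD_span_zero _ _ hq]
      _ = a * DD X Ne := by ring
  have hdet' : 0 < DD X Ne := hdet
  have dNh : DD X Nh = (c * (1 - a^2)) * DD X Ne := by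
    rw [hNh, DD_smul, DD_sub, DD_smul, dP]
    ring
  have part3 : 0 < DD X Nh := by
    rw [dNh]
    exact mul_pos (mul_pos hc ha) hdet'
  refine ⟨part1, part2, part3, ?_⟩
  -- uniqueness
  intro v hv1 hv2 hv3
  set Y : Fin m → EuclideanSpace ℝ (Fin (m+1)) :=
    fun i => X i + (⟪X i, p⟫_ℝ / (1 - ‖p‖ ^ 2)) • p with hY
  have hYlin : LinearIndependent ℝ Y := by
    set f : EuclideanSpace ℝ (Fin (m+1)) →ₗ[ℝ] EuclideanSpace ℝ (Fin (m+1)) :=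
      LinearMap.id + ((innerSL ℝ p).toLinearMap).smulRight ((1 / (1 - ‖p‖ ^ 2)) • p) with hf
    have hfapp : ∀ x, f x = x + (⟪x, p⟫_ℝ / (1 - ‖p‖ ^ 2)) • p := by
      intro x
      simp [hf, smul_smul, real_inner_comm p x]
      ring_nf
    have hker : LinearMap.ker f = ⊥ := by
      rw [LinearMap.ker_eq_bot']
      intro x hx
      rw [hfapp] at hx
      have h1 : ⟪x, p⟫_ℝ + (⟪x, p⟫_ℝ / (1 - ‖p‖ ^ 2)) * ‖p‖ ^ 2 = 0 := by
        have h := congrArg (fun z => ⟪z, p⟫_ℝ) hx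
        simp only [inner_add_left, real_inner_smul_left, inner_zero_left] at h
        rw [real_inner_self_eq_norm_sq] at h
        exact h
      have h2 : ⟪x, p⟫_ℝ = 0 := by
        set t := ⟪x, p⟫_ℝ with ht
        field_simp at h1
        linear_combination h1
      rw [h2] at hx
      simpa using hx
    have hmap := hX.map (f := f) (by rw [hker]; simp)
    convert hmap using 1
    funext i
    rw [Function.comp_apply, hfapp]
    rfl
  set K := Submodule.span ℝ (Set.range Y) with hK
  have hKr : Module.finrank ℝ K = m := by
    rw [hK, finrank_span_eq_card hYlin]; simp
  have hKor : Module.finrank ℝ (Kᗮ) = 1 := by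
    have h2 := Submodule.finrank_add_finrank_orthogonal K
    have h3 : Module.finrank ℝ (EuclideanSpace ℝ (Fin (m+1))) = m + 1 :=
      finrank_euclideanSpace_fin
    rw [hKr, h3] at h2
    omega
  have hmem : ∀ w, (∀ i, gh p w (X i) = 0) → w ∈ Kᗮ := by
    intro w hw
    have key : ∀ i, ⟪w, Y i⟫_ℝ = 0 := by
      intro i
      have hgh := hw i
      rw [gh] at hgh
      rw [hY]
      simp only [inner_add_right, real_inner_smul_right]
      set t1 := ⟪w, X i⟫_ℝ with ht1
      set t2 := ⟪w, p⟫_ℝ with ht2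
      set t3 := ⟪X i, p⟫_ℝ with ht3
      field_simp at hgh ⊢
      have h2 : t1 * (1 - ‖p‖ ^ 2) + t2 * t3 = 0 := by
        rcases mul_eq_zero.1 (show (t1 * (1 - ‖p‖ ^ 2) + t2 * t3) * (1 - ‖p‖ ^ 2) = 0 by
          linear_combination (1 - ‖p‖ ^ 2) * hgh) with h | h
        · exact h
        · exact absurd h hsne
      linear_combination h2
    rw [Submodule.mem_orthogonal']
    intro u hu
    rw [hK] at hu
    induction hu using Submodule.span_induction with
    | mem x hx =>
      obtain ⟨i, rfl⟩ := hx
      exact key i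
    | zero => simp
    | add x y _ _ hx hy => rw [inner_add_right, hx, hy]; ring
    | smul t x _ hx => rw [real_inner_smul_right, hx]; ring
  have hNhK : Nh ∈ Kᗮ := hmem Nh part1
  have hvK : v ∈ Kᗮ := hmem v hv1
  have hNh0 : Nh ≠ 0 := by
    intro h
    rw [h] at part2
    simp [gh] at part2
  have hNhK0 : (⟨Nh, hNhK⟩ : Kᗮ) ≠ 0 := by
    intro h
    exact hNh0 (by simpa using congrArg Subtype.val h)
  obtain ⟨t, ht⟩ := (finrank_eq_one_iff_of_nonzero' (⟨Nh, hNhK⟩ : Kᗮ) hNhK0).1 hKor ⟨v, hvK⟩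
  have htv : t • Nh = v := by simpa using congrArg Subtype.val ht
  have hscale : gh p v v = t ^ 2 * gh p Nh Nh := by
    rw [← htv, gh, gh, real_inner_smul_left, real_inner_smul_right, real_inner_smul_left]
    ring
  have ht2 : t ^ 2 = 1 := by
    rw [hscale, part2, mul_one] at hv2
    exact hv2
  have hdv : 0 < DD X v := hv3
  rw [← htv, DD_smul] at hdv
  have htpos : 0 < t := by
    have h := mul_pos hdv (inv_pos.2 part3)
    rwa [mul_inv_cancel_right₀ (ne_of_gt part3)] at h
  have ht1 : t = 1 := by
    have h : (t - 1) * (t + 1) = 0 := by linear_combination ht2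
    rcases mul_eq_zero.1 h with h | h
    · linarith
    · linarith
  rw [← htv, ht1, one_smul]
end
end
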